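/- arXiv:1904.05474 — 5 statements merged into one kernel-verified Lean document; each statement's English description precedes it below -/
import Mathlib

section
/- Suppose an algorithm for the online re-embedding problem always assigns all vertices of the same currently-revealed connected component to the same server, and let 𝒞 be its total moving cost (α times the number of vertex moves it performs). Then its total communication cost is at most 𝒞, and hence its total cost (moving plus communication) is at most 2𝒞. -/
open Finset

/-- Two vertices lie in the same connected component revealed by the edge list `E`:
the reflexive-symmetric-transitive closure of the revealed edge relation. -/
def sameComp {n : ℕ} (E : List (Fin n × Fin n)) (u v : Fin n) : Prop :=
  Relation.EqvGen (fun a b => (a, b) ∈ E ∨ (b, a) ∈ E) u v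

/-- An instance of the online re-embedding problem with `n` vertices and `ℓ` servers:
a ground-truth partition into components of size `n/ℓ`, a perfectly balanced initial
assignment, and an online edge sequence each of whose edges joins two vertices of the
same ground-truth component and whose revealed connected components are exactly the
ground-truth components. -/
structure ReInstance (n ℓ : ℕ) where
  truth : Fin n → Fin ℓ
  init : Fin n → Fin ℓ
  sigma : List (Fin n × Fin n)
  truth_size : ∀ j, (Finset.univ.filter fun v => truth v = j).card = n / ℓ
  init_size : ∀ j, (Finset.univ.filter fun v => init v = j).card = n / ℓ
  edges_within : ∀ e ∈ sigma, truth e.1 = truth e.2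
  reveals : ∀ u v, sameComp sigma u v ↔ truth u = truth v

/-- A deterministic online algorithm: given the initial assignment and the prefix of the
edge sequence revealed so far, it produces the current assignment of vertices to servers. -/
abbrev OnlineAlg (n ℓ : ℕ) := (Fin n → Fin ℓ) → List (Fin n × Fin n) → Fin n → Fin ℓ

/-- The assignment maintained by online algorithm `A` after `t` requests of `σ` have been
processed (the assignment is `a0` before any request). -/
def state {n ℓ : ℕ} (A : OnlineAlg n ℓ) (a0 : Fin n → Fin ℓ)
    (σ : List (Fin n × Fin n)) : ℕ → Fin n → Fin ℓ
  | 0 => a0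
  | t + 1 => A a0 (σ.take (t + 1))

/-- The number of vertices reassigned when changing assignment `f` into assignment `g`. -/
def movesBetween {n ℓ : ℕ} (f g : Fin n → Fin ℓ) : ℕ :=
  (Finset.univ.filter fun v => f v ≠ g v).card

/-- Total number of vertex moves performed by online algorithm `A` on the instance. -/
def algMoves {n ℓ : ℕ} (A : OnlineAlg n ℓ) (a0 : Fin n → Fin ℓ)
    (σ : List (Fin n × Fin n)) : ℕ :=
  ∑ t ∈ Finset.range σ.length,
    movesBetween (state A a0 σ t) (state A a0 σ (t + 1))

/-- Total communication cost of online algorithm `A`: one unit for every request whose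
endpoints are on different servers at the time of the request. -/
def algComm {n ℓ : ℕ} (A : OnlineAlg n ℓ) (a0 : Fin n → Fin ℓ)
    (σ : List (Fin n × Fin n)) : ℕ :=
  ∑ t : Fin σ.length,
    if state A a0 σ t.val (σ.get t).1 ≠ state A a0 σ t.val (σ.get t).2 then 1 else 0

/-- Total cost of online algorithm `A`: `α` per vertex move plus the communication cost. -/
def algCost {n ℓ : ℕ} (α : ℝ) (A : OnlineAlg n ℓ) (a0 : Fin n → Fin ℓ)
    (σ : List (Fin n × Fin n)) : ℝ :=
  α * algMoves A a0 σ + algComm A a0 σ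

/-- An assignment is valid for augmentation `ε`: each server load is at most `(1+ε)·n/ℓ`. -/
def validCap {n ℓ : ℕ} (ε : ℝ) (f : Fin n → Fin ℓ) : Prop :=
  ∀ j, ((Finset.univ.filter fun v => f v = j).card : ℝ) ≤ (1 + ε) * n / ℓ

/-- An assignment is a perfect partitioning: its classes are exactly the
ground-truth components, i.e. each ground-truth component is alone on one server. -/
def isPerfect {n ℓ : ℕ} (truth f : Fin n → Fin ℓ) : Prop :=
  ∀ u v, f u = f v ↔ truth u = truth v

/-- `f` assigns all vertices of each connected component revealed by `E` to one server. -/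
def collocates {n ℓ : ℕ} (E : List (Fin n × Fin n)) (f : Fin n → Fin ℓ) : Prop :=
  ∀ u v, sameComp E u v → f u = f v

/-- Number of vertex moves of an offline schedule `g` (which may also move vertices
before the first request). -/
def schedMoves {n ℓ : ℕ} (a0 : Fin n → Fin ℓ) (σ : List (Fin n × Fin n))
    (g : ℕ → Fin n → Fin ℓ) : ℕ :=
  movesBetween a0 (g 0) +
    ∑ t ∈ Finset.range σ.length, movesBetween (g t) (g (t + 1))

/-- Communication cost of an offline schedule `g`. -/
def schedComm {n ℓ : ℕ} (σ : List (Fin n × Fin n)) (g : ℕ → Fin n → Fin ℓ) : ℕ :=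
  ∑ t : Fin σ.length, if g t.val (σ.get t).1 ≠ g t.val (σ.get t).2 then 1 else 0

/-- The optimal offline cost: the infimum cost over all offline schedules which respect
the capacity `(1+ε)·n/ℓ` at all times and end with a perfect partitioning. -/
noncomputable def OPTcost {n ℓ : ℕ} (α ε : ℝ) (I : ReInstance n ℓ) : ℝ :=
  sInf { c : ℝ | ∃ g : ℕ → Fin n → Fin ℓ,
    (∀ t, validCap ε (g t)) ∧ isPerfect I.truth (g I.sigma.length) ∧
    c = α * schedMoves I.init I.sigma g + schedComm I.sigma g }

/-- The minimum number of vertex moves of any offline schedule which respects the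
capacity `(1+ε)·n/ℓ` at all times and ends with a perfect partitioning. -/
noncomputable def OPTmoves {n ℓ : ℕ} (ε : ℝ) (I : ReInstance n ℓ) : ℕ :=
  sInf { m : ℕ | ∃ g : ℕ → Fin n → Fin ℓ,
    (∀ t, validCap ε (g t)) ∧ isPerfect I.truth (g I.sigma.length) ∧
    m = schedMoves I.init I.sigma g }


lemma get_mem_take {n : ℕ} (σ : List (Fin n × Fin n)) (t : Fin σ.length) :
    σ.get t ∈ σ.take (t.val + 1) := by
  have h : t.val < (σ.take (t.val+1)).length := by simp [t.isLt]
  have : (σ.take (t.val + 1))[t.val]'h = σ.get t := by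
    simp [List.getElem_take']
  rw [← this]; exact List.getElem_mem h

/-- If an online algorithm always assigns all vertices of the same
currently-revealed connected component to the same server, then its communication cost
is at most its moving cost `𝒞 = α · (number of moves)`, and its total cost is at most `2𝒞`. -/
theorem stmt0 {n ℓ : ℕ} (α : ℝ) (hα : 1 < α) (I : ReInstance n ℓ) (A : OnlineAlg n ℓ)
    (hcol : ∀ t, collocates (I.sigma.take t) (state A I.init I.sigma t)) :
    (algComm A I.init I.sigma : ℝ) ≤ α * algMoves A I.init I.sigma ∧
    algCost α A I.init I.sigma ≤ 2 * (α * algMoves A I.init I.sigma) := by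
  have key : algComm A I.init I.sigma ≤ algMoves A I.init I.sigma := by
    unfold algComm algMoves
    rw [← Fin.sum_univ_eq_sum_range
      (fun t => movesBetween (state A I.init I.sigma t) (state A I.init I.sigma (t + 1)))]
    apply Finset.sum_le_sum
    intro t _
    split_ifs with hd
    · set u := (I.sigma.get t).1
      set v := (I.sigma.get t).2
      have hsame : sameComp (I.sigma.take (t.val + 1)) u v :=
        Relation.EqvGen.rel _ _ (Or.inl (by exact get_mem_take I.sigma t))
      have heq : state A I.init I.sigma (t.val + 1) u
          = state A I.init I.sigma (t.val + 1) v := hcol (t.val + 1) u v hsame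
      have hne : ∃ w, state A I.init I.sigma t.val w ≠ state A I.init I.sigma (t.val + 1) w := by
        by_contra h
        push_neg at h
        exact hd ((h u).trans (heq.trans (h v).symm))
      obtain ⟨w, hw⟩ := hne
      have : w ∈ Finset.univ.filter
          (fun w => state A I.init I.sigma t.val w ≠ state A I.init I.sigma (t.val + 1) w) := by
        simp [hw]
      exact Finset.card_pos.mpr ⟨w, this⟩
    · exact Nat.zero_le _
  have hα0 : (0 : ℝ) ≤ algMoves A I.init I.sigma := Nat.cast_nonneg _
  have h1 : (algComm A I.init I.sigma : ℝ) ≤ α * algMoves A I.init I.sigma := by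
    calc (algComm A I.init I.sigma : ℝ) ≤ algMoves A I.init I.sigma := by exact_mod_cast key
      _ = 1 * algMoves A I.init I.sigma := (one_mul _).symm
      _ ≤ α * algMoves A I.init I.sigma := mul_le_mul_of_nonneg_right hα.le hα0
  refine ⟨h1, ?_⟩
  unfold algCost
  linarith
end

section
/- There is a universal constant C such that the following holds for all n, all α > 1 and all ε ∈ (0,1) with ℓ = 2 dividing n. There exists a deterministic online algorithm for the online re-embedding model with two servers, each of capacity (1+ε)·n/2, which always keeps every currently-revealed connected component on a single server, never exceeds the server capacities, ends with each ground-truth component alone on one server, and performs at most C·(n·log₂ n)/ε vertex moves in total on every instance. -/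
open Finset

namespace SLR3

open Finset Relation

variable {n : ℕ}

lemma fin2 (x : Fin 2) : x = 0 ∨ x = 1 := by omega

lemma sameComp_refl (E : List (Fin n × Fin n)) (v : Fin n) : sameComp E v v :=
  Relation.EqvGen.refl v

lemma sameComp_symm {E : List (Fin n × Fin n)} {u v : Fin n} (h : sameComp E u v) :
    sameComp E v u := Relation.EqvGen.symm _ _ h

lemma sameComp_trans {E : List (Fin n × Fin n)} {u v w : Fin n}
    (h1 : sameComp E u v) (h2 : sameComp E v w) : sameComp E u w :=
  Relation.EqvGen.trans _ _ _ h1 h2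

lemma sameComp_mono {E E' : List (Fin n × Fin n)} (h : ∀ x ∈ E, x ∈ E') {u v : Fin n} :
    sameComp E u v → sameComp E' u v :=
  fun h' => Relation.EqvGen.mono (r := fun a b => (a, b) ∈ E ∨ (b, a) ∈ E)
    (p := fun a b => (a, b) ∈ E' ∨ (b, a) ∈ E')
    (fun a b (hab : (a, b) ∈ E ∨ (b, a) ∈ E) => hab.imp (h _) (h _)) u v h'

lemma sameComp_nil {u v : Fin n} (h : sameComp [] u v) : u = v := by
  induction h with
  | rel a b hab => simp at hab
  | refl a => rfl
  | symm a b _ ih => exact ih.symm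
  | trans a b c _ _ ih1 ih2 => exact ih1.trans ih2

open scoped Classical in
noncomputable def comp (E : List (Fin n × Fin n)) (v : Fin n) : Finset (Fin n) :=
  Finset.univ.filter (fun w => sameComp E v w)

lemma mem_comp {E : List (Fin n × Fin n)} {v w : Fin n} : w ∈ comp E v ↔ sameComp E v w := by
  simp [comp]

lemma self_mem_comp {E : List (Fin n × Fin n)} {v : Fin n} : v ∈ comp E v :=
  mem_comp.mpr (sameComp_refl E v)

lemma comp_eq {E : List (Fin n × Fin n)} {u v : Fin n} (h : sameComp E u v) :
    comp E u = comp E v := by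
  ext w
  simp only [mem_comp]
  exact ⟨fun hw => sameComp_trans (sameComp_symm h) hw, fun hw => sameComp_trans h hw⟩

lemma comp_mono {E E' : List (Fin n × Fin n)} (h : ∀ x ∈ E, x ∈ E') (v : Fin n) :
    comp E v ⊆ comp E' v := fun w hw => mem_comp.mpr (sameComp_mono h (mem_comp.mp hw))

lemma card_comp_pos (E : List (Fin n × Fin n)) (v : Fin n) : 0 < (comp E v).card :=
  Finset.card_pos.mpr ⟨v, self_mem_comp⟩

lemma card_comp_le (E : List (Fin n × Fin n)) (v : Fin n) : (comp E v).card ≤ n :=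
  le_trans (Finset.card_le_univ _) (by simp)

def load (f : Fin n → Fin 2) (j : Fin 2) : ℕ := (Finset.univ.filter fun v => f v = j).card

lemma load_add_load (f : Fin n → Fin 2) : load f 0 + load f 1 = n := by
  classical
  have h := Finset.card_filter_add_card_filter_not (s := (univ : Finset (Fin n)))
    (p := fun v => f v = 0)
  have e : (univ.filter fun v => ¬ f v = 0) = (univ.filter fun v => f v = 1) := by
    apply Finset.filter_congr
    intro v _
    constructor <;> intro h' <;> omega
  rw [e] at h
  simpa [load] using h

lemma movesBetween_le (f g : Fin n → Fin 2) : movesBetween f g ≤ n :=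
  le_trans (Finset.card_le_univ _) (by simp)

lemma load_le_load_add (f g : Fin n → Fin 2) (j : Fin 2) :
    load g j ≤ load f j + movesBetween f g := by
  classical
  unfold load movesBetween
  calc (univ.filter fun v => g v = j).card
      ≤ ((univ.filter fun v => f v = j) ∪ (univ.filter fun v => f v ≠ g v)).card := by
        apply Finset.card_le_card
        intro v hv
        simp only [Finset.mem_filter, Finset.mem_union, Finset.mem_univ, true_and] at hv ⊢
        by_cases h : f v = g v
        · left; rw [h]; exact hv
        · right; exact h
    _ ≤ _ := Finset.card_union_le _ _

lemma load_le_load_add' (f g : Fin n → Fin 2) (j : Fin 2) :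
    load f j ≤ load g j + movesBetween f g := by
  classical
  unfold load movesBetween
  calc (univ.filter fun v => f v = j).card
      ≤ ((univ.filter fun v => g v = j) ∪ (univ.filter fun v => f v ≠ g v)).card := by
        apply Finset.card_le_card
        intro v hv
        simp only [Finset.mem_filter, Finset.mem_union, Finset.mem_univ, true_and] at hv ⊢
        by_cases h : f v = g v
        · left; rw [← h]; exact hv
        · right; exact h
    _ ≤ _ := Finset.card_union_le _ _

lemma abs_load_sub_le (f g : Fin n → Fin 2) :
    |((load g 0 : ℝ)) - load f 0| ≤ movesBetween f g := by
  have h1 := load_le_load_add f g 0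
  have h2 := load_le_load_add' f g 0
  rw [abs_sub_le_iff]
  constructor
  · have : (load g 0 : ℝ) ≤ load f 0 + movesBetween f g := by exact_mod_cast h1
    linarith
  · have : (load f 0 : ℝ) ≤ load g 0 + movesBetween f g := by exact_mod_cast h2
    linarith

noncomputable def mergefix (E : List (Fin n × Fin n)) (f : Fin n → Fin 2) : Fin n → Fin 2 :=
  fun v => if ((comp E v).filter fun w => f w = 1).card < ((comp E v).filter fun w => f w = 0).card
    then 0 else 1

lemma collocates_mergefix (E : List (Fin n × Fin n)) (f : Fin n → Fin 2) :
    collocates E (mergefix E f) := by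
  intro u v h
  unfold mergefix
  rw [comp_eq h]

def goodbal (E : List (Fin n × Fin n)) (g : Fin n → Fin 2) : Prop :=
  collocates E g ∧ ∀ j, 2 * load g j ≤ n

open scoped Classical in
noncomputable def stepf (ε : ℝ) (E : List (Fin n × Fin n)) (f : Fin n → Fin 2) : Fin n → Fin 2 :=
  if validCap ε (mergefix E f) then mergefix E f
  else if h : ∃ g, goodbal E g then h.choose else mergefix E f

lemma stepf_eq_mergefix {ε : ℝ} {E : List (Fin n × Fin n)} {f : Fin n → Fin 2}
    (h : validCap ε (mergefix E f)) : stepf ε E f = mergefix E f := by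
  unfold stepf
  rw [if_pos h]

lemma stepf_eq_choose {ε : ℝ} {E : List (Fin n × Fin n)} {f : Fin n → Fin 2}
    (h : ¬ validCap ε (mergefix E f)) (hex : ∃ g, goodbal E g) :
    stepf ε E f = hex.choose := by
  unfold stepf
  rw [if_neg h, dif_pos hex]

lemma stepf_spec {E : List (Fin n × Fin n)} {f : Fin n → Fin 2} {ε : ℝ} (hε : 0 < ε)
    (hex : ∃ g, goodbal E g) :
    collocates E (stepf ε E f) ∧ validCap ε (stepf ε E f) := by
  classical
  by_cases h1 : validCap ε (mergefix E f)
  · rw [stepf_eq_mergefix h1]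
    exact ⟨collocates_mergefix E f, h1⟩
  · rw [stepf_eq_choose h1 hex]
    obtain ⟨hcol, hload⟩ := hex.choose_spec
    refine ⟨hcol, ?_⟩
    intro j
    have h2l : (2 : ℝ) * (load hex.choose j) ≤ n := by exact_mod_cast hload j
    have hεn : 0 ≤ ε * n := mul_nonneg hε.le (Nat.cast_nonneg n)
    have hc : ((univ.filter fun v => hex.choose v = j).card : ℝ) = load hex.choose j := rfl
    rw [hc]
    push_cast
    nlinarith

noncomputable def runA (ε : ℝ) :
    List (Fin n × Fin n) → List (Fin n × Fin n) → (Fin n → Fin 2) → (Fin n → Fin 2)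
  | _, [], f => f
  | past, e :: rest, f => runA ε (past ++ [e]) rest (stepf ε (past ++ [e]) f)

noncomputable def algo (ε : ℝ) : OnlineAlg n 2 := fun a0 E => runA ε [] E a0

lemma runA_snoc (ε : ℝ) (E : List (Fin n × Fin n)) : ∀ (past : List (Fin n × Fin n))
    (f : Fin n → Fin 2) (e : Fin n × Fin n),
    runA ε past (E ++ [e]) f = stepf ε (past ++ E ++ [e]) (runA ε past E f) := by
  induction E with
  | nil => intro past f e; simp [runA]
  | cons a E ih =>
    intro past f e
    show runA ε (past ++ [a]) (E ++ [e]) (stepf ε (past ++ [a]) f) = _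
    rw [ih]
    simp [runA, List.append_assoc]

lemma state_algo (ε : ℝ) (a0 : Fin n → Fin 2) (σ : List (Fin n × Fin n)) (t : ℕ) :
    state (algo ε) a0 σ t = algo ε a0 (σ.take t) := by
  cases t with
  | zero => simp [state, algo, runA]
  | succ t => rfl

lemma algo_succ (ε : ℝ) (a0 : Fin n → Fin 2) (σ : List (Fin n × Fin n)) {t : ℕ}
    (ht : t < σ.length) :
    algo ε a0 (σ.take (t + 1)) = stepf ε (σ.take (t + 1)) (algo ε a0 (σ.take t)) := by
  have h := List.take_concat_get ht
  rw [← h, List.concat_eq_append]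
  unfold algo
  rw [runA_snoc]
  simp

lemma merge_bound {E E' : List (Fin n × Fin n)} (hEE' : ∀ x ∈ E, x ∈ E') {f : Fin n → Fin 2}
    (hcol : collocates E f) :
    (movesBetween f (mergefix E' f) : ℝ) ≤
      (∑ v : Fin n, Real.logb 2 ((comp E' v).card)) -
        ∑ v : Fin n, Real.logb 2 ((comp E v).card) := by
  classical
  have key : ∀ v : Fin n, f v ≠ mergefix E' f v →
      2 * (comp E v).card ≤ (comp E' v).card := by
    intro v hv
    have hsub : comp E v ⊆ (comp E' v).filter (fun w => f w = f v) := by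
      intro w hw
      rw [Finset.mem_filter]
      exact ⟨comp_mono hEE' v hw, (hcol v w (mem_comp.mp hw)).symm⟩
    have hpart : ((comp E' v).filter fun w => f w = 0).card +
        ((comp E' v).filter fun w => f w = 1).card = (comp E' v).card := by
      have h := Finset.card_filter_add_card_filter_not (s := comp E' v)
        (p := fun w => f w = 0)
      have e : ((comp E' v).filter fun w => ¬ f w = 0) =
          ((comp E' v).filter fun w => f w = 1) := by
        apply Finset.filter_congr
        intro w _
        constructor <;> intro h' <;> omega
      rw [e] at h
      exact h
    rcases fin2 (f v) with h0 | h1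
    · have hcond : ¬ (((comp E' v).filter fun w => f w = 1).card <
          ((comp E' v).filter fun w => f w = 0).card) := by
        intro hc
        apply hv
        rw [h0]
        unfold mergefix
        rw [if_pos hc]
      have hA : (comp E v).card ≤ ((comp E' v).filter fun w => f w = 0).card := by
        have := Finset.card_le_card hsub
        rwa [h0] at this
      omega
    · have hcond : ((comp E' v).filter fun w => f w = 1).card <
          ((comp E' v).filter fun w => f w = 0).card := by
        by_contra hc
        apply hv
        rw [h1]
        unfold mergefix
        rw [if_neg hc]
      have hA : (comp E v).card ≤ ((comp E' v).filter fun w => f w = 1).card := by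
        have := Finset.card_le_card hsub
        rwa [h1] at this
      omega
  have per : ∀ v : Fin n, (if f v ≠ mergefix E' f v then (1 : ℝ) else 0) ≤
      Real.logb 2 ((comp E' v).card) - Real.logb 2 ((comp E v).card) := by
    intro v
    have hpos : (0 : ℝ) < (comp E v).card := by exact_mod_cast card_comp_pos E v
    have hmono : ((comp E v).card : ℝ) ≤ (comp E' v).card := by
      exact_mod_cast Finset.card_le_card (comp_mono hEE' v)
    split_ifs with hv
    · have h2 : (2 : ℝ) * (comp E v).card ≤ (comp E' v).card := by
        exact_mod_cast key v hv
      have hlog : Real.logb 2 (2 * ((comp E v).card : ℝ)) ≤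
          Real.logb 2 ((comp E' v).card) :=
        Real.logb_le_logb_of_le one_lt_two (by positivity) h2
      rw [Real.logb_mul (by norm_num) (by positivity),
        Real.logb_self_eq_one one_lt_two] at hlog
      linarith
    · have := Real.logb_le_logb_of_le one_lt_two hpos hmono
      linarith
  have hmoves : (movesBetween f (mergefix E' f) : ℝ) =
      ∑ v : Fin n, (if f v ≠ mergefix E' f v then (1 : ℝ) else 0) := by
    unfold movesBetween
    rw [Finset.card_filter, Nat.cast_sum]
    apply Finset.sum_congr rfl
    intro v _
    split_ifs <;> simp
  rw [hmoves, ← Finset.sum_sub_distrib]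
  exact Finset.sum_le_sum (fun v _ => per v)

theorem main {n : ℕ} {ε : ℝ} (hε : 0 < ε) (hε1 : ε < 1) (hn : 2 ∣ n) (I : ReInstance n 2) :
    (∀ t, collocates (I.sigma.take t) (state (algo ε) I.init I.sigma t)) ∧
    (∀ t, validCap ε (state (algo ε) I.init I.sigma t)) ∧
    isPerfect I.truth (state (algo ε) I.init I.sigma I.sigma.length) ∧
    (algMoves (algo ε) I.init I.sigma : ℝ) ≤ 3 * (n * Real.logb 2 n) / ε := by
  classical
  set σ := I.sigma with hσdef
  set F : ℕ → Fin n → Fin 2 := fun t => algo ε I.init (σ.take t) with hFdef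
  have hstate : ∀ t, state (algo ε) I.init σ t = F t := fun t => state_algo ε I.init σ t
  have hF0 : F 0 = I.init := rfl
  -- truth is a good balanced collocating assignment for every prefix
  have hexT : ∀ t, ∃ g, goodbal (σ.take t) g := by
    intro t
    refine ⟨I.truth, ?_, ?_⟩
    · intro u v huv
      exact (I.reveals u v).mp (sameComp_mono (List.take_subset t σ) huv)
    · intro j
      have hts : load I.truth j = n / 2 := I.truth_size j
      rw [hts]
      omega
  -- the invariant
  have hinv : ∀ t, collocates (σ.take t) (F t) ∧ validCap ε (F t) := by
    intro t
    induction t with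
    | zero =>
      constructor
      · intro u v huv
        have : u = v := sameComp_nil (by simpa using huv)
        rw [this]
      · intro j
        rw [hF0]
        rw [I.init_size j]
        have h2 : ((n / 2 : ℕ) : ℝ) = (n : ℝ) / 2 := by
          obtain ⟨k, hk⟩ := hn
          subst hk
          push_cast [Nat.mul_div_cancel_left k (by norm_num : 0 < 2)]
          ring
        rw [h2]
        have hεn : 0 ≤ ε * n := mul_nonneg hε.le (Nat.cast_nonneg n)
        push_cast
        nlinarith
    | succ t ih =>
      by_cases ht : t < σ.length
      · have hstep : F (t + 1) = stepf ε (σ.take (t + 1)) (F t) := algo_succ ε I.init σ ht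
        rw [hstep]
        exact stepf_spec hε (hexT (t + 1))
      · push_neg at ht
        have h1 : σ.take (t + 1) = σ.take t := by
          rw [List.take_of_length_le ht, List.take_of_length_le (le_trans ht (Nat.le_succ t))]
        have h2 : F (t + 1) = F t := by
          simp only [hFdef, h1]
        rw [h2, h1]
        exact ih
  refine ⟨?_, ?_, ?_, ?_⟩
  · intro t; rw [hstate t]; exact (hinv t).1
  · intro t; rw [hstate t]; exact (hinv t).2
  · -- perfection at the end
    rw [hstate σ.length]
    intro u v
    have hcolσ : collocates σ (F σ.length) := by
      have := (hinv σ.length).1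
      rwa [List.take_length] at this
    constructor
    · intro hfv
      by_contra htuv
      have hsub : (univ.filter fun w => I.truth w = I.truth u) ∪
          (univ.filter fun w => I.truth w = I.truth v) ⊆
          (univ.filter fun w => F σ.length w = F σ.length u) := by
        intro w hw
        simp only [Finset.mem_union, Finset.mem_filter, Finset.mem_univ, true_and] at hw ⊢
        rcases hw with hw | hw
        · exact hcolσ w u ((I.reveals w u).mpr hw)
        · rw [hcolσ w v ((I.reveals w v).mpr hw), hfv]
      have hdisj : Disjoint (univ.filter fun w => I.truth w = I.truth u)
          (univ.filter fun w => I.truth w = I.truth v) := by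
        rw [Finset.disjoint_left]
        intro w hw1 hw2
        simp only [Finset.mem_filter, Finset.mem_univ, true_and] at hw1 hw2
        exact htuv (hw1 ▸ hw2 ▸ rfl)
      have hcard : n ≤ (univ.filter fun w => F σ.length w = F σ.length u).card := by
        calc n = n / 2 + n / 2 := by omega
          _ = (univ.filter fun w => I.truth w = I.truth u).card +
              (univ.filter fun w => I.truth w = I.truth v).card := by
            rw [I.truth_size (I.truth u), I.truth_size (I.truth v)]
          _ = ((univ.filter fun w => I.truth w = I.truth u) ∪
              (univ.filter fun w => I.truth w = I.truth v)).card :=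
            (Finset.card_union_of_disjoint hdisj).symm
          _ ≤ _ := Finset.card_le_card hsub
      have hval := (hinv σ.length).2 (F σ.length u)
      have hle : (n : ℝ) ≤ (1 + ε) * n / ((2 : ℕ) : ℝ) := le_trans (by exact_mod_cast hcard) hval
      have hn' : (1 : ℝ) ≤ n := by exact_mod_cast (Fin.pos u)
      push_cast at hle
      nlinarith
    · intro htv
      exact hcolσ u v ((I.reveals u v).mpr htv)
  · -- the moves bound
    set r := σ.length with hrdef
    set f1 : ℕ → Fin n → Fin 2 := fun t => mergefix (σ.take (t + 1)) (F t) with hf1def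
    set m : ℕ → ℕ := fun t => movesBetween (F t) (f1 t) with hmdef
    set Φ : ℕ → ℝ := fun t => ∑ v : Fin n, Real.logb 2 ((comp (σ.take t) v).card) with hΦdef
    set P : ℕ → ℝ := fun t => |((load (F t) 0 : ℝ)) - n / 2| with hPdef
    have hhalf : ((n / 2 : ℕ) : ℝ) = (n : ℝ) / 2 := by
      obtain ⟨k, hk⟩ := hn
      subst hk
      push_cast [Nat.mul_div_cancel_left k (by norm_num : 0 < 2)]
      ring
    have htake : ∀ t : ℕ, ∀ x ∈ σ.take t, x ∈ σ.take (t + 1) := by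
      intro t x hx
      apply List.take_subset t (σ.take (t + 1))
      rw [List.take_take, min_eq_left (Nat.le_succ t)]
      exact hx
    have hmker : ∀ t, (m t : ℝ) ≤ Φ (t + 1) - Φ t := fun t =>
      merge_bound (htake t) (hinv t).1
    have habs3 : ∀ t, |((load (f1 t) 0 : ℝ)) - n / 2| ≤ P t + m t := by
      intro t
      have h1 : |((load (f1 t) 0 : ℝ)) - load (F t) 0| ≤ movesBetween (F t) (f1 t) :=
        abs_load_sub_le (F t) (f1 t)
      have h2 := abs_sub_le ((load (f1 t) 0 : ℝ)) ((load (F t) 0 : ℝ)) ((n : ℝ) / 2)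
      simp only [hPdef, hmdef]
      linarith
    have hS1 : ∀ t ∈ Finset.range r, (movesBetween (F t) (F (t + 1)) : ℝ) ≤
        (m t : ℝ) + (2 / ε) * (P t + (m t : ℝ) - P (t + 1)) := by
      intro t htm
      have ht : t < σ.length := by simpa [hrdef] using Finset.mem_range.mp htm
      have hstept : F (t + 1) = stepf ε (σ.take (t + 1)) (F t) := algo_succ ε I.init σ ht
      by_cases hv : validCap ε (f1 t)
      · have hFt : F (t + 1) = f1 t := by
          rw [hstept]
          exact stepf_eq_mergefix hv
        have hP : P (t + 1) ≤ P t + (m t : ℝ) := by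
          have h := habs3 t
          have he : P (t + 1) = |((load (f1 t) 0 : ℝ)) - n / 2| := by
            simp only [hPdef, hFt]
          rw [he]
          exact h
        have hm : (movesBetween (F t) (F (t + 1)) : ℝ) = (m t : ℝ) := by
          simp only [hmdef, hFt]
        have hprod : 0 ≤ (2 / ε) * (P t + (m t : ℝ) - P (t + 1)) :=
          mul_nonneg (by positivity) (by linarith)
        linarith
      · have hchoose : F (t + 1) = (hexT (t + 1)).choose := by
          rw [hstept]
          exact stepf_eq_choose hv (hexT (t + 1))
        obtain ⟨hgc, hgl⟩ := (hexT (t + 1)).choose_spec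
        have hload0 : 2 * load (F (t + 1)) 0 = n := by
          have ha := hgl 0
          have hb := hgl 1
          have hc := load_add_load ((hexT (t + 1)).choose)
          rw [hchoose]
          omega
        have hPt1 : P (t + 1) = 0 := by
          have hl : ((load (F (t + 1)) 0 : ℝ)) = (n : ℝ) / 2 := by
            have h : ((2 * load (F (t + 1)) 0 : ℕ) : ℝ) = (n : ℝ) := by exact_mod_cast hload0
            push_cast at h
            linarith
          simp only [hPdef, hl, sub_self, abs_zero]
        have hbig : ε * n / 2 ≤ P t + (m t : ℝ) := by
          unfold validCap at hv
          push_neg at hv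
          obtain ⟨j, hj⟩ := hv
          have hjl : ((1 + ε) * n / 2) < (load (f1 t) j : ℝ) := by
            have hc : ((univ.filter fun v => f1 t v = j).card : ℝ) = load (f1 t) j := rfl
            rw [hc] at hj
            push_cast at hj
            exact hj
          have hsum : (load (f1 t) 0 : ℝ) + load (f1 t) 1 = n := by
            exact_mod_cast load_add_load (f1 t)
          have hexp : (1 + ε) * (n : ℝ) / 2 = (n : ℝ) / 2 + ε * n / 2 := by ring
          have hα : ε * n / 2 < |((load (f1 t) 0 : ℝ)) - n / 2| := by
            rcases fin2 j with hj0 | hj1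
            · rw [hj0] at hjl
              have : ε * n / 2 < (load (f1 t) 0 : ℝ) - n / 2 := by linarith
              exact lt_of_lt_of_le this (le_abs_self _)
            · rw [hj1] at hjl
              have : ε * n / 2 < (n : ℝ) / 2 - load (f1 t) 0 := by linarith
              calc ε * n / 2 < (n : ℝ) / 2 - load (f1 t) 0 := this
                _ ≤ |(n : ℝ) / 2 - load (f1 t) 0| := le_abs_self _
                _ = |((load (f1 t) 0 : ℝ)) - n / 2| := abs_sub_comm _ _
          linarith [habs3 t]
        have hmovesle : (movesBetween (F t) (F (t + 1)) : ℝ) ≤ n := by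
          exact_mod_cast movesBetween_le (F t) (F (t + 1))
        have hmnn : (0 : ℝ) ≤ (m t : ℝ) := Nat.cast_nonneg _
        have hkey : (2 / ε) * (ε * (n : ℝ) / 2) = n := by field_simp
        rw [hPt1]
        have hmono : (2 / ε) * (ε * (n : ℝ) / 2) ≤ (2 / ε) * (P t + (m t : ℝ)) :=
          mul_le_mul_of_nonneg_left hbig (by positivity)
        rw [hkey] at hmono
        linarith
    have halg : (algMoves (algo ε) I.init σ : ℝ) ≤
        ∑ t ∈ Finset.range r, ((m t : ℝ) + (2 / ε) * (P t + (m t : ℝ) - P (t + 1))) := by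
      unfold algMoves
      push_cast
      simp only [hstate, ← hrdef]
      exact Finset.sum_le_sum hS1
    have hMsum : ∑ t ∈ Finset.range r, (m t : ℝ) ≤ Φ r - Φ 0 := by
      rw [← Finset.sum_range_sub (fun t => Φ t) r]
      exact Finset.sum_le_sum fun t _ => hmker t
    have hΦ0 : Φ 0 = 0 := by
      simp only [hΦdef]
      apply Finset.sum_eq_zero
      intro v _
      have hcomp : comp (σ.take 0) v = {v} := by
        ext w
        simp only [mem_comp, Finset.mem_singleton]
        constructor
        · intro h
          exact (sameComp_nil (by simpa using h)).symm
        · rintro rfl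
          exact sameComp_refl _ _
      rw [hcomp]
      simp
    have hΦr : Φ r ≤ (n : ℝ) * Real.logb 2 n := by
      have h : Φ r ≤ ∑ _v : Fin n, Real.logb 2 (n : ℝ) := by
        refine Finset.sum_le_sum ?_
        intro v _
        refine Real.logb_le_logb_of_le one_lt_two ?_ ?_
        · exact_mod_cast card_comp_pos _ v
        · exact_mod_cast card_comp_le _ v
      simpa [Finset.sum_const, Finset.card_univ, nsmul_eq_mul] using h
    have hP0 : P 0 = 0 := by
      simp only [hPdef, hF0]
      have hl : load I.init 0 = n / 2 := I.init_size 0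
      rw [hl, hhalf]
      simp
    have hPr : 0 ≤ P r := abs_nonneg _
    have hMnn : 0 ≤ ∑ t ∈ Finset.range r, (m t : ℝ) :=
      Finset.sum_nonneg fun t _ => Nat.cast_nonneg _
    have hPsum : ∑ t ∈ Finset.range r, (P t + (m t : ℝ) - P (t + 1)) =
        (∑ t ∈ Finset.range r, (m t : ℝ)) - (P r - P 0) := by
      have he : ∀ t, P t + (m t : ℝ) - P (t + 1) = (m t : ℝ) - (P (t + 1) - P t) :=
        fun t => by ring
      simp_rw [he]
      rw [Finset.sum_sub_distrib, Finset.sum_range_sub (fun t => P t) r]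
    set M := ∑ t ∈ Finset.range r, (m t : ℝ) with hMdef
    have halg2 : (algMoves (algo ε) I.init σ : ℝ) ≤ M + (2 / ε) * (M - (P r - P 0)) := by
      calc (algMoves (algo ε) I.init σ : ℝ) ≤ _ := halg
        _ = M + (2 / ε) * (M - (P r - P 0)) := by
          rw [Finset.sum_add_distrib, ← Finset.mul_sum, hPsum]
    have hB : M ≤ (n : ℝ) * Real.logb 2 n := by linarith
    rw [le_div_iff₀ hε]
    have hmul := mul_le_mul_of_nonneg_right halg2 hε.le
    have hexpand : (M + (2 / ε) * (M - (P r - P 0))) * ε =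
        M * ε + 2 * (M - (P r - P 0)) := by
      field_simp
    have hMε : M * ε ≤ M := by nlinarith
    rw [hexpand] at hmul
    nlinarith

end SLR3

/-- **Small–Large–Rebalance, two servers.** There is a universal constant
`C` such that for all `n`, `α > 1`, `ε ∈ (0,1)` with `2 ∣ n` there is a deterministic
online algorithm for two servers of capacity `(1+ε)·n/2` which always keeps every
currently-revealed connected component on one server, never exceeds the capacities,
ends with each ground-truth component alone on one server, and performs at most
`C·(n·log₂ n)/ε` vertex moves on every instance. -/
theorem stmt3 :
    ∃ C : ℝ, 0 < C ∧
      ∀ (n : ℕ) (α ε : ℝ), 1 < α → 0 < ε → ε < 1 → 2 ∣ n →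
        ∃ A : OnlineAlg n 2, ∀ I : ReInstance n 2,
          (∀ t, collocates (I.sigma.take t) (state A I.init I.sigma t)) ∧
          (∀ t, validCap ε (state A I.init I.sigma t)) ∧
          isPerfect I.truth (state A I.init I.sigma I.sigma.length) ∧
          (algMoves A I.init I.sigma : ℝ) ≤ C * (n * Real.logb 2 n) / ε := by
  refine ⟨3, by norm_num, ?_⟩
  intro n α ε _hα hε hε1 hn
  exact ⟨SLR3.algo ε, fun I => SLR3.main hε hε1 hn I⟩
end

section
/- There is a universal constant C such that the following holds for all n, all α > 1 and all ε > 0 with ℓ = 2 dividing n. There exists a deterministic online algorithm for the online re-embedding model with two servers, each of capacity (1+ε)·n/2, which always keeps every currently-revealed connected component on a single server, never exceeds the server capacities, ends with each ground-truth component alone on one server, and, on every instance, performs at most C·(n·log₂ n + (M·log₂ n)/ε) vertex moves, where M is the number of vertex moves performed by the optimal offline algorithm on that instance. -/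
open Finset

/-- Server load of assignment `f` on server `j`. -/
def ld {n : ℕ} (f : Fin n → Fin 2) (j : Fin 2) : ℕ :=
  (Finset.univ.filter fun v => f v = j).card

section Aux

attribute [local instance] Classical.propDecidable

variable {n : ℕ}

lemma mb_self (f : Fin n → Fin 2) : movesBetween f f = 0 := by
  simp [movesBetween]

lemma mb_comm (f g : Fin n → Fin 2) : movesBetween f g = movesBetween g f := by
  unfold movesBetween
  congr 1
  apply Finset.filter_congr
  intro v _
  simp [ne_comm]

lemma mb_triangle (f g h : Fin n → Fin 2) :
    movesBetween f h ≤ movesBetween f g + movesBetween g h := by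
  unfold movesBetween
  refine le_trans (Finset.card_le_card ?_) (Finset.card_union_le _ _)
  intro v hv
  simp only [Finset.mem_filter, Finset.mem_union, Finset.mem_univ, true_and] at *
  by_contra hc
  push_neg at hc
  exact hv (hc.1.trans hc.2)

lemma mb_le_n (f g : Fin n → Fin 2) : movesBetween f g ≤ n := by
  unfold movesBetween
  calc (Finset.univ.filter fun v => f v ≠ g v).card ≤ Finset.univ.card :=
        Finset.card_le_univ _
    _ = n := by simp

lemma ld_le_of_mb (f g : Fin n → Fin 2) (j : Fin 2) :
    ld g j ≤ ld f j + movesBetween f g := by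
  unfold ld movesBetween
  refine le_trans (Finset.card_le_card ?_) (Finset.card_union_le _ _)
  intro v hv
  simp only [Finset.mem_filter, Finset.mem_union, Finset.mem_univ, true_and] at *
  by_cases h : f v = g v
  · exact Or.inl (h.trans hv)
  · exact Or.inr h

/-- Move all vertices of `c` to the server of `q`. -/
def mover (f : Fin n → Fin 2) (c : Finset (Fin n)) (q : Fin n) : Fin n → Fin 2 :=
  fun v => if v ∈ c then f q else f v

lemma mb_mover_le (f : Fin n → Fin 2) (c : Finset (Fin n)) (q : Fin n) :
    movesBetween f (mover f c q) ≤ c.card := by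
  unfold movesBetween
  apply Finset.card_le_card
  intro v hv
  simp only [Finset.mem_filter, Finset.mem_univ, true_and, mover] at hv
  by_contra hc
  simp [hc] at hv

end Aux
section Aux2

attribute [local instance] Classical.propDecidable

variable {n : ℕ}

lemma sc_refl (E : List (Fin n × Fin n)) (u : Fin n) : sameComp E u u :=
  Relation.EqvGen.refl u

lemma sc_symm {E : List (Fin n × Fin n)} {u v : Fin n} (h : sameComp E u v) :
    sameComp E v u := Relation.EqvGen.symm u v h

lemma sc_trans {E : List (Fin n × Fin n)} {u v w : Fin n}
    (h1 : sameComp E u v) (h2 : sameComp E v w) : sameComp E u w :=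
  Relation.EqvGen.trans u v w h1 h2

lemma sc_mono {E : List (Fin n × Fin n)} (e : Fin n × Fin n) {u v : Fin n}
    (h : sameComp E u v) : sameComp (E ++ [e]) u v := by
  refine Relation.EqvGen.mono ?_ _ _ h
  intro a b hab
  exact hab.imp (List.mem_append_left _) (List.mem_append_left _)

lemma sc_new (E : List (Fin n × Fin n)) (e : Fin n × Fin n) :
    sameComp (E ++ [e]) e.1 e.2 :=
  Relation.EqvGen.rel _ _ (Or.inl (List.mem_append_right _ (List.mem_singleton_self e)))

lemma sc_nil {u v : Fin n} (h : sameComp ([] : List (Fin n × Fin n)) u v) : u = v := by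
  induction h with
  | rel a b hab => simp at hab
  | refl a => rfl
  | symm a b _ ih => exact ih.symm
  | trans a b c _ _ ih1 ih2 => exact ih1.trans ih2

lemma sc_truth {τ : Fin n → Fin 2} {E : List (Fin n × Fin n)}
    (hE : ∀ e ∈ E, τ e.1 = τ e.2) {u v : Fin n} (h : sameComp E u v) : τ u = τ v := by
  induction h with
  | rel a b hab =>
    rcases hab with hab | hab
    · exact hE _ hab
    · exact (hE _ hab).symm
  | refl a => rfl
  | symm a b _ ih => exact ih.symm
  | trans a b c _ _ ih1 ih2 => exact ih1.trans ih2

lemma sc_append_iff (E : List (Fin n × Fin n)) (e : Fin n × Fin n) (x y : Fin n) :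
    sameComp (E ++ [e]) x y ↔
      sameComp E x y ∨ (sameComp E x e.1 ∧ sameComp E e.2 y) ∨
        (sameComp E x e.2 ∧ sameComp E e.1 y) := by
  constructor
  · intro h
    induction h with
    | rel a b hab =>
      rcases hab with hab | hab
      · rcases List.mem_append.1 hab with h' | h'
        · exact Or.inl (Relation.EqvGen.rel _ _ (Or.inl h'))
        · have he : (a, b) = e := List.mem_singleton.1 h'
          have ha : a = e.1 := congrArg Prod.fst he
          have hb : b = e.2 := congrArg Prod.snd he
          subst ha; subst hb
          exact Or.inr (Or.inl ⟨sc_refl _ _, sc_refl _ _⟩)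
      · rcases List.mem_append.1 hab with h' | h'
        · exact Or.inl (Relation.EqvGen.rel _ _ (Or.inr h'))
        · have he : (b, a) = e := List.mem_singleton.1 h'
          have hb : b = e.1 := congrArg Prod.fst he
          have ha : a = e.2 := congrArg Prod.snd he
          subst ha; subst hb
          exact Or.inr (Or.inr ⟨sc_refl _ _, sc_refl _ _⟩)
    | refl a => exact Or.inl (sc_refl _ _)
    | symm a b _ ih =>
      rcases ih with h' | ⟨h1, h2⟩ | ⟨h1, h2⟩
      · exact Or.inl (sc_symm h')
      · exact Or.inr (Or.inr ⟨sc_symm h2, sc_symm h1⟩)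
      · exact Or.inr (Or.inl ⟨sc_symm h2, sc_symm h1⟩)
    | trans a b c _ _ ih1 ih2 =>
      rcases ih1 with h1 | ⟨p1, p2⟩ | ⟨p1, p2⟩ <;>
        rcases ih2 with h2 | ⟨q1, q2⟩ | ⟨q1, q2⟩
      · exact Or.inl (sc_trans h1 h2)
      · exact Or.inr (Or.inl ⟨sc_trans h1 q1, q2⟩)
      · exact Or.inr (Or.inr ⟨sc_trans h1 q1, q2⟩)
      · exact Or.inr (Or.inl ⟨p1, sc_trans p2 h2⟩)
      · exact Or.inr (Or.inl ⟨p1, q2⟩)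
      · exact Or.inl (sc_trans p1 q2)
      · exact Or.inr (Or.inr ⟨p1, sc_trans p2 h2⟩)
      · exact Or.inl (sc_trans p1 q2)
      · exact Or.inr (Or.inr ⟨p1, q2⟩)
  · intro h
    rcases h with h | ⟨h1, h2⟩ | ⟨h1, h2⟩
    · exact sc_mono e h
    · exact sc_trans (sc_mono e h1) (sc_trans (sc_new E e) (sc_mono e h2))
    · exact sc_trans (sc_mono e h1) (sc_trans (sc_symm (sc_new E e)) (sc_mono e h2))

end Aux2
section Aux3

attribute [local instance] Classical.propDecidable

variable {n : ℕ}

/-- The revealed component of `v`. -/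
noncomputable def ccmp (E : List (Fin n × Fin n)) (v : Fin n) : Finset (Fin n) :=
  Finset.univ.filter fun u => sameComp E v u

lemma mem_cmp {E : List (Fin n × Fin n)} {v u : Fin n} :
    u ∈ ccmp E v ↔ sameComp E v u := by simp [ccmp]

lemma self_mem_cmp (E : List (Fin n × Fin n)) (v : Fin n) : v ∈ ccmp E v :=
  mem_cmp.2 (sc_refl E v)

lemma cmp_card_pos (E : List (Fin n × Fin n)) (v : Fin n) : 0 < (ccmp E v).card :=
  Finset.card_pos.2 ⟨v, self_mem_cmp E v⟩

lemma cmp_eq_of_sc {E : List (Fin n × Fin n)} {a b : Fin n} (h : sameComp E a b) :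
    ccmp E a = ccmp E b := by
  ext x
  simp only [mem_cmp]
  exact ⟨fun hx => sc_trans (sc_symm h) hx, fun hx => sc_trans h hx⟩

lemma cmp_subset_append (E : List (Fin n × Fin n)) (e : Fin n × Fin n) (v : Fin n) :
    ccmp E v ⊆ ccmp (E ++ [e]) v := by
  intro x hx
  exact mem_cmp.2 (sc_mono e (mem_cmp.1 hx))

section Merge

variable {E : List (Fin n × Fin n)} {e : Fin n × Fin n} {p q : Fin n}
variable (hne : ¬ sameComp E e.1 e.2)
variable (hpq : (p = e.1 ∧ q = e.2) ∨ (p = e.2 ∧ q = e.1))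

include hne hpq

lemma hnpq : ¬ sameComp E p q := by
  rcases hpq with ⟨hp, hq⟩ | ⟨hp, hq⟩ <;> subst hp <;> subst hq
  · exact hne
  · exact fun h => hne (sc_symm h)

lemma sc_pq_new : sameComp (E ++ [e]) p q := by
  rcases hpq with ⟨hp, hq⟩ | ⟨hp, hq⟩ <;> subst hp <;> subst hq
  · exact sc_new E e
  · exact sc_symm (sc_new E e)

lemma sc_decomp (x y : Fin n) :
    sameComp (E ++ [e]) x y ↔
      sameComp E x y ∨ (sameComp E x p ∧ sameComp E q y) ∨
        (sameComp E x q ∧ sameComp E p y) := by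
  rcases hpq with ⟨hp, hq⟩ | ⟨hp, hq⟩ <;> subst hp <;> subst hq
  · exact sc_append_iff E e x y
  · rw [sc_append_iff E e x y]
    tauto

lemma cmp_disj : Disjoint (ccmp E p) (ccmp E q) := by
  rw [Finset.disjoint_left]
  intro x h1 h2
  exact hnpq hne hpq (sc_trans (mem_cmp.1 h1) (sc_symm (mem_cmp.1 h2)))

lemma cmp_new_in {x : Fin n} (hx : sameComp E p x) :
    ccmp (E ++ [e]) x = ccmp E p ∪ ccmp E q := by
  ext y
  simp only [mem_cmp, Finset.mem_union]
  constructor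
  · intro h
    rcases (sc_decomp hne hpq x y).1 h with h' | ⟨h1, h2⟩ | ⟨h1, h2⟩
    · exact Or.inl (sc_trans hx h')
    · exact Or.inr h2
    · exact absurd (sc_trans hx h1) (hnpq hne hpq)
  · intro h
    rcases h with h | h
    · exact sc_mono e (sc_trans (sc_symm hx) h)
    · exact sc_trans (sc_mono e (sc_symm hx))
        (sc_trans (sc_pq_new hne hpq) (sc_mono e h))

lemma cmp_new_out {x : Fin n} (hx1 : ¬ sameComp E x e.1) (hx2 : ¬ sameComp E x e.2) :
    ccmp (E ++ [e]) x = ccmp E x := by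
  have hxp : ¬ sameComp E x p := by
    rcases hpq with ⟨hp, _⟩ | ⟨hp, _⟩ <;> subst hp
    · exact hx1
    · exact hx2
  have hxq : ¬ sameComp E x q := by
    rcases hpq with ⟨_, hq⟩ | ⟨_, hq⟩ <;> subst hq
    · exact hx2
    · exact hx1
  ext y
  simp only [mem_cmp]
  constructor
  · intro h
    rcases (sc_decomp hne hpq x y).1 h with h' | ⟨h1, h2⟩ | ⟨h1, h2⟩
    · exact h'
    · exact absurd h1 hxp
    · exact absurd h1 hxq
  · exact fun h => sc_mono e h

lemma cmp_union_card :
    (ccmp E p ∪ ccmp E q).card = (ccmp E p).card + (ccmp E q).card :=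
  Finset.card_union_of_disjoint (cmp_disj hne hpq)

end Merge

end Aux3
section Aux4

attribute [local instance] Classical.propDecidable

variable {n : ℕ}

/-- Component-size potential. -/
noncomputable def pot (E : List (Fin n × Fin n)) : ℕ :=
  ∑ v : Fin n, Nat.log 2 (ccmp E v).card

lemma pot_mono (E : List (Fin n × Fin n)) (e : Fin n × Fin n) :
    pot E ≤ pot (E ++ [e]) := by
  apply Finset.sum_le_sum
  intro v _
  exact Nat.log_mono_right (Finset.card_le_card (cmp_subset_append E e v))

lemma pot_le (E : List (Fin n × Fin n)) : pot E ≤ n * Nat.log 2 n := by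
  calc pot E ≤ ∑ _v : Fin n, Nat.log 2 n := by
        apply Finset.sum_le_sum
        intro v _
        exact Nat.log_mono_right (le_trans (Finset.card_le_univ _) (by simp))
    _ = n * Nat.log 2 n := by simp [mul_comm]

lemma pot_merge {E : List (Fin n × Fin n)} {e : Fin n × Fin n} {p q : Fin n}
    (hne : ¬ sameComp E e.1 e.2)
    (hpq : (p = e.1 ∧ q = e.2) ∨ (p = e.2 ∧ q = e.1))
    (hcard : (ccmp E p).card ≤ (ccmp E q).card) :
    pot E + (ccmp E p).card ≤ pot (E ++ [e]) := by
  have point : ∀ v : Fin n,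
      Nat.log 2 (ccmp E v).card + (if v ∈ ccmp E p then 1 else 0) ≤
        Nat.log 2 (ccmp (E ++ [e]) v).card := by
    intro v
    by_cases hv : v ∈ ccmp E p
    · have hpv : sameComp E p v := mem_cmp.1 hv
      have h1 : ccmp E v = ccmp E p := (cmp_eq_of_sc hpv).symm
      have h2 : ccmp (E ++ [e]) v = ccmp E p ∪ ccmp E q := cmp_new_in hne hpq hpv
      rw [h1, h2, if_pos hv, cmp_union_card hne hpq]
      have hp0 : (ccmp E p).card ≠ 0 := (cmp_card_pos E p).ne'
      have hl : Nat.log 2 ((ccmp E p).card * 2) = Nat.log 2 (ccmp E p).card + 1 :=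
        Nat.log_mul_base (by norm_num) hp0
      calc Nat.log 2 (ccmp E p).card + 1 = Nat.log 2 ((ccmp E p).card * 2) := hl.symm
        _ ≤ Nat.log 2 ((ccmp E p).card + (ccmp E q).card) :=
            Nat.log_mono_right (by omega)
    · rw [if_neg hv, add_zero]
      exact Nat.log_mono_right (Finset.card_le_card (cmp_subset_append E e v))
  calc pot E + (ccmp E p).card
      = ∑ v : Fin n, (Nat.log 2 (ccmp E v).card + (if v ∈ ccmp E p then 1 else 0)) := by
        rw [Finset.sum_add_distrib]
        congr 1
        rw [Finset.sum_ite_mem, Finset.univ_inter, Finset.sum_const, smul_eq_mul, mul_one]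
    _ ≤ ∑ v : Fin n, Nat.log 2 (ccmp (E ++ [e]) v).card :=
        Finset.sum_le_sum fun v _ => point v
    _ = pot (E ++ [e]) := rfl

lemma mover_coll {E : List (Fin n × Fin n)} {e : Fin n × Fin n} {p q : Fin n}
    (hne : ¬ sameComp E e.1 e.2)
    (hpq : (p = e.1 ∧ q = e.2) ∨ (p = e.2 ∧ q = e.1))
    (f : Fin n → Fin 2) (hcol : ∀ u v, sameComp E u v → f u = f v) :
    ∀ u v, sameComp (E ++ [e]) u v →
      mover f (ccmp E p) q u = mover f (ccmp E p) q v := by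
  intro u v h
  rcases (sc_decomp hne hpq u v).1 h with h' | ⟨h1, h2⟩ | ⟨h1, h2⟩
  · by_cases hu : u ∈ ccmp E p
    · have hv : v ∈ ccmp E p := mem_cmp.2 (sc_trans (mem_cmp.1 hu) h')
      simp [mover, hu, hv]
    · have hv : v ∉ ccmp E p := fun hv =>
        hu (mem_cmp.2 (sc_trans (mem_cmp.1 hv) (sc_symm h')))
      simp only [mover, if_neg hu, if_neg hv]
      exact hcol u v h'
  · have hu : u ∈ ccmp E p := mem_cmp.2 (sc_symm h1)
    have hv : v ∉ ccmp E p := fun hv =>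
      hnpq hne hpq (sc_trans (mem_cmp.1 hv) (sc_symm h2))
    simp only [mover, if_pos hu, if_neg hv]
    exact hcol q v h2
  · have hu : u ∉ ccmp E p := fun hu =>
      hnpq hne hpq (sc_trans (mem_cmp.1 hu) h1)
    have hv : v ∈ ccmp E p := mem_cmp.2 h2
    simp only [mover, if_neg hu, if_pos hv]
    exact hcol u q h1

end Aux4
section Aux5

attribute [local instance] Classical.propDecidable

variable {n : ℕ}

/-- Comp-respecting perfectly balanced assignments. -/
def goodSet (E : List (Fin n × Fin n)) : Set (Fin n → Fin 2) :=
  {f | (∀ u v, sameComp E u v → f u = f v) ∧ ∀ j, ld f j = n / 2}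

/-- A comp-respecting balanced assignment minimizing distance to `a0`. -/
noncomputable def Sstar (a0 : Fin n → Fin 2) (E : List (Fin n × Fin n)) :
    Fin n → Fin 2 :=
  if h : ∃ f, f ∈ goodSet E ∧ ∀ g ∈ goodSet E, movesBetween f a0 ≤ movesBetween g a0
  then h.choose else a0

lemma Sstar_spec {a0 : Fin n → Fin 2} {E : List (Fin n × Fin n)}
    (hne : (goodSet E).Nonempty) :
    Sstar a0 E ∈ goodSet E ∧
      ∀ g ∈ goodSet E, movesBetween (Sstar a0 E) a0 ≤ movesBetween g a0 := by
  have h : ∃ f, f ∈ goodSet E ∧ ∀ g ∈ goodSet E, movesBetween f a0 ≤ movesBetween g a0 := by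
    obtain ⟨f0, hf0⟩ := hne
    have hS : {k | ∃ f ∈ goodSet E, movesBetween f a0 = k}.Nonempty :=
      ⟨movesBetween f0 a0, f0, hf0, rfl⟩
    obtain ⟨f, hf, hfk⟩ := Nat.sInf_mem hS
    refine ⟨f, hf, fun g hg => ?_⟩
    rw [hfk]
    exact Nat.sInf_le ⟨g, hg, rfl⟩
  rw [Sstar, dif_pos h]
  exact h.choose_spec

/-- One step of the online algorithm. -/
noncomputable def stepf (a0 : Fin n → Fin 2) (K : ℕ) (f : Fin n → Fin 2)
    (E : List (Fin n × Fin n)) (e : Fin n × Fin n) : Fin n → Fin 2 :=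
  if sameComp E e.1 e.2 then f
  else if (ccmp E e.1).card ≤ (ccmp E e.2).card then
    (if ∀ j, ld (mover f (ccmp E e.1) e.2) j ≤ n / 2 + K
      then mover f (ccmp E e.1) e.2 else Sstar a0 (E ++ [e]))
  else
    (if ∀ j, ld (mover f (ccmp E e.2) e.1) j ≤ n / 2 + K
      then mover f (ccmp E e.2) e.1 else Sstar a0 (E ++ [e]))

noncomputable def runRev (a0 : Fin n → Fin 2) (K : ℕ) :
    List (Fin n × Fin n) → Fin n → Fin 2
  | [] => a0
  | e :: rest => stepf a0 K (runRev a0 K rest) rest.reverse e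

/-- The assignment of the online algorithm after processing `l`. -/
noncomputable def runf (a0 : Fin n → Fin 2) (K : ℕ) (l : List (Fin n × Fin n)) :
    Fin n → Fin 2 :=
  runRev a0 K l.reverse

lemma runf_nil (a0 : Fin n → Fin 2) (K : ℕ) : runf a0 K [] = a0 := rfl

lemma runf_append (a0 : Fin n → Fin 2) (K : ℕ) (l : List (Fin n × Fin n))
    (e : Fin n × Fin n) :
    runf a0 K (l ++ [e]) = stepf a0 K (runf a0 K l) l e := by
  unfold runf
  rw [List.reverse_append]
  simp [runRev]

/-- Total moves of the online algorithm along `l`. -/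
noncomputable def paidf (a0 : Fin n → Fin 2) (K : ℕ) (l : List (Fin n × Fin n)) : ℕ :=
  ∑ t ∈ Finset.range l.length,
    movesBetween (runf a0 K (l.take t)) (runf a0 K (l.take (t + 1)))

lemma paidf_append (a0 : Fin n → Fin 2) (K : ℕ) (l : List (Fin n × Fin n))
    (e : Fin n × Fin n) :
    paidf a0 K (l ++ [e]) = paidf a0 K l +
      movesBetween (runf a0 K l) (runf a0 K (l ++ [e])) := by
  unfold paidf
  rw [List.length_append, List.length_singleton, Finset.sum_range_succ]
  congr 1
  · apply Finset.sum_congr rfl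
    intro t ht
    rw [Finset.mem_range] at ht
    rw [List.take_append_of_le_length (by omega),
      List.take_append_of_le_length (by omega)]
  · rw [List.take_append_of_le_length (le_refl _), List.take_length,
      List.take_of_length_le (by simp)]

end Aux5
section Aux6

attribute [local instance] Classical.propDecidable

variable {n : ℕ}

lemma main_induction (a0 : Fin n → Fin 2) (K : ℕ) (tr T : Fin n → Fin 2)
    (ha0 : ∀ j, ld a0 j = n / 2)
    (hTf : ∀ u v, tr u = tr v → T u = T v)
    (hTs : ∀ j, ld T j = n / 2) :
    ∀ l : List (Fin n × Fin n), (∀ e ∈ l, tr e.1 = tr e.2) →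
      ∃ R s M : ℕ,
        (∀ u v, sameComp l u v → runf a0 K l u = runf a0 K l v) ∧
        (∀ j, ld (runf a0 K l) j ≤ n / 2 + K) ∧
        movesBetween (runf a0 K l) T ≤ 2 * movesBetween T a0 + s ∧
        (∀ j, ld (runf a0 K l) j ≤ n / 2 + s) ∧
        (K + 1) * R + s ≤ M ∧
        paidf a0 K l + s ≤ 2 * M + 4 * movesBetween T a0 * R ∧
        M ≤ pot l := by
  intro l
  induction l using List.reverseRecOn with
  | nil =>
    intro _
    refine ⟨0, 0, 0, ?_, ?_, ?_, ?_, ?_, ?_, ?_⟩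
    · intro u v h
      rw [sc_nil h]
    · intro j
      rw [runf_nil, ha0 j]
      omega
    · rw [runf_nil, mb_comm]
      omega
    · intro j
      rw [runf_nil, ha0 j]
      omega
    · omega
    · have : paidf a0 K ([] : List (Fin n × Fin n)) = 0 := by
        unfold paidf
        simp
      omega
    · omega
  | append_singleton l e ih =>
    intro h
    have hl : ∀ e' ∈ l, tr e'.1 = tr e'.2 := fun e' he' => h e' (List.mem_append_left _ he')
    obtain ⟨R, s, M, hcol, hcap, hW, hld, hcnt, hpaid, hM⟩ := ih hl
    set f := runf a0 K l with hf
    set D := movesBetween T a0 with hD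
    by_cases h1 : sameComp l e.1 e.2
    · -- redundant edge: no merge
      have hrun : runf a0 K (l ++ [e]) = f := by
        rw [runf_append]
        unfold stepf
        rw [if_pos h1]
      refine ⟨R, s, M, ?_, ?_, ?_, ?_, hcnt, ?_, le_trans hM (pot_mono l e)⟩
      · intro u v huv
        rw [hrun]
        rcases (sc_append_iff l e u v).1 huv with h' | ⟨ha, hb⟩ | ⟨ha, hb⟩
        · exact hcol u v h'
        · exact (hcol u e.1 ha).trans ((hcol e.1 e.2 h1).trans (hcol e.2 v hb))
        · exact (hcol u e.2 ha).trans ((hcol e.2 e.1 (sc_symm h1)).trans (hcol e.1 v hb))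
      · rw [hrun]; exact hcap
      · rw [hrun]; exact hW
      · rw [hrun]; exact hld
      · rw [paidf_append, hrun, mb_self]
        omega
    · -- a real merge
      have key : ∀ p q : Fin n,
          ((p = e.1 ∧ q = e.2) ∨ (p = e.2 ∧ q = e.1)) →
          (ccmp l p).card ≤ (ccmp l q).card →
          runf a0 K (l ++ [e]) =
            (if ∀ j, ld (mover f (ccmp l p) q) j ≤ n / 2 + K
              then mover f (ccmp l p) q else Sstar a0 (l ++ [e])) →
          ∃ R s M : ℕ,
            (∀ u v, sameComp (l ++ [e]) u v →
              runf a0 K (l ++ [e]) u = runf a0 K (l ++ [e]) v) ∧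
            (∀ j, ld (runf a0 K (l ++ [e])) j ≤ n / 2 + K) ∧
            movesBetween (runf a0 K (l ++ [e])) T ≤ 2 * movesBetween T a0 + s ∧
            (∀ j, ld (runf a0 K (l ++ [e])) j ≤ n / 2 + s) ∧
            (K + 1) * R + s ≤ M ∧
            paidf a0 K (l ++ [e]) + s ≤ 2 * M + 4 * movesBetween T a0 * R ∧
            M ≤ pot (l ++ [e]) := by
        intro p q hpq hcard hrun
        set m := (ccmp l p).card with hm
        set g := mover f (ccmp l p) q with hg
        have hmbfg : movesBetween f g ≤ m := mb_mover_le f _ q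
        have hpot : pot l + m ≤ pot (l ++ [e]) := pot_merge h1 hpq hcard
        have hcolg : ∀ u v, sameComp (l ++ [e]) u v → g u = g v :=
          mover_coll h1 hpq f hcol
        have hpd : paidf a0 K (l ++ [e]) =
            paidf a0 K l + movesBetween f (runf a0 K (l ++ [e])) := paidf_append a0 K l e
        by_cases h2 : ∀ j, ld g j ≤ n / 2 + K
        · rw [if_pos h2] at hrun
          refine ⟨R, s + m, M + m, ?_, ?_, ?_, ?_, ?_, ?_, ?_⟩
          · rw [hrun]; exact hcolg
          · rw [hrun]; exact h2
          · rw [hrun]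
            have t1 : movesBetween g T ≤ movesBetween g f + movesBetween f T :=
              mb_triangle g f T
            have t2 : movesBetween g f = movesBetween f g := mb_comm g f
            omega
          · intro j
            rw [hrun]
            have t1 : ld g j ≤ ld f j + movesBetween f g := ld_le_of_mb f g j
            have t2 := hld j
            omega
          · omega
          · rw [hpd, hrun]
            have hquad : 4 * D * R = 4 * movesBetween T a0 * R := by rw [hD]
            omega
          · omega
        · rw [if_neg h2] at hrun
          push_neg at h2
          obtain ⟨j, hj⟩ := h2
          have htrig : K + 1 ≤ s + m := by
            have t1 : ld g j ≤ ld f j + movesBetween f g := ld_le_of_mb f g j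
            have t2 := hld j
            omega
          have hTgood : T ∈ goodSet (l ++ [e]) :=
            ⟨fun u v huv => hTf u v (sc_truth h huv), hTs⟩
          obtain ⟨hSg, hSmin⟩ := Sstar_spec (a0 := a0) ⟨T, hTgood⟩
          have hSa0 : movesBetween (Sstar a0 (l ++ [e])) a0 ≤ D := hSmin T hTgood
          have hWS : movesBetween (Sstar a0 (l ++ [e])) T ≤ 2 * D := by
            have t1 : movesBetween (Sstar a0 (l ++ [e])) T ≤
                movesBetween (Sstar a0 (l ++ [e])) a0 + movesBetween a0 T :=
              mb_triangle _ a0 T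
            have t2 : movesBetween a0 T = movesBetween T a0 := mb_comm a0 T
            omega
          have hmv : movesBetween f (Sstar a0 (l ++ [e])) ≤ 4 * D + s := by
            have t1 : movesBetween f (Sstar a0 (l ++ [e])) ≤
                movesBetween f T + movesBetween T (Sstar a0 (l ++ [e])) :=
              mb_triangle f T _
            have t2 : movesBetween T (Sstar a0 (l ++ [e])) =
                movesBetween (Sstar a0 (l ++ [e])) T := mb_comm T _
            omega
          refine ⟨R + 1, 0, M + m, ?_, ?_, ?_, ?_, ?_, ?_, ?_⟩
          · rw [hrun]; exact hSg.1
          · intro j'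
            rw [hrun, hSg.2 j']
            omega
          · rw [hrun]
            omega
          · intro j'
            rw [hrun, hSg.2 j']
            omega
          · have hq : (K + 1) * (R + 1) = (K + 1) * R + (K + 1) := by ring
            omega
          · rw [hpd, hrun]
            have hq : 4 * movesBetween T a0 * (R + 1) = 4 * D * R + 4 * D := by
              rw [hD]; ring
            have hq2 : 4 * D * R = 4 * movesBetween T a0 * R := by rw [hD]
            omega
          · omega
      by_cases hc : (ccmp l e.1).card ≤ (ccmp l e.2).card
      · refine key e.1 e.2 (Or.inl ⟨rfl, rfl⟩) hc ?_
        rw [runf_append]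
        unfold stepf
        rw [if_neg h1, if_pos hc]
      · refine key e.2 e.1 (Or.inr ⟨rfl, rfl⟩) (le_of_lt (lt_of_not_ge hc)) ?_
        rw [runf_append]
        unfold stepf
        rw [if_neg h1, if_neg hc]

end Aux6
section Aux7

attribute [local instance] Classical.propDecidable

variable {n : ℕ}

lemma natlog_le_logb (m : ℕ) : (Nat.log 2 m : ℝ) ≤ Real.logb 2 m := by
  rcases Nat.eq_zero_or_pos m with hm | hm
  · subst hm
    simp [Real.logb_zero]
  · have h1 : (2 : ℕ) ^ Nat.log 2 m ≤ m := Nat.pow_log_le_self 2 hm.ne'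
    have h2 : ((2 : ℝ) ^ (Nat.log 2 m : ℕ)) ≤ (m : ℝ) := by exact_mod_cast h1
    have h3 : Real.logb 2 ((2 : ℝ) ^ (Nat.log 2 m : ℕ)) ≤ Real.logb 2 m :=
      Real.logb_le_logb_of_le (by norm_num) (by positivity) h2
    calc (Nat.log 2 m : ℝ) = Real.logb 2 ((2 : ℝ) ^ (Nat.log 2 m : ℕ)) := by
          rw [Real.logb_pow, Real.logb_self_eq_one (by norm_num), mul_one]
      _ ≤ Real.logb 2 m := h3

lemma one_le_logb_two {m : ℕ} (hm : 2 ≤ m) : (1 : ℝ) ≤ Real.logb 2 m := by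
  have : Real.logb 2 2 ≤ Real.logb 2 m :=
    Real.logb_le_logb_of_le (by norm_num) (by norm_num) (by exact_mod_cast hm)
  rwa [Real.logb_self_eq_one (by norm_num)] at this

lemma sched_ge (a0 : Fin n → Fin 2) (g : ℕ → Fin n → Fin 2) (N : ℕ) :
    movesBetween a0 (g N) ≤
      movesBetween a0 (g 0) + ∑ t ∈ Finset.range N, movesBetween (g t) (g (t + 1)) := by
  induction N with
  | zero => simp
  | succ N ihN =>
    rw [Finset.sum_range_succ]
    have := mb_triangle a0 (g N) (g (N + 1))
    omega

lemma fin2_cases (a : Fin 2) : a = 0 ∨ a = 1 := by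
  fin_cases a <;> simp

lemma fin2_swap_iff (a j : Fin 2) : 1 - a = j ↔ a = 1 - j := by
  fin_cases a <;> fin_cases j <;> decide

lemma fin2_swap_inj (a b : Fin 2) : 1 - a = 1 - b ↔ a = b := by
  fin_cases a <;> fin_cases b <;> decide

end Aux7
section Aux8

variable {n : ℕ}

lemma perfect_swap (tr : Fin n → Fin 2) : isPerfect tr (fun v => 1 - tr v) :=
  fun u v => fin2_swap_inj (tr u) (tr v)

lemma ld_swap (tr : Fin n → Fin 2)
    (hsz : ∀ j, (Finset.univ.filter fun v => tr v = j).card = n / 2) (j : Fin 2) :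
    ld (fun v => 1 - tr v) j = n / 2 := by
  unfold ld
  rw [show (Finset.univ.filter fun v => (fun v => 1 - tr v) v = j) =
      (Finset.univ.filter fun v => tr v = 1 - j) from
    Finset.filter_congr fun v _ => fin2_swap_iff (tr v) j]
  exact hsz (1 - j)

lemma perfect_cases {tr f : Fin n → Fin 2} (hn : 2 ≤ n) (hmod : n % 2 = 0)
    (hsz : ∀ j, (Finset.univ.filter fun v => tr v = j).card = n / 2)
    (hp : isPerfect tr f) : f = tr ∨ f = fun v => 1 - tr v := by
  have hpos : 0 < n / 2 := by omega
  obtain ⟨u0, hu0mem⟩ := Finset.card_pos.1 (by rw [hsz 0]; exact hpos)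
  obtain ⟨v0, hv0mem⟩ := Finset.card_pos.1 (by rw [hsz 1]; exact hpos)
  rw [Finset.mem_filter] at hu0mem hv0mem
  have hu0 : tr u0 = 0 := hu0mem.2
  have hv0 : tr v0 = 1 := hv0mem.2
  have hne : f u0 ≠ f v0 := by
    intro hh
    have h := (hp u0 v0).1 hh
    rw [hu0, hv0] at h
    exact absurd h (by decide)
  rcases fin2_cases (f u0) with h0 | h0
  · left
    funext v
    rcases fin2_cases (tr v) with hv | hv
    · rw [hv, ← h0]
      exact (hp v u0).2 (by rw [hv, hu0])
    · have h1 : f v0 = 1 := by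
        rcases fin2_cases (f v0) with hx | hx
        · exact absurd (h0.trans hx.symm) hne
        · exact hx
      rw [hv, ← h1]
      exact (hp v v0).2 (by rw [hv, hv0])
  · right
    funext v
    have h1 : f v0 = 0 := by
      rcases fin2_cases (f v0) with hx | hx
      · exact hx
      · exact absurd (h0.trans hx.symm) hne
    show f v = 1 - tr v
    rcases fin2_cases (tr v) with hv | hv
    · have hfv : f v = f u0 := (hp v u0).2 (by rw [hv, hu0])
      rw [hfv, h0, hv]
      decide
    · have hfv : f v = f v0 := (hp v v0).2 (by rw [hv, hv0])
      rw [hfv, h1, hv]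
      decide
end Aux8
set_option maxHeartbeats 2000000 in
/-- **Small–Large–Rebalance with efficient rebalancing, two servers.**
There is a universal constant `C` such that for all `n`, `α > 1`, `ε > 0` with `2 ∣ n`
there is a deterministic online algorithm for two servers of capacity `(1+ε)·n/2` which
always keeps every currently-revealed connected component on one server, never exceeds
the capacities, ends with each ground-truth component alone on one server, and performs
at most `C·(n·log₂ n + (M·log₂ n)/ε)` vertex moves on every instance, where `M` is the
number of vertex moves performed by the optimal offline algorithm on that instance. -/
theorem stmt4 :
    ∃ C : ℝ, 0 < C ∧
      ∀ (n : ℕ) (α ε : ℝ), 1 < α → 0 < ε → 2 ∣ n →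
        ∃ A : OnlineAlg n 2, ∀ I : ReInstance n 2,
          (∀ t, collocates (I.sigma.take t) (state A I.init I.sigma t)) ∧
          (∀ t, validCap ε (state A I.init I.sigma t)) ∧
          isPerfect I.truth (state A I.init I.sigma I.sigma.length) ∧
          (algMoves A I.init I.sigma : ℝ) ≤
            C * ((n : ℝ) * Real.logb 2 n + ((OPTmoves ε I : ℝ) * Real.logb 2 n) / ε) := by
  classical
  refine ⟨100, by norm_num, ?_⟩
  intro n α ε hα hε hdvd
  rcases Nat.eq_zero_or_pos n with hn0 | hnpos
  · -- degenerate case n = 0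
    subst hn0
    refine ⟨fun a0 _ => a0, ?_⟩
    intro I
    have hmb0 : ∀ f g : Fin 0 → Fin 2, movesBetween f g = 0 := by
      intro f g
      have := mb_le_n f g
      omega
    refine ⟨?_, ?_, ?_, ?_⟩
    · intro t u v _
      exact u.elim0
    · intro t j
      rw [Finset.univ_eq_empty, Finset.filter_empty, Finset.card_empty]
      norm_num
    · intro u v
      exact u.elim0
    · have hz : algMoves (fun (a0 : Fin 0 → Fin 2) _ => a0) I.init I.sigma = 0 := by
        unfold algMoves
        exact Finset.sum_eq_zero fun t _ => hmb0 _ _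
      rw [hz]
      norm_num [Real.logb_zero]
  · -- main case
    have hn2 : 2 ≤ n := by
      rcases hdvd with ⟨k, rfl⟩
      omega
    have hmod : n % 2 = 0 := by
      rcases hdvd with ⟨k, rfl⟩
      omega
    set K := min (Nat.floor (ε * n / 4)) (n / 2 - 1) with hKdef
    refine ⟨fun a0 l => runf a0 K l, ?_⟩
    intro I
    have hstate : ∀ t, state (fun a0 l => runf a0 K l) I.init I.sigma t
        = runf I.init K (I.sigma.take t) := by
      intro t
      cases t with
      | zero =>
        rw [List.take_zero, runf_nil]
        rfl
      | succ t => rfl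
    -- the reference perfect assignment T and optimal distance D
    set t2 : Fin n → Fin 2 := fun v => 1 - I.truth v with ht2
    set T : Fin n → Fin 2 :=
      if movesBetween I.truth I.init ≤ movesBetween t2 I.init then I.truth else t2 with hT
    have hTf : ∀ u v, I.truth u = I.truth v → T u = T v := by
      intro u v huv
      rw [hT]
      split_ifs
      · exact huv
      · rw [ht2]
        simp only
        rw [huv]
    have hTs : ∀ j, ld T j = n / 2 := by
      intro j
      rw [hT]
      split_ifs
      · exact I.truth_size j
      · rw [ht2]
        exact ld_swap I.truth I.truth_size j
    have ha0 : ∀ j, ld I.init j = n / 2 := I.init_size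
    set D := movesBetween T I.init with hD
    have hDt1 : D ≤ movesBetween I.truth I.init := by
      rw [hD, hT]
      split_ifs with h'
      · exact le_refl _
      · exact le_of_lt (lt_of_not_ge h')
    have hDt2 : D ≤ movesBetween t2 I.init := by
      rw [hD, hT]
      split_ifs with h'
      · exact h'
      · exact le_refl _
    have hcast2 : ((n / 2 : ℕ) : ℝ) = (n : ℝ) / 2 := Nat.cast_div hdvd (by norm_num)
    have hvalT : ∀ f : Fin n → Fin 2, (∀ j, ld f j = n / 2) → validCap ε f := by
      intro f hf
      unfold validCap
      intro j
      have h1 : (Finset.univ.filter fun v => f v = j).card = n / 2 := hf j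
      rw [h1, hcast2]
      have hnn : (0 : ℝ) ≤ (n : ℝ) := by positivity
      nlinarith [hε.le]
    -- OPT is at least D
    have hDopt : D ≤ OPTmoves ε I := by
      unfold OPTmoves
      apply le_csInf
      · exact ⟨schedMoves I.init I.sigma fun _ => T,
          ⟨fun _ => T, fun _ => hvalT T hTs, by
            intro u v
            constructor
            · intro h
              rw [hT] at h
              split_ifs at h
              · exact h
              · rw [ht2] at h
                simp only at h
                exact (fin2_swap_inj _ _).1 h
            · exact hTf u v, rfl⟩⟩
      · rintro b ⟨g, _, hg2, rfl⟩
        have h1 : movesBetween I.init (g I.sigma.length) ≤ schedMoves I.init I.sigma g :=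
          sched_ge I.init g I.sigma.length
        rcases perfect_cases hn2 hmod I.truth_size hg2 with he | he
        · have h2 : movesBetween I.init (g I.sigma.length) = movesBetween I.truth I.init := by
            rw [he, mb_comm]
          omega
        · have h2 : movesBetween I.init (g I.sigma.length) = movesBetween t2 I.init := by
            rw [he, mb_comm, ht2]
          omega
    -- the main invariants
    have hmain := main_induction I.init K I.truth T ha0 hTf hTs
    have hpref : ∀ t, ∀ e ∈ I.sigma.take t, I.truth e.1 = I.truth e.2 :=
      fun t e he => I.edges_within e (List.take_subset t I.sigma he)
    have hcol : ∀ t, collocates (I.sigma.take t)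
        (state (fun a0 l => runf a0 K l) I.init I.sigma t) := by
      intro t
      obtain ⟨R, s, M, hc, -, -, -, -, -, -⟩ := hmain (I.sigma.take t) (hpref t)
      rw [hstate t]
      exact hc
    have hcapN : ∀ t j, ld (state (fun a0 l => runf a0 K l) I.init I.sigma t) j
        ≤ n / 2 + K := by
      intro t j
      obtain ⟨R, s, M, -, hc, -, -, -, -, -⟩ := hmain (I.sigma.take t) (hpref t)
      rw [hstate t]
      exact hc j
    have hKn : K ≤ n / 2 - 1 := min_le_right _ _
    have hvc : ∀ t, validCap ε (state (fun a0 l => runf a0 K l) I.init I.sigma t) := by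
      intro t
      unfold validCap
      intro j
      have h1 := hcapN t j
      have hKr : (K : ℝ) ≤ ε * n / 4 := by
        have h2 : K ≤ Nat.floor (ε * n / 4) := min_le_left _ _
        have h3 : ((Nat.floor (ε * n / 4) : ℕ) : ℝ) ≤ ε * n / 4 :=
          Nat.floor_le (by positivity)
        calc (K : ℝ) ≤ ((Nat.floor (ε * n / 4) : ℕ) : ℝ) := by exact_mod_cast h2
          _ ≤ ε * n / 4 := h3
      have h4 : ((ld (state (fun a0 l => runf a0 K l) I.init I.sigma t) j : ℕ) : ℝ)
          ≤ ((n / 2 + K : ℕ) : ℝ) := by exact_mod_cast h1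
      rw [Nat.cast_add, hcast2] at h4
      have hnn : (0 : ℝ) ≤ (n : ℝ) := by positivity
      show ((Finset.univ.filter fun v =>
        state (fun a0 l => runf a0 K l) I.init I.sigma t v = j).card : ℝ) ≤ (1 + ε) * n / 2
      have h5 : ((ld (state (fun a0 l => runf a0 K l) I.init I.sigma t) j : ℕ) : ℝ)
          = ((Finset.univ.filter fun v =>
            state (fun a0 l => runf a0 K l) I.init I.sigma t v = j).card : ℝ) := rfl
      rw [h5] at h4
      nlinarith [hε.le]
    -- perfection at the end
    have hperf : isPerfect I.truth
        (state (fun a0 l => runf a0 K l) I.init I.sigma I.sigma.length) := by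
      set f := state (fun a0 l => runf a0 K l) I.init I.sigma I.sigma.length with hfdef
      have hfcol : ∀ u v, I.truth u = I.truth v → f u = f v := by
        intro u v huv
        have hc := hcol I.sigma.length
        rw [List.take_length] at hc
        exact hc u v ((I.reveals u v).2 huv)
      have hpos : 0 < n / 2 := by omega
      obtain ⟨u0, hu0mem⟩ := Finset.card_pos.1 (by rw [I.truth_size 0]; exact hpos)
      obtain ⟨v0, hv0mem⟩ := Finset.card_pos.1 (by rw [I.truth_size 1]; exact hpos)
      rw [Finset.mem_filter] at hu0mem hv0mem
      have hu0 : I.truth u0 = 0 := hu0mem.2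
      have hv0 : I.truth v0 = 1 := hv0mem.2
      have hsep : f u0 ≠ f v0 := by
        intro hh
        have hall : ∀ v, f v = f u0 := by
          intro v
          rcases fin2_cases (I.truth v) with hv | hv
          · exact hfcol v u0 (by rw [hv, hu0])
          · rw [hfcol v v0 (by rw [hv, hv0])]
            exact hh.symm
        have hldn : ld f (f u0) = n := by
          unfold ld
          rw [Finset.filter_true_of_mem fun v _ => hall v]
          simp
        have hcap' := hcapN I.sigma.length (f u0)
        rw [← hfdef] at hcap'
        omega
      intro u v
      constructor
      · intro huv
        by_contra htne
        rcases fin2_cases (I.truth u) with hu | hu <;>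
          rcases fin2_cases (I.truth v) with hv | hv
        · exact htne (hu.trans hv.symm)
        · have e1 : f u = f u0 := hfcol u u0 (by rw [hu, hu0])
          have e2 : f v = f v0 := hfcol v v0 (by rw [hv, hv0])
          exact hsep (e1.symm.trans (huv.trans e2))
        · have e1 : f u = f v0 := hfcol u v0 (by rw [hu, hv0])
          have e2 : f v = f u0 := hfcol v u0 (by rw [hv, hu0])
          exact hsep (e2.symm.trans (huv.symm.trans e1))
        · exact htne (hu.trans hv.symm)
      · exact hfcol u v
    -- the moves bound
    obtain ⟨R, s, M, -, -, -, -, hcnt, hpaid, hM⟩ :=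
      hmain I.sigma (fun e he => I.edges_within e he)
    rw [← hD] at hpaid
    have hmoves_eq : algMoves (fun a0 l => runf a0 K l) I.init I.sigma
        = paidf I.init K I.sigma := by
      unfold algMoves paidf
      exact Finset.sum_congr rfl fun t _ => by rw [hstate t, hstate (t + 1)]
    have hMn : M ≤ n * Nat.log 2 n := le_trans hM (pot_le I.sigma)
    have hDn : D ≤ n := by
      rw [hD]
      exact mb_le_n T I.init
    have hDR : paidf I.init K I.sigma ≤ 2 * M + 4 * D * R := by omega
    set L := Real.logb 2 (n : ℝ) with hL
    have hL1 : (1 : ℝ) ≤ L := one_le_logb_two hn2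
    have hML : (M : ℝ) ≤ (n : ℝ) * L := by
      calc (M : ℝ) ≤ ((n * Nat.log 2 n : ℕ) : ℝ) := by exact_mod_cast hMn
        _ = (n : ℝ) * ((Nat.log 2 n : ℕ) : ℝ) := by push_cast; ring
        _ ≤ (n : ℝ) * L := mul_le_mul_of_nonneg_left (natlog_le_logb n) (by positivity)
    have hcast : (paidf I.init K I.sigma : ℝ) ≤ 2 * (M : ℝ) + 4 * (D : ℝ) * (R : ℝ) := by
      exact_mod_cast hDR
    have hOPTD : (D : ℝ) ≤ (OPTmoves ε I : ℝ) := by exact_mod_cast hDopt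
    have hOPTnn : (0 : ℝ) ≤ (OPTmoves ε I : ℝ) * L / ε :=
      div_nonneg (mul_nonneg (by positivity) (by linarith)) hε.le
    have hnLnn : (0 : ℝ) ≤ (n : ℝ) * L := by
      have : (0:ℝ) ≤ (n:ℝ) := by positivity
      nlinarith
    have hfinal : (paidf I.init K I.sigma : ℝ) ≤
        100 * ((n : ℝ) * L + ((OPTmoves ε I : ℝ) * L) / ε) := by
      have hnpos' : (0 : ℝ) < (n : ℝ) := by exact_mod_cast hnpos
      rcases le_or_gt (Nat.floor (ε * n / 4)) (n / 2 - 1) with hmin | hmin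
      · -- K is the floor
        have hKeq : K = Nat.floor (ε * n / 4) := min_eq_left hmin
        have hK1 : ε * n / 4 < (K : ℝ) + 1 := by
          rw [hKeq]
          exact Nat.lt_floor_add_one _
        have hcnt' : (K + 1) * R ≤ M := by omega
        have hRM : ((K : ℝ) + 1) * (R : ℝ) ≤ (M : ℝ) := by exact_mod_cast hcnt'
        have hRnn : (0 : ℝ) ≤ (R : ℝ) := by positivity
        have hDnn : (0 : ℝ) ≤ (D : ℝ) := by positivity
        have h5 : ε * (n : ℝ) / 4 * (R : ℝ) ≤ (M : ℝ) :=
          le_trans (mul_le_mul_of_nonneg_right (le_of_lt hK1) hRnn) hRM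
        have h6 : 4 * (D : ℝ) * (R : ℝ) * (ε * n) ≤ 16 * (D : ℝ) * (M : ℝ) := by
          nlinarith [mul_le_mul_of_nonneg_left h5 hDnn]
        have h7 : 16 * (D : ℝ) * (M : ℝ) ≤
            16 * (OPTmoves ε I : ℝ) * ((n : ℝ) * L) := by
          have hMnn : (0 : ℝ) ≤ (M : ℝ) := by positivity
          have := mul_le_mul hOPTD hML hMnn (by positivity)
          nlinarith
        have h8 : 4 * (D : ℝ) * (R : ℝ) ≤ 16 * (OPTmoves ε I : ℝ) * L / ε := by
          rw [le_div_iff₀ hε]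
          have h9 : (4 * (D : ℝ) * (R : ℝ) * ε) * n ≤
              (16 * (OPTmoves ε I : ℝ) * L) * n := by nlinarith
          exact le_of_mul_le_mul_right h9 hnpos'
        have h10 : 16 * (OPTmoves ε I : ℝ) * L / ε = 16 * ((OPTmoves ε I : ℝ) * L / ε) := by
          ring
        linarith [hcast, hML, h8]
      · -- K is n/2 - 1
        have hKeq : K = n / 2 - 1 := min_eq_right (le_of_lt hmin)
        have hK1 : K + 1 = n / 2 := by omega
        rw [hK1] at hcnt
        have h5 : n / 2 * R ≤ M := (Nat.le_add_right _ s).trans hcnt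
        have h6 : n * R ≤ 2 * M := by
          have hnn : n = 2 * (n / 2) := by omega
          calc n * R = 2 * (n / 2) * R := by rw [← hnn]
            _ = 2 * (n / 2 * R) := Nat.mul_assoc 2 (n / 2) R
            _ ≤ 2 * M := Nat.mul_le_mul_left 2 h5
        have h7 : 4 * D * R ≤ 8 * M := by
          calc 4 * D * R = 4 * (D * R) := by ring
            _ ≤ 4 * (n * R) := Nat.mul_le_mul_left 4 (Nat.mul_le_mul_right R hDn)
            _ ≤ 4 * (2 * M) := Nat.mul_le_mul_left 4 h6
            _ = 8 * M := by ring
        have h8 : paidf I.init K I.sigma ≤ 10 * M := by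
          calc paidf I.init K I.sigma ≤ 2 * M + 4 * D * R := hDR
            _ ≤ 2 * M + 8 * M := Nat.add_le_add_left h7 (2 * M)
            _ = 10 * M := by ring
        calc (paidf I.init K I.sigma : ℝ) ≤ ((10 * M : ℕ) : ℝ) := by exact_mod_cast h8
          _ = 10 * (M : ℝ) := by push_cast; ring
          _ ≤ 10 * ((n : ℝ) * L) := by linarith
          _ ≤ 100 * ((n : ℝ) * L + (OPTmoves ε I : ℝ) * L / ε) := by nlinarith
    refine ⟨hcol, hvc, hperf, ?_⟩
    rw [hmoves_eq]
    exact hfinal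
end

section
/- There is a universal constant C such that the following holds for all n and all α > 1 with ℓ = 2 dividing n. There exists a deterministic online algorithm for the online re-embedding model with two servers such that, on every instance, letting Δ = min{|V_init(S_0) ∩ V_0|, |V_init(S_0) ∩ V_1|}: (a) the algorithm's total cost (moving plus communication) is at most C·α·Δ·(1 + log₂ n), hence at most C·(1 + log₂ n) times the optimal offline cost 2αΔ; (b) at every point during its execution the load of each server is at most n/2 + 4Δ; and (c) its final assignment places each ground-truth component alone on one server. -/
open Finset

namespace MV

set_option maxHeartbeats 1000000

attribute [local instance] Classical.propDecidable

variable {n : ℕ}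

lemma sc_refl (E : List (Fin n × Fin n)) (v : Fin n) : sameComp E v v := Relation.EqvGen.refl v

lemma sc_symm {E : List (Fin n × Fin n)} {u v : Fin n} (h : sameComp E u v) : sameComp E v u :=
  Relation.EqvGen.symm u v h

lemma sc_trans {E : List (Fin n × Fin n)} {u v w : Fin n} (h : sameComp E u v)
    (h' : sameComp E v w) : sameComp E u w := Relation.EqvGen.trans u v w h h'

lemma sc_mono {E E' : List (Fin n × Fin n)} (hs : ∀ x ∈ E, x ∈ E') {u v : Fin n}
    (h : sameComp E u v) : sameComp E' u v :=
  by
    unfold sameComp at h ⊢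
    induction h with
    | rel a b hab => exact Relation.EqvGen.rel a b (hab.imp (hs _) (hs _))
    | refl a => exact Relation.EqvGen.refl a
    | symm a b _ ih => exact Relation.EqvGen.symm a b ih
    | trans a b c _ _ ih1 ih2 => exact Relation.EqvGen.trans a b c ih1 ih2

lemma sc_concat {E : List (Fin n × Fin n)} {e : Fin n × Fin n} {u v : Fin n} :
    sameComp (E ++ [e]) u v ↔ sameComp E u v ∨ (sameComp E u e.1 ∧ sameComp E e.2 v)
      ∨ (sameComp E u e.2 ∧ sameComp E e.1 v) := by
  constructor
  · intro h
    induction h with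
    | rel a b hab =>
      rcases hab with h | h <;> rcases List.mem_append.1 h with h | h
      · exact Or.inl (Relation.EqvGen.rel a b (Or.inl h))
      · simp only [List.mem_singleton] at h
        subst h
        exact Or.inr (Or.inl ⟨sc_refl E a, sc_refl E b⟩)
      · exact Or.inl (Relation.EqvGen.rel a b (Or.inr h))
      · simp only [List.mem_singleton] at h
        subst h
        exact Or.inr (Or.inr ⟨sc_refl E a, sc_refl E b⟩)
    | refl a => exact Or.inl (sc_refl E a)
    | symm a b _ ih =>
      rcases ih with h | ⟨h1, h2⟩ | ⟨h1, h2⟩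
      · exact Or.inl (sc_symm h)
      · exact Or.inr (Or.inr ⟨sc_symm h2, sc_symm h1⟩)
      · exact Or.inr (Or.inl ⟨sc_symm h2, sc_symm h1⟩)
    | trans a b c _ _ ih1 ih2 =>
      rcases ih1 with h | ⟨h1, h2⟩ | ⟨h1, h2⟩ <;>
        rcases ih2 with g | ⟨g1, g2⟩ | ⟨g1, g2⟩
      · exact Or.inl (sc_trans h g)
      · exact Or.inr (Or.inl ⟨sc_trans h g1, g2⟩)
      · exact Or.inr (Or.inr ⟨sc_trans h g1, g2⟩)
      · exact Or.inr (Or.inl ⟨h1, sc_trans h2 g⟩)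
      · exact Or.inr (Or.inl ⟨h1, g2⟩)
      · exact Or.inl (sc_trans h1 g2)
      · exact Or.inr (Or.inr ⟨h1, sc_trans h2 g⟩)
      · exact Or.inl (sc_trans h1 g2)
      · exact Or.inr (Or.inr ⟨h1, g2⟩)
  · intro h
    have base : ∀ x ∈ E, x ∈ E ++ [e] := fun x hx => List.mem_append.2 (Or.inl hx)
    have he : sameComp (E ++ [e]) e.1 e.2 :=
      Relation.EqvGen.rel e.1 e.2 (Or.inl (List.mem_append.2 (Or.inr (List.mem_singleton.2 rfl))))
    rcases h with h | ⟨h1, h2⟩ | ⟨h1, h2⟩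
    · exact sc_mono base h
    · exact sc_trans (sc_mono base h1) (sc_trans he (sc_mono base h2))
    · exact sc_trans (sc_mono base h1) (sc_trans (sc_symm he) (sc_mono base h2))

/-- The class of `v` in the components revealed by `E`. -/
noncomputable def cls (E : List (Fin n × Fin n)) (v : Fin n) : Finset (Fin n) :=
  Finset.univ.filter (fun w => sameComp E w v)

lemma mem_cls {E : List (Fin n × Fin n)} {w v : Fin n} : w ∈ cls E v ↔ sameComp E w v := by
  simp [cls]

lemma self_mem_cls {E : List (Fin n × Fin n)} {v : Fin n} : v ∈ cls E v :=
  mem_cls.2 (sc_refl E v)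

lemma cls_eq_of_sc {E : List (Fin n × Fin n)} {u v : Fin n} (h : sameComp E u v) :
    cls E u = cls E v := by
  ext w; simp only [mem_cls]
  exact ⟨fun g => sc_trans g h, fun g => sc_trans g (sc_symm h)⟩

lemma cls_eq_of_mem {E : List (Fin n × Fin n)} {u v : Fin n} (h : u ∈ cls E v) :
    cls E u = cls E v := cls_eq_of_sc (mem_cls.1 h)

lemma cls_card_pos (E : List (Fin n × Fin n)) (v : Fin n) : 0 < (cls E v).card :=
  Finset.card_pos.2 ⟨v, self_mem_cls⟩

/-! ### Counting and potential -/

def cnt (a0 : Fin n → Fin 2) (j : Fin 2) (S : Finset (Fin n)) : ℕ :=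
  (S.filter fun w => a0 w = j).card

def dispS (a0 f : Fin n → Fin 2) (S : Finset (Fin n)) : ℕ :=
  (S.filter fun w => a0 w ≠ f w).card

def mS (a0 : Fin n → Fin 2) (S : Finset (Fin n)) : ℕ := min (cnt a0 0 S) (cnt a0 1 S)

noncomputable def phi (a0 f : Fin n → Fin 2) (S : Finset (Fin n)) : ℝ :=
  30 * mS a0 S * Real.logb 2 (2 * S.card) + 3 * (2 * (mS a0 S : ℝ) - dispS a0 f S)

noncomputable def Phi (a0 f : Fin n → Fin 2) (E : List (Fin n × Fin n)) : ℝ :=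
  ∑ v, phi a0 f (cls E v) / (cls E v).card

/-! ### Fin 2 helpers -/

lemma fin2_succ_ne : ∀ s : Fin 2, s + 1 ≠ s := by decide

lemma fin2_eq_succ_of_ne : ∀ s t : Fin 2, s ≠ t → t = s + 1 := by decide

lemma fin2_cases : ∀ s j : Fin 2, j = s ∨ j = s + 1 := by decide

lemma fin2_succ_succ : ∀ s : Fin 2, s + 1 + 1 = s := by decide

lemma fin2_ne_iff : ∀ s j : Fin 2, (j ≠ s ↔ j = s + 1) := by decide

/-! ### Basic counting lemmas -/

lemma cnt_union (a0 : Fin n → Fin 2) (j : Fin 2) {S T : Finset (Fin n)} (h : Disjoint S T) :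
    cnt a0 j (S ∪ T) = cnt a0 j S + cnt a0 j T := by
  unfold cnt; rw [Finset.filter_union, Finset.card_union_of_disjoint]
  exact Finset.disjoint_filter_filter h

lemma disp_union (a0 f : Fin n → Fin 2) {S T : Finset (Fin n)} (h : Disjoint S T) :
    dispS a0 f (S ∪ T) = dispS a0 f S + dispS a0 f T := by
  unfold dispS; rw [Finset.filter_union, Finset.card_union_of_disjoint]
  exact Finset.disjoint_filter_filter h

lemma card_eq_cnt_add_cnt (a0 : Fin n → Fin 2) (s : Fin 2) (S : Finset (Fin n)) :
    S.card = cnt a0 s S + cnt a0 (s + 1) S := by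
  unfold cnt
  rw [show (S.filter fun w => a0 w = s + 1) = S.filter fun w => ¬ a0 w = s by
    apply Finset.filter_congr; intro w _
    constructor
    · intro h; rw [h]; exact fin2_succ_ne s
    · intro h; exact fin2_eq_succ_of_ne s (a0 w) (fun hh => h hh.symm)]
  exact (Finset.card_filter_add_card_filter_not _).symm

lemma disp_eq_cnt (a0 f : Fin n → Fin 2) {S : Finset (Fin n)} {j : Fin 2}
    (h : ∀ w ∈ S, f w = j) : dispS a0 f S = cnt a0 (j + 1) S := by
  unfold dispS cnt
  congr 1
  apply Finset.filter_congr
  intro w hw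
  rw [h w hw]
  constructor
  · intro hne; exact fin2_eq_succ_of_ne j (a0 w) (fun hh => hne hh.symm)
  · intro he; rw [he]; exact fin2_succ_ne j

lemma mS_eq_min (a0 : Fin n → Fin 2) (s : Fin 2) (S : Finset (Fin n)) :
    mS a0 S = min (cnt a0 s S) (cnt a0 (s + 1) S) := by
  rcases fin2_cases 0 s with h | h <;> subst h
  · rfl
  · unfold mS
    rw [show ((0 : Fin 2) + 1 + 1) = 0 from rfl, show ((0 : Fin 2) + 1) = 1 from rfl, min_comm]

lemma mS_le_cnt (a0 : Fin n → Fin 2) (j : Fin 2) (S : Finset (Fin n)) :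
    mS a0 S ≤ cnt a0 j S := by
  rcases fin2_cases 0 j with h | h <;> subst h
  · exact min_le_left _ _
  · exact min_le_right _ _

/-! ### The algorithm -/

/-- All classes revealed so far have full size `n/2`. -/
def complete (E : List (Fin n × Fin n)) : Prop := ∀ v : Fin n, (cls E v).card = n / 2

noncomputable def maj (a0 : Fin n → Fin 2) (S : Finset (Fin n)) : Fin 2 :=
  if cnt a0 1 S ≤ cnt a0 0 S then 0 else 1

/-- The canonical final assignment once the components are complete. -/
noncomputable def Fst (a0 : Fin n → Fin 2) : List (Fin n × Fin n) → Fin n → Fin 2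
  | [] => a0
  | e :: E' => fun v =>
      if sameComp (e :: E') v e.1 then maj a0 (cls (e :: E') e.1)
      else maj a0 (cls (e :: E') e.1) + 1

/-- The relocation target of the merged class. -/
noncomputable def target (a0 f : Fin n → Fin 2) (e : Fin n × Fin n)
    (E : List (Fin n × Fin n)) : Fin 2 :=
  if 2 * cnt a0 (f e.1) (cls E e.1) ≤ cnt a0 (f e.2) (cls E e.1) then f e.2
  else if 2 * cnt a0 (f e.2) (cls E e.1) ≤ cnt a0 (f e.1) (cls E e.1) then f e.1
  else if 2 * cnt a0 (f e.2) ((cls E e.1).filter (fun w => f w = f e.2))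
          + cnt a0 (f e.2) ((cls E e.1).filter (fun w => f w = f e.1))
          ≤ 2 * cnt a0 (f e.1) ((cls E e.1).filter (fun w => f w = f e.1))
          + cnt a0 (f e.1) ((cls E e.1).filter (fun w => f w = f e.2))
       then f e.1 else f e.2

/-- One merge step of the hysteresis majority-voting algorithm. -/
noncomputable def mergeStep (a0 f : Fin n → Fin 2) (e : Fin n × Fin n)
    (E : List (Fin n × Fin n)) : Fin n → Fin 2 :=
  if f e.1 = f e.2 then f
  else fun w => if w ∈ cls E e.1 then target a0 f e E else f w

noncomputable def step (a0 f : Fin n → Fin 2) (E : List (Fin n × Fin n)) : Fin n → Fin 2 :=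
  if complete E then Fst a0 E
  else if hE : E = [] then f else mergeStep a0 f (E.getLast hE) E

noncomputable def alg (a0 : Fin n → Fin 2) (E : List (Fin n × Fin n)) : Fin n → Fin 2 :=
  if h : E = [] then a0 else step a0 (alg a0 E.dropLast) E
  termination_by E.length
  decreasing_by
    simp only [List.length_dropLast]
    exact Nat.sub_lt (List.length_pos_iff.2 h) one_pos

lemma alg_nil (a0 : Fin n → Fin 2) : alg a0 [] = a0 := by rw [alg]; simp

lemma alg_concat (a0 : Fin n → Fin 2) (E : List (Fin n × Fin n)) (e : Fin n × Fin n) :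
    alg a0 (E ++ [e]) = step a0 (alg a0 E) (E ++ [e]) := by
  rw [alg]; simp [List.dropLast_concat]

/-! ### Analytic lemmas -/

noncomputable def phiR (m d c : ℕ) : ℝ :=
  30 * m * Real.logb 2 (2 * c) + 3 * (2 * (m : ℝ) - d)

lemma phi_eq_phiR (a0 f : Fin n → Fin 2) (S : Finset (Fin n)) :
    phi a0 f S = phiR (mS a0 S) (dispS a0 f S) S.card := rfl

lemma logb_two_ge_one {c : ℕ} (h : 1 ≤ c) : 1 ≤ Real.logb 2 (2 * c) := by
  have h2 : (2 : ℝ) ≤ 2 * c := by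
    have : (1 : ℝ) ≤ c := by exact_mod_cast h
    nlinarith
  calc (1 : ℝ) = Real.logb 2 2 := by simp
  _ ≤ Real.logb 2 (2 * c) := Real.logb_le_logb_of_le (by norm_num) (by norm_num) h2

lemma Lmono {cP cC : ℕ} (h : cP ≤ cC) : Real.logb 2 (2 * cP) ≤ Real.logb 2 (2 * cC) := by
  rcases Nat.eq_zero_or_pos cP with h0 | h0
  · subst h0
    simp only [Nat.cast_zero, mul_zero, Real.logb_zero]
    rcases Nat.eq_zero_or_pos cC with h1 | h1
    · subst h1; simp
    · exact le_trans zero_le_one (logb_two_ge_one h1)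
  · apply Real.logb_le_logb_of_le (by norm_num)
    · have : (0 : ℝ) < cP := by exact_mod_cast h0
      nlinarith
    · have : (cP : ℝ) ≤ cC := by exact_mod_cast h
      nlinarith

lemma Lgap {u c : ℕ} (hu : 1 ≤ u) (huc : u ≤ c) :
    ((c : ℝ) - u) / c ≤ Real.logb 2 (2 * c) - Real.logb 2 (2 * u) := by
  have hur : (0 : ℝ) < u := by exact_mod_cast hu
  have hcr : (0 : ℝ) < c := lt_of_lt_of_le hur (by exact_mod_cast huc)
  have h2 : Real.logb 2 (2 * c) - Real.logb 2 (2 * u) = Real.logb 2 ((c : ℝ) / u) := by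
    rw [Real.logb_mul (by norm_num) (by positivity), Real.logb_mul (by norm_num) (by positivity),
      Real.logb_div (by positivity) (by positivity)]
    ring
  rw [h2]
  have hlog2 : Real.log 2 ≤ 1 := by
    have := Real.log_le_sub_one_of_pos (x := 2) (by norm_num); linarith
  have hlog2pos : 0 < Real.log 2 := Real.log_pos (by norm_num)
  have hcu : (1 : ℝ) ≤ (c : ℝ) / u := by
    rw [le_div_iff₀ hur]; simp only [one_mul]; exact_mod_cast huc
  have hlogcu : 0 ≤ Real.log ((c : ℝ) / u) := Real.log_nonneg hcu
  have key : 1 - (u : ℝ) / c ≤ Real.log ((c : ℝ) / u) := by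
    have h4 := Real.log_le_sub_one_of_pos (x := (u : ℝ) / c) (by positivity)
    have hinv : Real.log ((u : ℝ) / c) = -Real.log ((c : ℝ) / u) := by
      rw [Real.log_div (by positivity) (by positivity), Real.log_div (by positivity) (by positivity)]
      ring
    rw [hinv] at h4
    linarith
  have h3 : ((c : ℝ) - u) / c = 1 - (u : ℝ) / c := by field_simp
  rw [h3]
  calc 1 - (u : ℝ) / c ≤ Real.log ((c : ℝ) / u) := key
  _ ≤ Real.logb 2 ((c : ℝ) / u) := by
      rw [Real.logb, le_div_iff₀ hlog2pos]
      nlinarith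

lemma logpart (μ ν mC cP cQ cC : ℕ) (hsum : μ + ν ≤ mC) (hμ : μ ≤ cP) (hν : ν ≤ cQ)
    (hP : cP ≤ cC) (hQ : cQ ≤ cC) (hC : 1 ≤ cC) :
    30 * μ * (Real.logb 2 (2 * cC) - Real.logb 2 (2 * cP))
      + 30 * ν * (Real.logb 2 (2 * cC) - Real.logb 2 (2 * cQ))
      + 30 * ((mC : ℝ) - μ - ν)
    ≤ 30 * mC * Real.logb 2 (2 * cC) - 30 * μ * Real.logb 2 (2 * cP)
      - 30 * ν * Real.logb 2 (2 * cQ) := by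
  have h1 : (1 : ℝ) ≤ Real.logb 2 (2 * cC) := logb_two_ge_one hC
  have h2 : (0 : ℝ) ≤ (mC : ℝ) - μ - ν := by
    have : (μ : ℝ) + ν ≤ mC := by exact_mod_cast hsum
    linarith
  nlinarith [mul_nonneg h2 (by linarith : (0:ℝ) ≤ Real.logb 2 (2 * cC) - 1)]

/-- Same-server merge: the potential is superadditive. -/
lemma W1R (p q p' q' : ℕ) (hP1 : 1 ≤ p + q) (hQ1 : 1 ≤ p' + q') :
    phiR (min p q) q (p + q) + phiR (min p' q') q' (p' + q')
      ≤ phiR (min (p + p') (q + q')) (q + q') (p + q + (p' + q')) := by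
  set μ := min p q with hμdef
  set ν := min p' q' with hνdef
  set mC := min (p + p') (q + q') with hmCdef
  have hsum : μ + ν ≤ mC := le_min (by omega) (by omega)
  have hlp := logpart μ ν mC (p + q) (p' + q') (p + q + (p' + q')) hsum (by omega) (by omega)
    (by omega) (by omega) (by omega)
  have hm1 := Lmono (cP := p + q) (cC := p + q + (p' + q')) (by omega)
  have hm2 := Lmono (cP := p' + q') (cC := p + q + (p' + q')) (by omega)
  have hsumr : (μ : ℝ) + ν ≤ mC := by exact_mod_cast hsum
  have hμr : (0:ℝ) ≤ (μ:ℝ) := by positivity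
  have hνr : (0:ℝ) ≤ (ν:ℝ) := by positivity
  unfold phiR
  push_cast at hlp hm1 hm2 ⊢
  nlinarith [mul_nonneg hμr (sub_nonneg.2 hm1), mul_nonneg hνr (sub_nonneg.2 hm2)]

/-- Forced flip. -/
lemma W2R (p q r w : ℕ) (hP : q ≤ 2 * p) (hz : 2 * (p + w) ≤ q + r)
    (hP1 : 1 ≤ p + q) (hQ1 : 1 ≤ r + w) :
    (p + q : ℝ) + phiR (min p q) q (p + q) + phiR (min r w) w (r + w)
      ≤ phiR (min (p + w) (q + r)) (p + w) (p + q + (r + w)) := by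
  have hp1 : 1 ≤ p := by omega
  have hmC : min (p + w) (q + r) = p + w := min_eq_left (by omega)
  rw [hmC]
  set μ := min p q with hμdef
  set ν := min r w with hνdef
  have hsum : μ + ν ≤ p + w := by omega
  have hlp := logpart μ ν (p + w) (p + q) (r + w) (p + q + (r + w)) hsum (by omega) (by omega)
    (by omega) (by omega) (by omega)
  have hgap := Lgap (u := p + q) (c := p + q + (r + w)) hP1 (by omega)
  have hm1 := Lmono (cP := p + q) (cC := p + q + (r + w)) (by omega)
  have hm2 := Lmono (cP := r + w) (cC := p + q + (r + w)) (by omega)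
  unfold phiR
  push_cast at hlp hgap hm1 hm2 ⊢
  set LC := Real.logb 2 (2 * ((p:ℝ) + q + ((r:ℝ) + w))) with hLC
  set LP := Real.logb 2 (2 * ((p:ℝ) + q)) with hLP
  set LQ := Real.logb 2 (2 * ((r:ℝ) + w)) with hLQ
  have hTpos : (0:ℝ) < (p:ℝ) + q + ((r:ℝ) + w) := by
    have h1 : (1:ℝ) ≤ (p:ℝ) + q := by exact_mod_cast hP1
    positivity
  have hD : ((r:ℝ) + w) ≤ ((p:ℝ) + q + ((r:ℝ) + w)) * (LC - LP) := by
    rw [div_le_iff₀ hTpos] at hgap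
    nlinarith [hgap]
  have hq2p : (0:ℝ) ≤ 2*(p:ℝ) - q := by
    have : (q:ℝ) ≤ 2*p := by exact_mod_cast hP
    linarith
  have hrw : (2*(p:ℝ) - q) ≤ (r:ℝ) + w := by
    have h := hz
    have : (2:ℝ)*((p:ℝ)+w) ≤ (q:ℝ) + r := by exact_mod_cast h
    have hw0 : (0:ℝ) ≤ (w:ℝ) := by positivity
    linarith
  have hppos : (0:ℝ) < (p:ℝ) := by exact_mod_cast hp1
  have h5 : (2*(p:ℝ) - q) ≤ 3 * p * (LC - LP) := by
    have hh : (0:ℝ) ≤ ((p:ℝ)+q) * (((r:ℝ)+w) - (2*(p:ℝ)-q)) :=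
      mul_nonneg (by positivity) (by linarith)
    have h2 : (2*(p:ℝ) - q) * ((p:ℝ) + q + ((r:ℝ) + w)) ≤ 3 * p * ((r:ℝ) + w) := by
      nlinarith [hh]
    have h3 : 3 * (p:ℝ) * ((r:ℝ) + w) ≤ 3 * p * (((p:ℝ)+q+((r:ℝ)+w)) * (LC - LP)) :=
      mul_le_mul_of_nonneg_left hD (by positivity)
    have h4 : (2*(p:ℝ) - q) * ((p:ℝ)+q+((r:ℝ)+w)) ≤ (3 * p * (LC - LP)) * ((p:ℝ)+q+((r:ℝ)+w)) := by
      nlinarith [h2, h3]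
    exact le_of_mul_le_mul_right h4 hTpos
  have hν_le_w : (ν:ℝ) ≤ w := by exact_mod_cast (show ν ≤ w by omega)
  have hLCLP : (0:ℝ) ≤ LC - LP := by linarith
  have hLCLQ : (0:ℝ) ≤ LC - LQ := by linarith
  have hν0 : (0:ℝ) ≤ (ν:ℝ) := by positivity
  have hνterm : (0:ℝ) ≤ 30 * (ν:ℝ) * (LC - LQ) := by positivity
  rcases le_total q p with hqp | hpq
  · have hμq : μ = q := by omega
    rw [hμq] at hlp ⊢
    have hq0 : (0:ℝ) ≤ (q:ℝ) := by positivity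
    have hqpr : (q:ℝ) ≤ p := by exact_mod_cast hqp
    have h6 : (q:ℝ) * p ≤ (3*(q:ℝ)*(LC - LP)) * p := by
      have hmm : (q:ℝ)*(2*(p:ℝ) - q) ≤ (q:ℝ)*(3 * p * (LC - LP)) := mul_le_mul_of_nonneg_left h5 hq0
      nlinarith [mul_nonneg hq0 (show (0:ℝ) ≤ (p:ℝ) - q by linarith)]
    have h7 : (q:ℝ) ≤ 3*(q:ℝ)*(LC - LP) := le_of_mul_le_mul_right h6 hppos
    linarith [hlp, h7, hνterm, hν_le_w, hqpr]
  · have hμp : μ = p := by omega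
    rw [hμp] at hlp ⊢
    have hqr : (q:ℝ) ≤ 2*p := by exact_mod_cast hP
    have hpqr : (p:ℝ) ≤ q := by exact_mod_cast hpq
    have h8 : 10*(2*(p:ℝ) - q) ≤ 10*(3 * p * (LC - LP)) :=
      mul_le_mul_of_nonneg_left h5 (by norm_num)
    linarith [hlp, h8, hνterm, hν_le_w, hqr]

/-- Middle-zone merge, moving the part with the smaller hysteresis score. -/
lemma W3R (p q r w : ℕ) (hP : q ≤ 2 * p) (hQ : w ≤ 2 * r)
    (hz1 : q + r < 2 * (p + w)) (hz2 : p + w < 2 * (q + r)) (hmov : 2 * p + w ≤ 2 * r + q)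
    (hP1 : 1 ≤ p + q) (hQ1 : 1 ≤ r + w) :
    (p + q : ℝ) + phiR (min p q) q (p + q) + phiR (min r w) w (r + w)
      ≤ phiR (min (p + w) (q + r)) (p + w) (p + q + (r + w)) := by
  set μ := min p q with hμdef
  set ν := min r w with hνdef
  set mC := min (p + w) (q + r) with hmCdef
  have hmCor : mC = p + w ∨ mC = q + r := by
    rcases le_total (p + w) (q + r) with h | h
    · left; rw [hmCdef]; exact min_eq_left h
    · right; rw [hmCdef]; exact min_eq_right h
  have hsum : μ + ν ≤ mC := le_min (by omega) (by omega)
  have hpw2 : p + w ≤ 2 * mC := by omega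
  have hT3 : p + q + (r + w) < 3 * mC := by omega
  have hlp := logpart μ ν mC (p + q) (r + w) (p + q + (r + w)) hsum (by omega) (by omega)
    (by omega) (by omega) (by omega)
  have hm1 := Lmono (cP := p + q) (cC := p + q + (r + w)) (by omega)
  have hm2 := Lmono (cP := r + w) (cC := p + q + (r + w)) (by omega)
  have hgapP := Lgap (u := p + q) (c := p + q + (r + w)) hP1 (by omega)
  have hgapQ := Lgap (u := r + w) (c := p + q + (r + w)) hQ1 (by omega)
  unfold phiR
  push_cast at hlp hm1 hm2 hgapP hgapQ ⊢
  set LC := Real.logb 2 (2 * ((p:ℝ) + q + ((r:ℝ) + w))) with hLC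
  set LP := Real.logb 2 (2 * ((p:ℝ) + q)) with hLP
  set LQ := Real.logb 2 (2 * ((r:ℝ) + w)) with hLQ
  have hLCLP : (0:ℝ) ≤ LC - LP := by linarith
  have hLCLQ : (0:ℝ) ≤ LC - LQ := by linarith
  have hμ0 : (0:ℝ) ≤ (μ:ℝ) := by positivity
  have hν0 : (0:ℝ) ≤ (ν:ℝ) := by positivity
  have hsumr : (μ:ℝ) + ν ≤ mC := by exact_mod_cast hsum
  have hpw2r : (p:ℝ) + w ≤ 2 * mC := by exact_mod_cast hpw2
  have hT3r : (p:ℝ) + q + ((r:ℝ) + w) < 3 * (mC:ℝ) := by exact_mod_cast hT3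
  rcases le_or_gt (6 * (μ + ν)) (p + q + (r + w)) with hA | hB
  · have hc1 : 6*((μ:ℝ) + ν) ≤ (p:ℝ) + q + ((r:ℝ) + w) := by exact_mod_cast hA
    linarith [hlp, mul_nonneg hμ0 hLCLP, mul_nonneg hν0 hLCLQ, hc1, hT3r, hpw2r,
      (show (0:ℝ) ≤ (q:ℝ) by positivity), (show (0:ℝ) ≤ (w:ℝ) by positivity),
      (show (0:ℝ) ≤ (r:ℝ) by positivity)]
  · have hc1 : (p:ℝ) + q + ((r:ℝ) + w) < 6*((μ:ℝ) + ν) := by exact_mod_cast hB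
    have hTpos : (0:ℝ) < (p:ℝ) + q + ((r:ℝ) + w) := by
      have h1 : (1:ℝ) ≤ (p:ℝ) + q := by exact_mod_cast hP1
      positivity
    have hD1 : ((r:ℝ) + w) ≤ ((p:ℝ) + q + ((r:ℝ) + w)) * (LC - LP) := by
      rw [div_le_iff₀ hTpos] at hgapP
      nlinarith [hgapP]
    have hD2 : ((p:ℝ) + q) ≤ ((p:ℝ) + q + ((r:ℝ) + w)) * (LC - LQ) := by
      rw [div_le_iff₀ hTpos] at hgapQ
      nlinarith [hgapQ]
    have hμq : (μ:ℝ) ≤ q := by exact_mod_cast (show μ ≤ q by omega)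
    have hνr2 : (ν:ℝ) ≤ r := by exact_mod_cast (show ν ≤ r by omega)
    have hmovr : 2*(p:ℝ) + w ≤ 2*(r:ℝ) + q := by exact_mod_cast hmov
    rcases le_total (p + q) (r + w) with hm | hm
    · -- mstar = p + q
      have hmr : (p:ℝ) + q ≤ (r:ℝ) + w := by exact_mod_cast hm
      have e1 : (μ:ℝ)*((p:ℝ)+q) ≤ (μ:ℝ)*((r:ℝ)+w) := mul_le_mul_of_nonneg_left hmr hμ0
      have e2 : (μ:ℝ)*((r:ℝ)+w) ≤ (μ:ℝ)*(((p:ℝ)+q+((r:ℝ)+w))*(LC - LP)) :=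
        mul_le_mul_of_nonneg_left hD1 hμ0
      have e3 : (ν:ℝ)*((p:ℝ)+q) ≤ (ν:ℝ)*(((p:ℝ)+q+((r:ℝ)+w))*(LC - LQ)) :=
        mul_le_mul_of_nonneg_left hD2 hν0
      have e4 : ((p:ℝ)+q+((r:ℝ)+w))*((p:ℝ)+q) ≤ (6*((μ:ℝ)+ν))*((p:ℝ)+q) :=
        mul_le_mul_of_nonneg_right (by linarith) (by positivity)
      have k1 : 5*((p:ℝ)+q) * ((p:ℝ) + q + ((r:ℝ) + w)) ≤
          (30*((μ:ℝ)*(LC - LP) + (ν:ℝ)*(LC - LQ))) * ((p:ℝ) + q + ((r:ℝ) + w)) := by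
        nlinarith [e1, e2, e3, e4]
      have k2 : 5*((p:ℝ)+q) ≤ 30*((μ:ℝ)*(LC - LP) + (ν:ℝ)*(LC - LQ)) :=
        le_of_mul_le_mul_right k1 hTpos
      linarith [hlp, k2, hsumr]
    · -- mstar = r + w
      have hmr : (r:ℝ) + w ≤ (p:ℝ) + q := by exact_mod_cast hm
      have e1 : (ν:ℝ)*((r:ℝ)+w) ≤ (ν:ℝ)*((p:ℝ)+q) := mul_le_mul_of_nonneg_left hmr hν0
      have e2 : (μ:ℝ)*((r:ℝ)+w) ≤ (μ:ℝ)*(((p:ℝ)+q+((r:ℝ)+w))*(LC - LP)) :=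
        mul_le_mul_of_nonneg_left hD1 hμ0
      have e3 : (ν:ℝ)*((p:ℝ)+q) ≤ (ν:ℝ)*(((p:ℝ)+q+((r:ℝ)+w))*(LC - LQ)) :=
        mul_le_mul_of_nonneg_left hD2 hν0
      have e4 : ((p:ℝ)+q+((r:ℝ)+w))*((r:ℝ)+w) ≤ (6*((μ:ℝ)+ν))*((r:ℝ)+w) :=
        mul_le_mul_of_nonneg_right (by linarith) (by positivity)
      have k1 : 5*((r:ℝ)+w) * ((p:ℝ) + q + ((r:ℝ) + w)) ≤
          (30*((μ:ℝ)*(LC - LP) + (ν:ℝ)*(LC - LQ))) * ((p:ℝ) + q + ((r:ℝ) + w)) := by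
        nlinarith [e1, e2, e3, e4]
      have k2 : 5*((r:ℝ)+w) ≤ 30*((μ:ℝ)*(LC - LP) + (ν:ℝ)*(LC - LQ)) :=
        le_of_mul_le_mul_right k1 hTpos
      linarith [hlp, k2, hmovr, hsumr]

/-! ### Classes under appending one edge -/

section Structural

variable {E' : List (Fin n × Fin n)} {e : Fin n × Fin n}

lemma sc_concat_same_iff (hsc : sameComp E' e.1 e.2) (u v : Fin n) :
    sameComp (E' ++ [e]) u v ↔ sameComp E' u v := by
  rw [sc_concat]
  constructor
  · rintro (h | ⟨h1, h2⟩ | ⟨h1, h2⟩)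
    · exact h
    · exact sc_trans h1 (sc_trans hsc h2)
    · exact sc_trans h1 (sc_trans (sc_symm hsc) h2)
  · exact Or.inl

lemma cls_concat_same (hsc : sameComp E' e.1 e.2) (v : Fin n) :
    cls (E' ++ [e]) v = cls E' v := by
  ext w; simp only [mem_cls, sc_concat_same_iff hsc]

lemma cls_concat_union : cls (E' ++ [e]) e.1 = cls E' e.1 ∪ cls E' e.2 := by
  ext w
  simp only [mem_cls, Finset.mem_union, sc_concat]
  constructor
  · rintro (h | ⟨h1, _⟩ | ⟨h1, _⟩)
    · exact Or.inl h
    · exact Or.inl h1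
    · exact Or.inr h1
  · rintro (h | h)
    · exact Or.inl h
    · exact Or.inr (Or.inr ⟨h, sc_refl E' e.1⟩)

lemma cls_concat_out {v : Fin n} (hv : v ∉ cls (E' ++ [e]) e.1) :
    cls (E' ++ [e]) v = cls E' v := by
  have h1 : ¬ sameComp E' v e.1 := by
    intro h; exact hv (mem_cls.2 (sc_mono (fun x hx => List.mem_append.2 (Or.inl hx)) h))
  have h2 : ¬ sameComp E' v e.2 := by
    intro h
    refine hv (mem_cls.2 ?_)
    rw [sc_concat]
    exact Or.inr (Or.inr ⟨h, sc_refl E' e.1⟩)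
  ext w
  simp only [mem_cls, sc_concat]
  constructor
  · rintro (h | ⟨g1, g2⟩ | ⟨g1, g2⟩)
    · exact h
    · exact absurd (sc_symm g2) h2
    · exact absurd (sc_symm g2) h1
  · exact Or.inl

lemma cls_out_disj {v w : Fin n} (hv : v ∉ cls (E' ++ [e]) e.1) (hw : w ∈ cls E' v) :
    w ∉ cls (E' ++ [e]) e.1 := by
  intro hwC
  apply hv
  have h1 : sameComp (E' ++ [e]) v w :=
    sc_symm (sc_mono (fun x hx => List.mem_append.2 (Or.inl hx)) (mem_cls.1 hw))
  exact mem_cls.2 (sc_trans h1 (mem_cls.1 hwC))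

lemma cls_disj_of_not_sc {u v : Fin n} (h : ¬ sameComp E' u v) :
    Disjoint (cls E' u) (cls E' v) := by
  rw [Finset.disjoint_left]
  intro w hwu hwv
  exact h (sc_trans (sc_symm (mem_cls.1 hwu)) (mem_cls.1 hwv))

lemma dispS_congr {a0 f f' : Fin n → Fin 2} {S : Finset (Fin n)}
    (h : ∀ w ∈ S, f w = f' w) : dispS a0 f S = dispS a0 f' S := by
  unfold dispS
  congr 1
  apply Finset.filter_congr
  intro w hw
  rw [h w hw]

end Structural

/-! ### Summation over classes -/

lemma sum_classes (E : List (Fin n × Fin n)) (T : Finset (Fin n))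
    (hT : ∀ v ∈ T, cls E v ⊆ T) (g : Finset (Fin n) → ℝ) :
    ∑ v ∈ T, g (cls E v) / (cls E v).card = ∑ S ∈ T.image (cls E), g S := by
  symm
  apply Finset.sum_image'
  intro c hc
  have hfilter : T.filter (fun j => cls E j = cls E c) = cls E c := by
    ext j
    simp only [Finset.mem_filter]
    constructor
    · rintro ⟨_, hj⟩; rw [← hj]; exact self_mem_cls
    · intro hj; exact ⟨hT c hc hj, cls_eq_of_mem hj⟩
  rw [hfilter]
  have : ∀ j ∈ cls E c, g (cls E j) / ((cls E j).card : ℝ) = g (cls E c) / ((cls E c).card : ℝ) := by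
    intro j hj; rw [cls_eq_of_mem hj]
  rw [Finset.sum_congr rfl this, Finset.sum_const, nsmul_eq_mul]
  have hne0 : ((cls E c).card : ℝ) ≠ 0 := by
    exact_mod_cast (cls_card_pos E c).ne'
  field_simp

lemma biUnion_classes (E : List (Fin n × Fin n)) (T : Finset (Fin n))
    (hT : ∀ v ∈ T, cls E v ⊆ T) :
    (T.image (cls E)).biUnion id = T := by
  ext v
  simp only [Finset.mem_biUnion, Finset.mem_image, id]
  constructor
  · rintro ⟨S, ⟨u, hu, rfl⟩, hv⟩; exact hT u hu hv
  · intro hv; exact ⟨cls E v, ⟨v, hv, rfl⟩, self_mem_cls⟩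

lemma card_filter_sum_classes (E : List (Fin n × Fin n)) (T : Finset (Fin n))
    (hT : ∀ v ∈ T, cls E v ⊆ T) (p : Fin n → Prop) [DecidablePred p] :
    ((T.filter p).card : ℝ) = ∑ v ∈ T, (((cls E v).filter p).card : ℝ) / (cls E v).card := by
  have hsum : (T.filter p).card = ∑ S ∈ T.image (cls E), (S.filter p).card := by
    conv_lhs => rw [← biUnion_classes E T hT]
    rw [Finset.filter_biUnion, Finset.card_biUnion]
    · simp only [id]
    · intro S1 h1 S2 h2 hne
      simp only [Finset.mem_coe, Finset.mem_image] at h1 h2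
      obtain ⟨u, _, rfl⟩ := h1
      obtain ⟨v, _, rfl⟩ := h2
      apply Finset.disjoint_filter_filter
      apply cls_disj_of_not_sc
      intro hsc
      exact hne (cls_eq_of_sc hsc)
  rw [sum_classes E T hT (fun S => ((S.filter p).card : ℝ)), hsum]
  push_cast
  rfl

/-! ### Potential difference under a merge -/

lemma sum_const_div (S : Finset (Fin n)) (x : ℝ) (hS : S.Nonempty) :
    ∑ _v ∈ S, x / (S.card : ℝ) = x := by
  rw [Finset.sum_const, nsmul_eq_mul]
  have h0 : ((S.card : ℝ)) ≠ 0 := by exact_mod_cast (Finset.card_pos.2 hS).ne'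
  field_simp

lemma Phi_diff (a0 f f' : Fin n → Fin 2) (E' : List (Fin n × Fin n)) (e : Fin n × Fin n)
    (hns : ¬ sameComp E' e.1 e.2)
    (hf' : ∀ v, v ∉ cls (E' ++ [e]) e.1 → f' v = f v) :
    Phi a0 f' (E' ++ [e]) - Phi a0 f E' =
      phi a0 f' (cls (E' ++ [e]) e.1) - phi a0 f (cls E' e.1) - phi a0 f (cls E' e.2) := by
  have hterm : ∀ v, v ∉ cls (E' ++ [e]) e.1 →
      phi a0 f' (cls (E' ++ [e]) v) / ((cls (E' ++ [e]) v).card : ℝ)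
        = phi a0 f (cls E' v) / ((cls E' v).card : ℝ) := by
    intro v hv
    rw [cls_concat_out hv]
    have hd : dispS a0 f (cls E' v) = dispS a0 f' (cls E' v) :=
      dispS_congr (fun w hw => (hf' w (cls_out_disj hv hw)).symm)
    unfold phi
    rw [hd]
  have hsplit : Phi a0 f' (E' ++ [e]) - Phi a0 f E' =
      ∑ v ∈ cls (E' ++ [e]) e.1,
        (phi a0 f' (cls (E' ++ [e]) v) / ((cls (E' ++ [e]) v).card : ℝ)
          - phi a0 f (cls E' v) / ((cls E' v).card : ℝ)) := by
    unfold Phi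
    rw [← Finset.sum_sub_distrib]
    symm
    apply Finset.sum_subset (Finset.subset_univ _)
    intro v _ hv
    rw [hterm v hv]
    ring
  rw [hsplit, Finset.sum_sub_distrib]
  have h1 : ∑ v ∈ cls (E' ++ [e]) e.1,
      phi a0 f' (cls (E' ++ [e]) v) / ((cls (E' ++ [e]) v).card : ℝ)
        = phi a0 f' (cls (E' ++ [e]) e.1) := by
    rw [Finset.sum_congr rfl (fun v hv => by rw [cls_eq_of_mem hv])]
    exact sum_const_div _ _ ⟨e.1, self_mem_cls⟩
  have hdisj : Disjoint (cls E' e.1) (cls E' e.2) := cls_disj_of_not_sc hns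
  have h2 : ∑ v ∈ cls (E' ++ [e]) e.1, phi a0 f (cls E' v) / ((cls E' v).card : ℝ)
      = phi a0 f (cls E' e.1) + phi a0 f (cls E' e.2) := by
    rw [show cls (E' ++ [e]) e.1 = cls E' e.1 ∪ cls E' e.2 from cls_concat_union,
      Finset.sum_union hdisj]
    congr 1
    · rw [Finset.sum_congr rfl (fun v hv => by rw [cls_eq_of_mem hv])]
      exact sum_const_div _ _ ⟨e.1, self_mem_cls⟩
    · rw [Finset.sum_congr rfl (fun v hv => by rw [cls_eq_of_mem hv])]
      exact sum_const_div _ _ ⟨e.2, self_mem_cls⟩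
  rw [h1, h2]
  ring

lemma phi_parts (a0 f : Fin n → Fin 2) {S : Finset (Fin n)} {s : Fin 2}
    (hf : ∀ w ∈ S, f w = s) :
    phi a0 f S = phiR (min (cnt a0 s S) (cnt a0 (s + 1) S)) (cnt a0 (s + 1) S)
      (cnt a0 s S + cnt a0 (s + 1) S) := by
  rw [phi_eq_phiR, mS_eq_min a0 s S, disp_eq_cnt a0 f hf, ← card_eq_cnt_add_cnt]

/-! ### The main step analysis -/

lemma step_main (a0 f : Fin n → Fin 2) (E' : List (Fin n × Fin n)) (e : Fin n × Fin n)
    (hG1 : ∀ u v, sameComp E' u v → f u = f v)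
    (hG2 : ∀ v, 3 * dispS a0 f (cls E' v) ≤ 2 * (cls E' v).card) :
    (∀ u v, sameComp (E' ++ [e]) u v →
        mergeStep a0 f e (E' ++ [e]) u = mergeStep a0 f e (E' ++ [e]) v) ∧
    (∀ v, 3 * dispS a0 (mergeStep a0 f e (E' ++ [e])) (cls (E' ++ [e]) v)
        ≤ 2 * (cls (E' ++ [e]) v).card) ∧
    ((movesBetween f (mergeStep a0 f e (E' ++ [e])) : ℝ)
        ≤ Phi a0 (mergeStep a0 f e (E' ++ [e])) (E' ++ [e]) - Phi a0 f E') ∧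
    (f e.1 ≠ f e.2 → 1 ≤ movesBetween f (mergeStep a0 f e (E' ++ [e]))) := by
  classical
  set E := E' ++ [e] with hE
  by_cases hsc : sameComp E' e.1 e.2
  · -- the new edge is internal: nothing changes
    have hff : f e.1 = f e.2 := hG1 _ _ hsc
    have hf'eq : mergeStep a0 f e E = f := by unfold mergeStep; rw [if_pos hff]
    rw [hf'eq]
    have hclseq : ∀ v, cls E v = cls E' v := cls_concat_same hsc
    refine ⟨?_, ?_, ?_, ?_⟩
    · intro u v h
      exact hG1 u v ((sc_concat_same_iff hsc u v).1 h)
    · intro v; rw [hclseq v]; exact hG2 v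
    · have hPhiEq : Phi a0 f E = Phi a0 f E' := by
        unfold Phi
        exact Finset.sum_congr rfl (fun v _ => by rw [hclseq v])
      rw [hPhiEq]
      simp [movesBetween]
    · intro hne; exact absurd hff hne
  · -- a genuine merge of two distinct classes
    set C := cls E e.1 with hCdef
    set Cu := cls E' e.1 with hCudef
    set Cv := cls E' e.2 with hCvdef
    have hCuv : C = Cu ∪ Cv := cls_concat_union
    have hdisj : Disjoint Cu Cv := cls_disj_of_not_sc hsc
    have hCuC : ∀ x ∈ Cu, x ∈ C := fun x hx => by rw [hCuv]; exact Finset.mem_union_left _ hx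
    have hCvC : ∀ x ∈ Cv, x ∈ C := fun x hx => by rw [hCuv]; exact Finset.mem_union_right _ hx
    have hfCu : ∀ x ∈ Cu, f x = f e.1 := fun x hx => hG1 _ _ (mem_cls.1 hx)
    have hfCv : ∀ x ∈ Cv, f x = f e.2 := fun x hx => hG1 _ _ (mem_cls.1 hx)
    have hCune : Cu.Nonempty := ⟨e.1, self_mem_cls⟩
    have hCvne : Cv.Nonempty := ⟨e.2, self_mem_cls⟩
    by_cases hne : f e.1 = f e.2
    · -- same-server merge: no moves, potential superadditive
      have hf'eq : mergeStep a0 f e E = f := by unfold mergeStep; rw [if_pos hne]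
      rw [hf'eq]
      have hfC : ∀ x ∈ C, f x = f e.1 := by
        intro x hx
        rw [hCuv] at hx
        rcases Finset.mem_union.1 hx with hx | hx
        · exact hfCu x hx
        · rw [hfCv x hx, hne]
      refine ⟨?_, ?_, ?_, ?_⟩
      · intro u v h
        rcases sc_concat.1 h with h0 | ⟨h1, h2⟩ | ⟨h1, h2⟩
        · exact hG1 u v h0
        · rw [hG1 _ _ h1, ← hG1 _ _ h2, hne]
        · rw [hG1 _ _ h1, ← hG1 _ _ h2, hne]
      · intro v
        by_cases hv : v ∈ C
        · rw [show cls E v = C from cls_eq_of_mem hv, hCuv,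
            disp_union a0 f hdisj, Finset.card_union_of_disjoint hdisj]
          have h1 := hG2 e.1
          have h2 := hG2 e.2
          rw [← hCudef] at h1
          rw [← hCvdef] at h2
          omega
        · rw [cls_concat_out hv]
          exact hG2 v
      · have hPd := Phi_diff a0 f f E' e hsc (fun v _ => rfl)
        rw [← hE] at hPd
        have hW := W1R (cnt a0 (f e.1) Cu) (cnt a0 (f e.1 + 1) Cu)
          (cnt a0 (f e.1) Cv) (cnt a0 (f e.1 + 1) Cv)
          (by rw [← card_eq_cnt_add_cnt]; exact Finset.card_pos.2 hCune)
          (by rw [← card_eq_cnt_add_cnt]; exact Finset.card_pos.2 hCvne)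
        have hpu : phi a0 f Cu = phiR (min (cnt a0 (f e.1) Cu) (cnt a0 (f e.1 + 1) Cu))
            (cnt a0 (f e.1 + 1) Cu) (cnt a0 (f e.1) Cu + cnt a0 (f e.1 + 1) Cu) :=
          phi_parts a0 f hfCu
        have hpv : phi a0 f Cv = phiR (min (cnt a0 (f e.1) Cv) (cnt a0 (f e.1 + 1) Cv))
            (cnt a0 (f e.1 + 1) Cv) (cnt a0 (f e.1) Cv + cnt a0 (f e.1 + 1) Cv) :=
          phi_parts a0 f (fun x hx => by rw [hfCv x hx, hne])
        have hpc : phi a0 f C = phiR (min (cnt a0 (f e.1) Cu + cnt a0 (f e.1) Cv)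
            (cnt a0 (f e.1 + 1) Cu + cnt a0 (f e.1 + 1) Cv))
            (cnt a0 (f e.1 + 1) Cu + cnt a0 (f e.1 + 1) Cv)
            (cnt a0 (f e.1) Cu + cnt a0 (f e.1 + 1) Cu
              + (cnt a0 (f e.1) Cv + cnt a0 (f e.1 + 1) Cv)) := by
          rw [phi_parts a0 f hfC, hCuv, cnt_union a0 _ hdisj, cnt_union a0 _ hdisj]
          congr 1
          omega
        rw [show movesBetween f f = 0 by simp [movesBetween]]
        rw [hPd, hpu, hpv, hpc]
        push_cast
        linarith [hW]
      · intro hne'; exact absurd hne hne'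
    · -- cross merge
      have hs' : f e.2 = f e.1 + 1 := fin2_eq_succ_of_ne (f e.1) (f e.2) hne
      have hs'' : f e.2 + 1 = f e.1 := by rw [hs']; exact fin2_succ_succ (f e.1)
      set pp := cnt a0 (f e.1) Cu with hppdef
      set qq := cnt a0 (f e.2) Cu with hqqdef
      set rr := cnt a0 (f e.2) Cv with hrrdef
      set ww := cnt a0 (f e.1) Cv with hwwdef
      have hCufil : C.filter (fun x => f x = f e.1) = Cu := by
        ext x
        simp only [Finset.mem_filter]
        constructor
        · rintro ⟨hxC, hfx⟩
          rw [hCuv] at hxC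
          rcases Finset.mem_union.1 hxC with hx | hx
          · exact hx
          · exact absurd (hfx.symm.trans (hfCv x hx)) hne
        · intro hx; exact ⟨hCuC x hx, hfCu x hx⟩
      have hCvfil : C.filter (fun x => f x = f e.2) = Cv := by
        ext x
        simp only [Finset.mem_filter]
        constructor
        · rintro ⟨hxC, hfx⟩
          rw [hCuv] at hxC
          rcases Finset.mem_union.1 hxC with hx | hx
          · exact absurd ((hfCu x hx).symm.trans hfx) hne
          · exact hx
        · intro hx; exact ⟨hCvC x hx, hfCv x hx⟩
      have hcnt1 : cnt a0 (f e.1) C = pp + ww := by rw [hCuv, cnt_union a0 _ hdisj]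
      have hcnt2 : cnt a0 (f e.2) C = qq + rr := by rw [hCuv, cnt_union a0 _ hdisj]
      have hcardCu : Cu.card = pp + qq := by
        rw [card_eq_cnt_add_cnt a0 (f e.1) Cu, ← hs']
      have hcardCv : Cv.card = rr + ww := by
        rw [card_eq_cnt_add_cnt a0 (f e.2) Cv, hs'']
      have hcardC : C.card = pp + qq + (rr + ww) := by
        rw [hCuv, Finset.card_union_of_disjoint hdisj, hcardCu, hcardCv]
      have hp1 : 1 ≤ pp + qq := by rw [← hcardCu]; exact Finset.card_pos.2 hCune
      have hq1 : 1 ≤ rr + ww := by rw [← hcardCv]; exact Finset.card_pos.2 hCvne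
      have hG2u : qq ≤ 2 * pp := by
        have h1 := hG2 e.1
        rw [← hCudef, disp_eq_cnt a0 f hfCu, ← hs', hcardCu] at h1
        omega
      have hG2v : ww ≤ 2 * rr := by
        have h1 := hG2 e.2
        rw [← hCvdef, disp_eq_cnt a0 f hfCv, hs'', hcardCv] at h1
        omega
      have hf'def : mergeStep a0 f e E
          = fun x => if x ∈ C then target a0 f e E else f x := by
        unfold mergeStep; rw [if_neg hne]
      set tgt := target a0 f e E with htgtdef
      have htgt : tgt = (if 2 * (pp + ww) ≤ qq + rr then f e.2
          else if 2 * (qq + rr) ≤ pp + ww then f e.1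
          else if 2 * rr + qq ≤ 2 * pp + ww then f e.1 else f e.2) := by
        rw [htgtdef]
        unfold target
        rw [← hCdef, hCufil, hCvfil, hcnt1, hcnt2]
      have htgtcases : tgt = f e.1 ∨ tgt = f e.2 := by
        rw [htgt]
        split_ifs <;> simp
      have hf'C : ∀ x ∈ C, mergeStep a0 f e E x = tgt := by
        intro x hx; rw [hf'def]; simp only [if_pos hx]
      have hf'out : ∀ x, x ∉ C → mergeStep a0 f e E x = f x := by
        intro x hx; rw [hf'def]; simp only [if_neg hx]
      -- G1
      have hG1' : ∀ u v, sameComp E u v → mergeStep a0 f e E u = mergeStep a0 f e E v := by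
        intro u v h
        by_cases hu : u ∈ C
        · have hv : v ∈ C := mem_cls.2 (sc_trans (sc_symm h) (mem_cls.1 hu))
          rw [hf'C u hu, hf'C v hv]
        · have hv : v ∉ C := fun hv => hu (mem_cls.2 (sc_trans h (mem_cls.1 hv)))
          rw [hf'out u hu, hf'out v hv]
          apply hG1
          rcases sc_concat.1 h with h0 | ⟨h1, _⟩ | ⟨h1, _⟩
          · exact h0
          · exact absurd (hCuC u (mem_cls.2 h1)) hu
          · exact absurd (hCvC u (mem_cls.2 h1)) hu
      -- the moved set
      have hmovedCu : tgt = f e.2 →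
          Finset.univ.filter (fun v => f v ≠ mergeStep a0 f e E v) = Cu := by
        intro ht
        ext x
        simp only [Finset.mem_filter, Finset.mem_univ, true_and]
        by_cases hx : x ∈ C
        · rw [hf'C x hx, ht]
          constructor
          · intro hfx
            rw [← hCufil]
            refine Finset.mem_filter.2 ⟨hx, ?_⟩
            rcases fin2_cases (f e.1) (f x) with h | h
            · exact h
            · rw [← hs'] at h; exact absurd h hfx
          · intro hxCu
            rw [hfCu x hxCu]
            exact hne
        · rw [hf'out x hx]
          constructor
          · intro h; exact absurd rfl h
          · intro hxCu; exact absurd (hCuC x hxCu) hx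
      have hmovedCv : tgt = f e.1 →
          Finset.univ.filter (fun v => f v ≠ mergeStep a0 f e E v) = Cv := by
        intro ht
        ext x
        simp only [Finset.mem_filter, Finset.mem_univ, true_and]
        by_cases hx : x ∈ C
        · rw [hf'C x hx, ht]
          constructor
          · intro hfx
            rw [← hCvfil]
            refine Finset.mem_filter.2 ⟨hx, ?_⟩
            rcases fin2_cases (f e.1) (f x) with h | h
            · exact absurd h hfx
            · rw [← hs'] at h; exact h
          · intro hxCv
            rw [hfCv x hxCv]
            exact fun hh => hne hh.symm
        · rw [hf'out x hx]
          constructor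
          · intro h; exact absurd rfl h
          · intro hxCv; exact absurd (hCvC x hxCv) hx
      -- G2
      have hG2' : ∀ v, 3 * dispS a0 (mergeStep a0 f e E) (cls E v) ≤ 2 * (cls E v).card := by
        intro v
        by_cases hv : v ∈ C
        · rw [show cls E v = C from cls_eq_of_mem hv]
          have hdc : dispS a0 (mergeStep a0 f e E) C = cnt a0 (tgt + 1) C :=
            disp_eq_cnt a0 _ hf'C
          rw [hdc, hcardC]
          rcases htgtcases with ht | ht
          · rw [ht, ← hs', hcnt2]
            have : tgt = f e.1 := ht
            rw [htgt] at this
            split_ifs at this with hb1 hb2 hb3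
            · exact absurd this.symm hne
            · omega
            · omega
            · exact absurd this.symm hne
          · rw [ht, hs'', hcnt1]
            have : tgt = f e.2 := ht
            rw [htgt] at this
            split_ifs at this with hb1 hb2 hb3
            · omega
            · exact absurd this hne
            · exact absurd this hne
            · omega
        · rw [cls_concat_out hv]
          have hd : dispS a0 (mergeStep a0 f e E) (cls E' v) = dispS a0 f (cls E' v) :=
            dispS_congr fun x hx => (hf'out x (cls_out_disj hv hx))
          rw [hd]
          exact hG2 v
      -- potential inequality
      have hPd := Phi_diff a0 f (mergeStep a0 f e E) E' e hsc hf'out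
      rw [← hE] at hPd
      have hpu : phi a0 f Cu = phiR (min pp qq) qq (pp + qq) := by
        rw [phi_parts a0 f hfCu, ← hs']
      have hpv : phi a0 f Cv = phiR (min rr ww) ww (rr + ww) := by
        rw [phi_parts a0 f hfCv, hs'']
      have hPhiIneq : (movesBetween f (mergeStep a0 f e E) : ℝ)
          ≤ Phi a0 (mergeStep a0 f e E) E - Phi a0 f E' := by
        rw [hPd, ← hCdef, ← hCudef, ← hCvdef, hpu, hpv]
        by_cases hb1 : 2 * (pp + ww) ≤ qq + rr
        · -- forced flip: Cu moves to the server of Cv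
          have ht : tgt = f e.2 := by rw [htgt, if_pos hb1]
          have hmb : movesBetween f (mergeStep a0 f e E) = pp + qq := by
            unfold movesBetween
            rw [hmovedCu ht, hcardCu]
          have hpc : phi a0 (mergeStep a0 f e E) C
              = phiR (min (qq + rr) (pp + ww)) (pp + ww) (qq + rr + (pp + ww)) := by
            rw [hppdef, hqqdef, hrrdef, hwwdef, ← hcnt1, ← hcnt2,
              phi_parts a0 _ (fun x hx => by rw [hf'C x hx, ht]), hs'']
          have hW := W2R pp qq rr ww hG2u hb1 hp1 hq1
          have harg : phiR (min (pp + ww) (qq + rr)) (pp + ww) (pp + qq + (rr + ww))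
              = phiR (min (qq + rr) (pp + ww)) (pp + ww) (qq + rr + (pp + ww)) := by
            rw [show min (pp + ww) (qq + rr) = min (qq + rr) (pp + ww) by omega,
              show pp + qq + (rr + ww) = qq + rr + (pp + ww) by omega]
          rw [harg] at hW
          rw [hpc, hmb]
          push_cast at hW ⊢
          linarith [hW]
        · by_cases hb2 : 2 * (qq + rr) ≤ pp + ww
          · -- forced flip: Cv moves to the server of Cu
            have ht : tgt = f e.1 := by rw [htgt, if_neg hb1, if_pos hb2]
            have hmb : movesBetween f (mergeStep a0 f e E) = rr + ww := by
              unfold movesBetween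
              rw [hmovedCv ht, hcardCv]
            have hpc : phi a0 (mergeStep a0 f e E) C
                = phiR (min (pp + ww) (qq + rr)) (qq + rr) (pp + ww + (qq + rr)) := by
              rw [hppdef, hqqdef, hrrdef, hwwdef, ← hcnt1, ← hcnt2,
                phi_parts a0 _ (fun x hx => by rw [hf'C x hx, ht]), ← hs']
            have hW := W2R rr ww pp qq hG2v (by omega) hq1 hp1
            have harg : phiR (min (rr + qq) (ww + pp)) (rr + qq) (rr + ww + (pp + qq))
                = phiR (min (pp + ww) (qq + rr)) (qq + rr) (pp + ww + (qq + rr)) := by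
              rw [show min (rr + qq) (ww + pp) = min (pp + ww) (qq + rr) by omega,
                show rr + qq = qq + rr by omega,
                show rr + ww + (pp + qq) = pp + ww + (qq + rr) by omega]
            rw [harg] at hW
            rw [hpc, hmb]
            push_cast at hW ⊢
            linarith [hW]
          · by_cases hb3 : 2 * rr + qq ≤ 2 * pp + ww
            · -- middle zone, Cv moves
              have ht : tgt = f e.1 := by rw [htgt, if_neg hb1, if_neg hb2, if_pos hb3]
              have hmb : movesBetween f (mergeStep a0 f e E) = rr + ww := by
                unfold movesBetween
                rw [hmovedCv ht, hcardCv]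
              have hpc : phi a0 (mergeStep a0 f e E) C
                  = phiR (min (pp + ww) (qq + rr)) (qq + rr) (pp + ww + (qq + rr)) := by
                rw [hppdef, hqqdef, hrrdef, hwwdef, ← hcnt1, ← hcnt2,
                  phi_parts a0 _ (fun x hx => by rw [hf'C x hx, ht]), ← hs']
              have hW := W3R rr ww pp qq hG2v hG2u (by omega) (by omega) hb3 hq1 hp1
              have harg : phiR (min (rr + qq) (ww + pp)) (rr + qq) (rr + ww + (pp + qq))
                  = phiR (min (pp + ww) (qq + rr)) (qq + rr) (pp + ww + (qq + rr)) := by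
                rw [show min (rr + qq) (ww + pp) = min (pp + ww) (qq + rr) by omega,
                  show rr + qq = qq + rr by omega,
                  show rr + ww + (pp + qq) = pp + ww + (qq + rr) by omega]
              rw [harg] at hW
              rw [hpc, hmb]
              push_cast at hW ⊢
              linarith [hW]
            · -- middle zone, Cu moves
              have ht : tgt = f e.2 := by rw [htgt, if_neg hb1, if_neg hb2, if_neg hb3]
              have hmb : movesBetween f (mergeStep a0 f e E) = pp + qq := by
                unfold movesBetween
                rw [hmovedCu ht, hcardCu]
              have hpc : phi a0 (mergeStep a0 f e E) C
                  = phiR (min (qq + rr) (pp + ww)) (pp + ww) (qq + rr + (pp + ww)) := by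
                rw [hppdef, hqqdef, hrrdef, hwwdef, ← hcnt1, ← hcnt2,
                  phi_parts a0 _ (fun x hx => by rw [hf'C x hx, ht]), hs'']
              have hW := W3R pp qq rr ww hG2u hG2v (by omega) (by omega) (by omega) hp1 hq1
              have harg : phiR (min (pp + ww) (qq + rr)) (pp + ww) (pp + qq + (rr + ww))
                  = phiR (min (qq + rr) (pp + ww)) (pp + ww) (qq + rr + (pp + ww)) := by
                rw [show min (pp + ww) (qq + rr) = min (qq + rr) (pp + ww) by omega,
                  show pp + qq + (rr + ww) = qq + rr + (pp + ww) by omega]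
              rw [harg] at hW
              rw [hpc, hmb]
              push_cast at hW ⊢
              linarith [hW]
      exact ⟨hG1', hG2', hPhiIneq, fun _ => by
        rcases htgtcases with ht | ht
        · have := hmovedCv ht
          unfold movesBetween
          rw [this, hcardCv]
          omega
        · have := hmovedCu ht
          unfold movesBetween
          rw [this, hcardCu]
          omega⟩

lemma div_le_div_same' {a b c : ℝ} (h : a ≤ b) (hc : 0 ≤ c) : a / c ≤ b / c := by
  rw [div_eq_mul_inv, div_eq_mul_inv]
  exact mul_le_mul_of_nonneg_right h (inv_nonneg.2 hc)

/-! ### Global bounds from the invariants -/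

section Global

variable {a0 truth f : Fin n → Fin 2} {E : List (Fin n × Fin n)}

/-- Per-class displacement is at most twice the class minority. -/
lemma disp_le_two_m (hG1 : ∀ u v, sameComp E u v → f u = f v)
    (hG2 : ∀ v, 3 * dispS a0 f (cls E v) ≤ 2 * (cls E v).card) (v : Fin n) :
    dispS a0 f (cls E v) ≤ 2 * mS a0 (cls E v) := by
  have hconst : ∀ w ∈ cls E v, f w = f v := by
    intro w hw
    exact hG1 w v (mem_cls.1 hw)
  have hd : dispS a0 f (cls E v) = cnt a0 (f v + 1) (cls E v) := disp_eq_cnt a0 f hconst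
  have hcard := card_eq_cnt_add_cnt a0 (f v) (cls E v)
  have h2 := hG2 v
  have hm := mS_eq_min a0 (f v) (cls E v)
  omega

/-- Sum over the classes inside a truth class of the class minorities. -/
lemma sum_m_le (htr : ∀ u v, sameComp E u v → truth u = truth v) (j : Fin 2) :
    ∑ v ∈ Finset.univ.filter (fun v => truth v = j),
        (mS a0 (cls E v) : ℝ) / (cls E v).card
      ≤ mS a0 (Finset.univ.filter (fun v => truth v = j)) := by
  set T := Finset.univ.filter (fun v => truth v = j) with hT
  have hTcl : ∀ v ∈ T, cls E v ⊆ T := by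
    intro v hv w hw
    simp only [hT, Finset.mem_filter, Finset.mem_univ, true_and] at hv ⊢
    rw [htr w v (mem_cls.1 hw)]
    exact hv
  have hpt : ∀ (i : Fin 2), ∑ v ∈ T, (mS a0 (cls E v) : ℝ) / (cls E v).card
      ≤ cnt a0 i T := by
    intro i
    have heq := card_filter_sum_classes E T hTcl (fun w => a0 w = i)
    have hle : ∑ v ∈ T, (mS a0 (cls E v) : ℝ) / (cls E v).card
        ≤ ∑ v ∈ T, (((cls E v).filter fun w => a0 w = i).card : ℝ) / (cls E v).card := by
      apply Finset.sum_le_sum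
      intro v _
      apply div_le_div_same' ?_ (by positivity)
      exact_mod_cast mS_le_cnt a0 i (cls E v)
    have hcntT : ((T.filter fun w => a0 w = i).card : ℝ) = (cnt a0 i T : ℝ) := by
      unfold cnt
      norm_num
    calc ∑ v ∈ T, (mS a0 (cls E v) : ℝ) / (cls E v).card
        ≤ _ := hle
      _ = ((T.filter fun w => a0 w = i).card : ℝ) := heq.symm
      _ = (cnt a0 i T : ℝ) := hcntT
  have h0 := hpt 0
  have h1 := hpt 1
  have : (mS a0 T : ℝ) = min ((cnt a0 0 T : ℝ)) ((cnt a0 1 T : ℝ)) := by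
    unfold mS
    push_cast
    rfl
  rw [this]
  exact le_min h0 h1

lemma univ_split_truth (g : Fin n → ℝ) :
    ∑ v, g v = ∑ v ∈ Finset.univ.filter (fun v => truth v = 0), g v
      + ∑ v ∈ Finset.univ.filter (fun v => truth v = 1), g v := by
  rw [← Finset.sum_filter_add_sum_filter_not Finset.univ (fun v => truth v = 0) g]
  congr 1
  apply Finset.sum_congr ?_ (fun _ _ => rfl)
  apply Finset.filter_congr
  intro v _
  constructor
  · intro h; exact fin2_eq_succ_of_ne 0 (truth v) (fun hh => h hh.symm)
  · intro h; rw [h]; exact fin2_succ_ne 0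

/-- Total sum of class minorities is at most `mS V₀ + mS V₁`. -/
lemma sum_m_total (htr : ∀ u v, sameComp E u v → truth u = truth v) :
    ∑ v, (mS a0 (cls E v) : ℝ) / (cls E v).card
      ≤ mS a0 (Finset.univ.filter (fun v => truth v = 0))
        + mS a0 (Finset.univ.filter (fun v => truth v = 1)) := by
  rw [univ_split_truth (truth := truth)]
  exact add_le_add (sum_m_le htr 0) (sum_m_le htr 1)

/-- Total displacement bound. -/
lemma disp_total_le (htr : ∀ u v, sameComp E u v → truth u = truth v)
    (hG1 : ∀ u v, sameComp E u v → f u = f v)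
    (hG2 : ∀ v, 3 * dispS a0 f (cls E v) ≤ 2 * (cls E v).card) :
    ((Finset.univ.filter fun v => a0 v ≠ f v).card : ℝ)
      ≤ 2 * (mS a0 (Finset.univ.filter (fun v => truth v = 0))
        + mS a0 (Finset.univ.filter (fun v => truth v = 1))) := by
  have hid := card_filter_sum_classes E Finset.univ
    (fun v _ => Finset.subset_univ _) (fun w => a0 w ≠ f w)
  rw [hid]
  have hpt : ∀ v, (((cls E v).filter fun w => a0 w ≠ f w).card : ℝ) / (cls E v).card
      ≤ 2 * ((mS a0 (cls E v) : ℝ) / (cls E v).card) := by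
    intro v
    rw [← mul_div_assoc]
    apply div_le_div_same' ?_ (by positivity)
    exact_mod_cast disp_le_two_m hG1 hG2 v
  calc ∑ v, (((cls E v).filter fun w => a0 w ≠ f w).card : ℝ) / (cls E v).card
      ≤ ∑ v, 2 * ((mS a0 (cls E v) : ℝ) / (cls E v).card) := Finset.sum_le_sum (fun v _ => hpt v)
    _ = 2 * ∑ v, (mS a0 (cls E v) : ℝ) / (cls E v).card := by rw [Finset.mul_sum]
    _ ≤ _ := by
        have := sum_m_total (a0 := a0) htr
        linarith

/-- Load bound for an assignment satisfying the invariants. -/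
lemma load_le (htr : ∀ u v, sameComp E u v → truth u = truth v)
    (hG1 : ∀ u v, sameComp E u v → f u = f v)
    (hG2 : ∀ v, 3 * dispS a0 f (cls E v) ≤ 2 * (cls E v).card)
    {D : ℕ}
    (hD : mS a0 (Finset.univ.filter (fun v => truth v = 0))
        + mS a0 (Finset.univ.filter (fun v => truth v = 1)) ≤ 2 * D)
    (j : Fin 2) :
    (Finset.univ.filter fun v => f v = j).card
      ≤ (Finset.univ.filter fun v => a0 v = j).card + 4 * D := by
  have hsub : (Finset.univ.filter fun v => f v = j)
      ⊆ (Finset.univ.filter fun v => a0 v = j) ∪ (Finset.univ.filter fun v => a0 v ≠ f v) := by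
    intro v hv
    simp only [Finset.mem_filter, Finset.mem_univ, true_and, Finset.mem_union] at hv ⊢
    by_cases h : a0 v = j
    · exact Or.inl h
    · exact Or.inr (fun hh => h (by rw [hh, hv]))
  have h1 := Finset.card_le_card hsub
  have h2 := Finset.card_union_le (Finset.univ.filter fun v => a0 v = j)
    (Finset.univ.filter fun v => a0 v ≠ f v)
  have h3 : ((Finset.univ.filter fun v => a0 v ≠ f v).card : ℝ) ≤ 4 * D := by
    calc ((Finset.univ.filter fun v => a0 v ≠ f v).card : ℝ)
        ≤ 2 * (mS a0 (Finset.univ.filter (fun v => truth v = 0))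
          + mS a0 (Finset.univ.filter (fun v => truth v = 1))) := disp_total_le htr hG1 hG2
      _ ≤ 2 * (2 * (D : ℝ)) := by
          have : (mS a0 (Finset.univ.filter (fun v => truth v = 0)) : ℝ)
              + mS a0 (Finset.univ.filter (fun v => truth v = 1)) ≤ 2 * D := by
            exact_mod_cast hD
          linarith
      _ = 4 * D := by ring
  have h4 : (Finset.univ.filter fun v => a0 v ≠ f v).card ≤ 4 * D := by exact_mod_cast h3
  omega

/-- The potential bound. -/
lemma Phi_le (htr : ∀ u v, sameComp E u v → truth u = truth v)
    {D : ℕ}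
    (hD : mS a0 (Finset.univ.filter (fun v => truth v = 0))
        + mS a0 (Finset.univ.filter (fun v => truth v = 1)) ≤ 2 * D) :
    Phi a0 f E ≤ 72 * D * (1 + Real.logb 2 n) := by
  have hlog1 : (1 : ℝ) ≤ 1 + Real.logb 2 n ∨ n = 0 := by
    rcases Nat.eq_zero_or_pos n with h | h
    · exact Or.inr h
    · left
      have : (0:ℝ) ≤ Real.logb 2 n := Real.logb_nonneg (by norm_num) (by exact_mod_cast h)
      linarith
  rcases hlog1 with hlog1 | hn0
  swap
  · -- n = 0 : empty sums
    subst hn0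
    unfold Phi
    rw [show (Finset.univ : Finset (Fin 0)) = ∅ from rfl, Finset.sum_empty]
    simp only [Nat.cast_zero, Real.logb_zero]
    positivity
  · have hpt : ∀ v : Fin n, phi a0 f (cls E v) / ((cls E v).card : ℝ)
        ≤ 36 * (1 + Real.logb 2 n) * ((mS a0 (cls E v) : ℝ) / (cls E v).card) := by
      intro v
      rw [← mul_div_assoc]
      apply div_le_div_same' ?_ (by positivity)
      have hcard1 : 1 ≤ (cls E v).card := cls_card_pos E v
      have hcardn : (cls E v).card ≤ n := by
        have h := Finset.card_le_card (Finset.subset_univ (cls E v))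
        simpa using h
      have hL : Real.logb 2 (2 * (cls E v).card) ≤ 1 + Real.logb 2 n := by
        have h1 : Real.logb 2 (2 * (cls E v).card) ≤ Real.logb 2 (2 * n) := Lmono hcardn
        have h2 : Real.logb 2 (2 * (n:ℝ)) = 1 + Real.logb 2 n := by
          rw [Real.logb_mul (by norm_num) (by
            have : (1:ℝ) ≤ n := by exact_mod_cast le_trans hcard1 hcardn
            linarith)]
          simp
        rw [← h2]
        exact_mod_cast h1
      have hm0 : (0:ℝ) ≤ (mS a0 (cls E v) : ℝ) := by positivity
      have hdisp0 : (0:ℝ) ≤ (dispS a0 f (cls E v) : ℝ) := by positivity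
      unfold phi
      nlinarith [mul_le_mul_of_nonneg_left hL hm0]
    calc Phi a0 f E ≤ ∑ v, 36 * (1 + Real.logb 2 n) * ((mS a0 (cls E v) : ℝ) / (cls E v).card) :=
          Finset.sum_le_sum (fun v _ => hpt v)
      _ = 36 * (1 + Real.logb 2 n) * ∑ v, ((mS a0 (cls E v) : ℝ) / (cls E v).card) := by
          rw [Finset.mul_sum]
      _ ≤ 36 * (1 + Real.logb 2 n) * (2 * D) := by
          apply mul_le_mul_of_nonneg_left ?_ (by positivity)
          calc ∑ v, ((mS a0 (cls E v) : ℝ) / (cls E v).card) ≤ _ := sum_m_total htr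
          _ ≤ (2 * D : ℝ) := by exact_mod_cast hD
      _ = 72 * D * (1 + Real.logb 2 n) := by ring

end Global

/-! ### Completion lemmas -/

section Completion

variable {a0 truth f : Fin n → Fin 2} {E : List (Fin n × Fin n)}

lemma cls_eq_truth (htr : ∀ u v, sameComp E u v → truth u = truth v)
    (hts : ∀ j, (Finset.univ.filter fun w => truth w = j).card = n / 2)
    (hcomp : complete E) (v : Fin n) :
    cls E v = Finset.univ.filter (fun w => truth w = truth v) := by
  apply Finset.eq_of_subset_of_card_le
  · intro w hw
    simp only [Finset.mem_filter, Finset.mem_univ, true_and]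
    exact htr w v (mem_cls.1 hw)
  · rw [hts (truth v), hcomp v]

lemma sc_iff_truth (htr : ∀ u v, sameComp E u v → truth u = truth v)
    (hts : ∀ j, (Finset.univ.filter fun w => truth w = j).card = n / 2)
    (hcomp : complete E) (u v : Fin n) :
    sameComp E u v ↔ truth u = truth v := by
  constructor
  · exact htr u v
  · intro h
    have : u ∈ cls E v := by
      rw [cls_eq_truth htr hts hcomp v]
      simp only [Finset.mem_filter, Finset.mem_univ, true_and]
      exact h
    exact mem_cls.1 this

lemma Fst_cons (hE : E ≠ []) :
    Fst a0 E = fun v =>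
      if sameComp E v (E.head hE).1 then maj a0 (cls E (E.head hE).1)
      else maj a0 (cls E (E.head hE).1) + 1 := by
  cases E with
  | nil => exact absurd rfl hE
  | cons e E'' => rfl

/-- Value description of `Fst` on a complete prefix. -/
lemma Fst_val (htr : ∀ u v, sameComp E u v → truth u = truth v)
    (hts : ∀ j, (Finset.univ.filter fun w => truth w = j).card = n / 2)
    (hcomp : complete E) (hE : E ≠ []) (v : Fin n) :
    Fst a0 E v =
      if truth v = truth (E.head hE).1
      then maj a0 (Finset.univ.filter (fun w => truth w = truth (E.head hE).1))
      else maj a0 (Finset.univ.filter (fun w => truth w = truth (E.head hE).1)) + 1 := by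
  simp only [Fst_cons hE]
  have hcls : cls E (E.head hE).1
      = Finset.univ.filter (fun w => truth w = truth (E.head hE).1) :=
    cls_eq_truth htr hts hcomp _
  by_cases h : truth v = truth (E.head hE).1
  · rw [if_pos ((sc_iff_truth htr hts hcomp _ _).2 h), if_pos h, hcls]
  · rw [if_neg (fun hh => h (htr _ _ hh)), if_neg h, hcls]

lemma maj_mis (S : Finset (Fin n)) : cnt a0 (maj a0 S + 1) S = mS a0 S := by
  unfold maj mS
  split_ifs with h
  · rw [show ((0:Fin 2) + 1) = 1 from rfl]
    omega
  · rw [show ((1:Fin 2) + 1) = 0 from rfl]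
    omega

end Completion

section Completion2

variable {a0 truth f : Fin n → Fin 2} {E : List (Fin n × Fin n)}

lemma filter_split_truth (truth : Fin n → Fin 2) (t0 : Fin 2) (p : Fin n → Prop)
    [DecidablePred p] :
    (Finset.univ.filter p).card
      = ((Finset.univ.filter fun w => truth w = t0).filter p).card
        + ((Finset.univ.filter fun w => truth w = t0 + 1).filter p).card := by
  have hdisj : Disjoint ((Finset.univ.filter fun w => truth w = t0).filter p)
      ((Finset.univ.filter fun w => truth w = t0 + 1).filter p) := by
    rw [Finset.disjoint_left]
    intro w hw1 hw2
    simp only [Finset.mem_filter, Finset.mem_univ, true_and] at hw1 hw2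
    exact fin2_succ_ne t0 ((hw1.1.symm.trans hw2.1).symm)
  have hunion : Finset.univ.filter p
      = ((Finset.univ.filter fun w => truth w = t0).filter p)
        ∪ ((Finset.univ.filter fun w => truth w = t0 + 1).filter p) := by
    ext w
    simp only [Finset.mem_filter, Finset.mem_univ, true_and, Finset.mem_union]
    rcases fin2_cases t0 (truth w) with h | h
    · tauto
    · tauto
  rw [hunion, Finset.card_union_of_disjoint hdisj]

lemma cnt_split_init (truth : Fin n → Fin 2)
    (his : ∀ j, (Finset.univ.filter fun w => a0 w = j).card = n / 2) (t0 j : Fin 2) :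
    cnt a0 j (Finset.univ.filter fun w => truth w = t0)
      + cnt a0 j (Finset.univ.filter fun w => truth w = t0 + 1) = n / 2 := by
  have := filter_split_truth truth t0 (fun w => a0 w = j)
  rw [his j] at this
  exact this.symm

lemma maj_mis_other (truth : Fin n → Fin 2)
    (his : ∀ j, (Finset.univ.filter fun w => a0 w = j).card = n / 2) (t0 : Fin 2) :
    cnt a0 (maj a0 (Finset.univ.filter fun w => truth w = t0))
        (Finset.univ.filter fun w => truth w = t0 + 1)
      = mS a0 (Finset.univ.filter fun w => truth w = t0 + 1) := by
  have h0 := cnt_split_init truth his t0 0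
  have h1 := cnt_split_init truth his t0 1
  unfold maj mS
  split_ifs with h <;> omega

/-- On a complete prefix, the canonical assignment displaces exactly the two minorities. -/
lemma Fst_disp (htr : ∀ u v, sameComp E u v → truth u = truth v)
    (hts : ∀ j, (Finset.univ.filter fun w => truth w = j).card = n / 2)
    (his : ∀ j, (Finset.univ.filter fun w => a0 w = j).card = n / 2)
    (hcomp : complete E) (hE : E ≠ []) :
    ((Finset.univ.filter fun v => a0 v ≠ Fst a0 E v).card : ℕ)
      = mS a0 (Finset.univ.filter fun w => truth w = truth (E.head hE).1)
        + mS a0 (Finset.univ.filter fun w => truth w = truth (E.head hE).1 + 1) := by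
  set t0 := truth (E.head hE).1 with ht0
  set m := maj a0 (Finset.univ.filter fun w => truth w = t0) with hm
  have hsplit := filter_split_truth truth t0 (fun v => a0 v ≠ Fst a0 E v)
  rw [hsplit]
  congr 1
  · have hfil : (Finset.univ.filter fun w => truth w = t0).filter (fun v => a0 v ≠ Fst a0 E v)
        = (Finset.univ.filter fun w => truth w = t0).filter (fun v => a0 v = m + 1) := by
      apply Finset.filter_congr
      intro w hw
      simp only [Finset.mem_filter, Finset.mem_univ, true_and] at hw
      rw [Fst_val htr hts hcomp hE w, if_pos hw]
      exact fin2_ne_iff m (a0 w)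
    rw [hfil]
    exact maj_mis _
  · have hfil : (Finset.univ.filter fun w => truth w = t0 + 1).filter (fun v => a0 v ≠ Fst a0 E v)
        = (Finset.univ.filter fun w => truth w = t0 + 1).filter (fun v => a0 v = m) := by
      apply Finset.filter_congr
      intro w hw
      simp only [Finset.mem_filter, Finset.mem_univ, true_and] at hw
      have hne : ¬ truth w = t0 := by rw [hw]; exact fin2_succ_ne t0
      rw [Fst_val htr hts hcomp hE w, if_neg hne]
      have h1 := fin2_ne_iff (m + 1) (a0 w)
      rw [fin2_succ_succ m] at h1
      exact h1
    rw [hfil]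
    exact maj_mis_other truth his t0

/-- `Fst` is constant on classes. -/
lemma Fst_G1 (htr : ∀ u v, sameComp E u v → truth u = truth v)
    (hts : ∀ j, (Finset.univ.filter fun w => truth w = j).card = n / 2)
    (hcomp : complete E) (hE : E ≠ []) :
    ∀ u v, sameComp E u v → Fst a0 E u = Fst a0 E v := by
  intro u v h
  rw [Fst_val htr hts hcomp hE u, Fst_val htr hts hcomp hE v, htr u v h]

/-- `Fst` satisfies the hysteresis invariant. -/
lemma Fst_G2 (htr : ∀ u v, sameComp E u v → truth u = truth v)
    (hts : ∀ j, (Finset.univ.filter fun w => truth w = j).card = n / 2)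
    (his : ∀ j, (Finset.univ.filter fun w => a0 w = j).card = n / 2)
    (hcomp : complete E) (hE : E ≠ []) :
    ∀ v, 3 * dispS a0 (Fst a0 E) (cls E v) ≤ 2 * (cls E v).card := by
  intro v
  set t0 := truth (E.head hE).1 with ht0
  set m := maj a0 (Finset.univ.filter fun w => truth w = t0) with hm
  rw [cls_eq_truth htr hts hcomp v]
  by_cases hv : truth v = t0
  · rw [hv]
    have hconst : ∀ w ∈ (Finset.univ.filter fun w => truth w = t0), Fst a0 E w = m := by
      intro w hw
      simp only [Finset.mem_filter, Finset.mem_univ, true_and] at hw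
      rw [Fst_val htr hts hcomp hE w, if_pos hw]
    rw [disp_eq_cnt a0 _ hconst, maj_mis]
    have hcard := card_eq_cnt_add_cnt a0 0 (Finset.univ.filter fun w => truth w = t0)
    rw [show ((0 : Fin 2) + 1) = 1 from rfl] at hcard
    unfold mS
    omega
  · have hv1 : truth v = t0 + 1 := by
      rcases fin2_cases t0 (truth v) with h | h
      · exact absurd h hv
      · exact h
    rw [hv1]
    have hconst : ∀ w ∈ (Finset.univ.filter fun w => truth w = t0 + 1),
        Fst a0 E w = m + 1 := by
      intro w hw
      simp only [Finset.mem_filter, Finset.mem_univ, true_and] at hw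
      have hne : ¬ truth w = t0 := by rw [hw]; exact fin2_succ_ne t0
      rw [Fst_val htr hts hcomp hE w, if_neg hne]
    rw [disp_eq_cnt a0 _ hconst, fin2_succ_succ m, maj_mis_other truth his t0]
    have hcard := card_eq_cnt_add_cnt a0 0 (Finset.univ.filter fun w => truth w = t0 + 1)
    rw [show ((0 : Fin 2) + 1) = 1 from rfl] at hcard
    unfold mS
    omega

/-- `Fst` has perfectly balanced loads. -/
lemma Fst_load (htr : ∀ u v, sameComp E u v → truth u = truth v)
    (hts : ∀ j, (Finset.univ.filter fun w => truth w = j).card = n / 2)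
    (hcomp : complete E) (hE : E ≠ []) (j : Fin 2) :
    (Finset.univ.filter fun v => Fst a0 E v = j).card = n / 2 := by
  set t0 := truth (E.head hE).1 with ht0
  set m := maj a0 (Finset.univ.filter fun w => truth w = t0) with hm
  rcases fin2_cases m j with hj | hj
  · have : (Finset.univ.filter fun v => Fst a0 E v = j)
        = Finset.univ.filter fun w => truth w = t0 := by
      ext w
      simp only [Finset.mem_filter, Finset.mem_univ, true_and]
      rw [Fst_val htr hts hcomp hE w, hj]
      by_cases h : truth w = t0
      · rw [if_pos h]; simp [h]; rfl
      · rw [if_neg h]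
        constructor
        · intro hh; exact absurd hh (fin2_succ_ne m)
        · intro hh; exact absurd hh h
    rw [this]; exact hts t0
  · have : (Finset.univ.filter fun v => Fst a0 E v = j)
        = Finset.univ.filter fun w => truth w = t0 + 1 := by
      ext w
      simp only [Finset.mem_filter, Finset.mem_univ, true_and]
      rw [Fst_val htr hts hcomp hE w, hj]
      by_cases h : truth w = t0
      · rw [if_pos h]
        constructor
        · intro hh; exact absurd hh.symm (fin2_succ_ne m)
        · intro hh; rw [h] at hh; exact absurd hh.symm (fin2_succ_ne t0)
      · rw [if_neg h]
        refine iff_of_true rfl ?_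
        rcases fin2_cases t0 (truth w) with h2 | h2
        · exact absurd h2 h
        · exact h2
    rw [this]; exact hts (t0 + 1)

/-- `Fst` is a perfect partitioning. -/
lemma Fst_perfect (htr : ∀ u v, sameComp E u v → truth u = truth v)
    (hts : ∀ j, (Finset.univ.filter fun w => truth w = j).card = n / 2)
    (hcomp : complete E) (hE : E ≠ []) :
    ∀ u v, (Fst a0 E u = Fst a0 E v ↔ truth u = truth v) := by
  intro u v
  set t0 := truth (E.head hE).1 with ht0
  set m := maj a0 (Finset.univ.filter fun w => truth w = t0) with hm
  rw [Fst_val htr hts hcomp hE u, Fst_val htr hts hcomp hE v]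
  by_cases hu : truth u = t0 <;> by_cases hv : truth v = t0
  · rw [if_pos hu, if_pos hv]
    simp only [true_iff, iff_true]
    rw [hu, hv]
  · rw [if_pos hu, if_neg hv]
    constructor
    · intro hh; exact absurd hh.symm (fin2_succ_ne m)
    · intro hh; rw [← hh, hu] at hv; exact absurd rfl hv
  · rw [if_neg hu, if_pos hv]
    constructor
    · intro hh; exact absurd hh (fin2_succ_ne m)
    · intro hh; rw [hh, hv] at hu; exact absurd rfl hu
  · rw [if_neg hu, if_neg hv]
    simp only [true_iff, iff_true]
    rw [fin2_eq_succ_of_ne t0 (truth u) (fun hh => hu hh.symm),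
      fin2_eq_succ_of_ne t0 (truth v) (fun hh => hv hh.symm)]

/-- The jump to `Fst` costs at most three times its displacement. -/
lemma jump_le {E0 : List (Fin n × Fin n)} {F : Fin n → Fin 2}
    (hG1 : ∀ u v, sameComp E0 u v → f u = f v)
    (hG2 : ∀ v, 3 * dispS a0 f (cls E0 v) ≤ 2 * (cls E0 v).card)
    (hF : ∀ u v, sameComp E0 u v → F u = F v) :
    (movesBetween f F : ℝ) ≤ 3 * ((Finset.univ.filter fun v => a0 v ≠ F v).card : ℝ) := by
  have hid := card_filter_sum_classes E0 Finset.univ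
    (fun v _ => Finset.subset_univ _) (fun v => f v ≠ F v)
  have hid2 := card_filter_sum_classes E0 Finset.univ
    (fun v _ => Finset.subset_univ _) (fun v => a0 v ≠ F v)
  have hpt : ∀ v, (((cls E0 v).filter fun w => f w ≠ F w).card : ℝ)
      ≤ 3 * (((cls E0 v).filter fun w => a0 w ≠ F w).card : ℝ) := by
    intro v
    have hfc : ∀ w ∈ cls E0 v, f w = f v := fun w hw => hG1 w v (mem_cls.1 hw)
    have hFc : ∀ w ∈ cls E0 v, F w = F v := fun w hw => hF w v (mem_cls.1 hw)
    by_cases hfv : f v = F v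
    · have hempty : (cls E0 v).filter (fun w => f w ≠ F w) = ∅ := by
        apply Finset.filter_false_of_mem
        intro w hw
        rw [hfc w hw, hFc w hw, hfv]
        exact fun hh => hh rfl
      rw [hempty]
      simp only [Finset.card_empty, Nat.cast_zero]
      positivity
    · have hfull : (cls E0 v).filter (fun w => f w ≠ F w) = cls E0 v := by
        apply Finset.filter_true_of_mem
        intro w hw
        rw [hfc w hw, hFc w hw]
        exact hfv
      have hsub : (cls E0 v).filter (fun w => a0 w = f v)
          ⊆ (cls E0 v).filter (fun w => a0 w ≠ F w) := by
        intro w hw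
        rw [Finset.mem_filter] at hw ⊢
        refine ⟨hw.1, ?_⟩
        rw [hw.2, hFc w hw.1]
        exact hfv
      have hcard := card_eq_cnt_add_cnt a0 (f v) (cls E0 v)
      have hdisp : dispS a0 f (cls E0 v) = cnt a0 (f v + 1) (cls E0 v) :=
        disp_eq_cnt a0 f hfc
      have h2 := hG2 v
      have h3 := Finset.card_le_card hsub
      have h4 : ((cls E0 v).filter fun w => a0 w = f v).card = cnt a0 (f v) (cls E0 v) := rfl
      rw [hfull]
      have : (cls E0 v).card ≤ 3 * ((cls E0 v).filter fun w => a0 w ≠ F w).card := by omega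
      exact_mod_cast this
  have hmb : (movesBetween f F : ℝ) = ((Finset.univ.filter fun v => f v ≠ F v).card : ℝ) := rfl
  rw [hmb, hid, hid2, Finset.mul_sum]
  apply Finset.sum_le_sum
  intro v _
  rw [← mul_div_assoc]
  apply div_le_div_same' (hpt v) (by positivity)

end Completion2

/-! ### Support for the master induction -/

section Master

variable {a0 truth : Fin n → Fin 2} {E' : List (Fin n × Fin n)} {e : Fin n × Fin n}

lemma sc_nil {u v : Fin n} : sameComp ([] : List (Fin n × Fin n)) u v ↔ u = v := by
  constructor
  · intro h
    induction h with
    | rel a b hab => rcases hab with h | h <;> simp at h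
    | refl a => rfl
    | symm a b _ ih => exact ih.symm
    | trans a b c _ _ ih1 ih2 => exact ih1.trans ih2
  · rintro rfl; exact sc_refl _ _

lemma cls_nil (v : Fin n) : cls ([] : List (Fin n × Fin n)) v = {v} := by
  ext w
  simp only [mem_cls, sc_nil, Finset.mem_singleton]

lemma Phi_nil (a0 : Fin n → Fin 2) : Phi a0 a0 [] = 0 := by
  unfold Phi
  apply Finset.sum_eq_zero
  intro v _
  rw [cls_nil v]
  have hm : mS a0 ({v} : Finset (Fin n)) = 0 := by
    unfold mS cnt
    by_cases h : a0 v = 0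
    · have h1 : ¬ a0 v = 1 := by rw [h]; decide
      rw [Finset.filter_singleton, Finset.filter_singleton, if_pos h, if_neg h1]
      simp
    · rw [Finset.filter_singleton, if_neg h]
      simp
  have hd : dispS a0 a0 ({v} : Finset (Fin n)) = 0 := by
    unfold dispS
    rw [Finset.filter_singleton, if_neg (by exact fun hh => hh rfl)]
    simp
  unfold phi
  rw [hm, hd]
  norm_num

lemma Good0_G1 : ∀ u v, sameComp ([] : List (Fin n × Fin n)) u v → a0 u = a0 v := by
  intro u v h
  rw [sc_nil.1 h]

lemma Good0_G2 : ∀ v, 3 * dispS a0 a0 (cls ([] : List (Fin n × Fin n)) v)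
    ≤ 2 * (cls ([] : List (Fin n × Fin n)) v).card := by
  intro v
  rw [cls_nil v]
  unfold dispS
  rw [Finset.filter_singleton, if_neg (by exact fun hh => hh rfl)]
  simp

lemma complete_of_reveals {σ : List (Fin n × Fin n)}
    (hrev : ∀ u v, sameComp σ u v ↔ truth u = truth v)
    (hts : ∀ j, (Finset.univ.filter fun w => truth w = j).card = n / 2) :
    complete σ := by
  intro v
  have hcl : cls σ v = Finset.univ.filter (fun w => truth w = truth v) := by
    ext w
    simp only [mem_cls, Finset.mem_filter, Finset.mem_univ, true_and]
    exact hrev w v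
  rw [hcl]
  exact hts _

lemma complete_concat (htr' : ∀ u v, sameComp E' u v → truth u = truth v)
    (hts : ∀ j, (Finset.univ.filter fun w => truth w = j).card = n / 2)
    (hcomp : complete E') (hte : truth e.1 = truth e.2) :
    complete (E' ++ [e]) := by
  have hsc : sameComp E' e.1 e.2 := (sc_iff_truth htr' hts hcomp e.1 e.2).2 hte
  intro v
  rw [cls_concat_same hsc v]
  exact hcomp v

lemma Fst_concat_eq (hsc : sameComp E' e.1 e.2) (hne : E' ≠ []) :
    Fst a0 (E' ++ [e]) = Fst a0 E' := by
  cases E' with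
  | nil => exact absurd rfl hne
  | cons a l =>
    funext v
    show (if sameComp ((a :: l) ++ [e]) v a.1 then maj a0 (cls ((a :: l) ++ [e]) a.1)
        else maj a0 (cls ((a :: l) ++ [e]) a.1) + 1)
      = (if sameComp (a :: l) v a.1 then maj a0 (cls (a :: l) a.1)
        else maj a0 (cls (a :: l) a.1) + 1)
    rw [cls_concat_same hsc a.1]
    by_cases h : sameComp (a :: l) v a.1
    · rw [if_pos ((sc_concat_same_iff hsc v a.1).2 h), if_pos h]
    · rw [if_neg (fun hh => h ((sc_concat_same_iff hsc v a.1).1 hh)), if_neg h]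

end Master

section Plumbing

variable {a0 f : Fin n → Fin 2}

lemma step_concat (a0 f : Fin n → Fin 2) (E' : List (Fin n × Fin n)) (e : Fin n × Fin n) :
    step a0 f (E' ++ [e]) = if complete (E' ++ [e]) then Fst a0 (E' ++ [e])
      else mergeStep a0 f e (E' ++ [e]) := by
  unfold step
  by_cases h : complete (E' ++ [e])
  · rw [if_pos h, if_pos h]
  · rw [if_neg h, if_neg h, dif_neg (by simp : E' ++ [e] ≠ [])]
    rw [List.getLast_concat]

lemma take_succ_concat {σ : List (Fin n × Fin n)} {t : ℕ} (ht : t < σ.length) :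
    σ.take (t + 1) = σ.take t ++ [σ.get ⟨t, ht⟩] := by
  rw [List.take_succ]
  congr 1
  rw [List.getElem?_eq_getElem ht]
  rfl

lemma take_sub {σ : List (Fin n × Fin n)} {t : ℕ} :
    ∀ x ∈ σ.take t, x ∈ σ.take (t + 1) := by
  intro x hx
  have h1 : σ.take t = (σ.take (t + 1)).take t := by
    rw [List.take_take]
    congr 1
    omega
  rw [h1] at hx
  exact List.take_subset _ _ hx

lemma take_mem {σ : List (Fin n × Fin n)} {t : ℕ} : ∀ x ∈ σ.take t, x ∈ σ :=
  fun x hx => List.take_subset _ _ hx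

end Plumbing

end MV

set_option maxHeartbeats 2000000

/-- **Majority Voting, two servers.** There is a universal constant `C`
such that for all `n` and `α > 1` with `2 ∣ n` there is a deterministic online algorithm
for two servers such that on every instance, with
`Δ = min{|V_init(S₀) ∩ V₀|, |V_init(S₀) ∩ V₁|}`:
(a) its total (moving plus communication) cost is at most `C·α·Δ·(1 + log₂ n)`;
(b) at every point the load of each server is at most `n/2 + 4Δ`; and
(c) its final assignment places each ground-truth component alone on one server. -/
theorem stmt5 :
    ∃ C : ℝ, 0 < C ∧
      ∀ (n : ℕ) (α : ℝ), 1 < α → 2 ∣ n →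
        ∃ A : OnlineAlg n 2, ∀ (I : ReInstance n 2) (Δ : ℕ),
          Δ = min ((Finset.univ.filter fun v => I.init v = 0 ∧ I.truth v = 0).card)
                  ((Finset.univ.filter fun v => I.init v = 0 ∧ I.truth v = 1).card) →
          algCost α A I.init I.sigma ≤ C * (α * Δ * (1 + Real.logb 2 n)) ∧
          (∀ (t : ℕ) (j : Fin 2),
            (Finset.univ.filter fun v => state A I.init I.sigma t v = j).card
              ≤ n / 2 + 4 * Δ) ∧
          isPerfect I.truth (state A I.init I.sigma I.sigma.length) := by
  classical
  refine ⟨200, by norm_num, ?_⟩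
  intro n α hα hn2
  refine ⟨fun b E => MV.alg b E, ?_⟩
  intro I Δ hΔ
  set σ := I.sigma with hσdef
  set a0 := I.init with ha0def
  set truth := I.truth with htruthdef
  have hts : ∀ j, (Finset.univ.filter fun w => truth w = j).card = n / 2 := I.truth_size
  have his : ∀ j, (Finset.univ.filter fun w => a0 w = j).card = n / 2 := I.init_size
  have hrev : ∀ u v, sameComp σ u v ↔ truth u = truth v := I.reveals
  have hew : ∀ e ∈ σ, truth e.1 = truth e.2 := I.edges_within
  have hstate : ∀ t, state (fun b E => MV.alg b E) a0 σ t = MV.alg a0 (σ.take t) := by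
    intro t
    cases t with
    | zero => rw [List.take_zero, MV.alg_nil]; rfl
    | succ t => rfl
  have href : ∀ (E : List (Fin n × Fin n)), (∀ x ∈ E, x ∈ σ) →
      ∀ u v, sameComp E u v → truth u = truth v := by
    intro E hsub u v h
    exact (hrev u v).1 (MV.sc_mono hsub h)
  -- Δ identities
  set V0 := Finset.univ.filter (fun w => truth w = 0) with hV0def
  set V1 := Finset.univ.filter (fun w => truth w = 1) with hV1def
  have hAB : MV.cnt a0 0 V0 + MV.cnt a0 1 V0 = n / 2 := by
    have h := MV.card_eq_cnt_add_cnt a0 0 V0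
    rw [show ((0 : Fin 2) + 1) = 1 from rfl] at h
    rw [hV0def] at h ⊢
    rw [hts 0] at h
    omega
  have hCD : MV.cnt a0 0 V1 + MV.cnt a0 1 V1 = n / 2 := by
    have h := MV.card_eq_cnt_add_cnt a0 0 V1
    rw [show ((0 : Fin 2) + 1) = 1 from rfl] at h
    rw [hV1def] at h ⊢
    rw [hts 1] at h
    omega
  have hAC : MV.cnt a0 0 V0 + MV.cnt a0 0 V1 = n / 2 := by
    have h := MV.cnt_split_init (a0 := a0) truth his 0 0
    rw [show ((0 : Fin 2) + 1) = 1 from rfl] at h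
    exact h
  have hfil0 : (Finset.univ.filter fun v => a0 v = 0 ∧ truth v = 0)
      = (V0.filter fun w => a0 w = 0) := by
    rw [hV0def, Finset.filter_filter]
    ext v
    simp only [Finset.mem_filter, Finset.mem_univ, true_and]
    tauto
  have hfil1 : (Finset.univ.filter fun v => a0 v = 0 ∧ truth v = 1)
      = (V1.filter fun w => a0 w = 0) := by
    rw [hV1def, Finset.filter_filter]
    ext v
    simp only [Finset.mem_filter, Finset.mem_univ, true_and]
    tauto
  have hΔA : Δ = min (MV.cnt a0 0 V0) (MV.cnt a0 0 V1) := by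
    rw [hΔ, hfil0, hfil1]
    rfl
  have hsum2Δ : MV.mS a0 V0 + MV.mS a0 V1 ≤ 2 * Δ := by
    have e0 : MV.mS a0 V0 = min (MV.cnt a0 0 V0) (MV.cnt a0 1 V0) := rfl
    have e1 : MV.mS a0 V1 = min (MV.cnt a0 0 V1) (MV.cnt a0 1 V1) := rfl
    omega
  have hlog0 : (0 : ℝ) ≤ 1 + Real.logb 2 n := by
    rcases Nat.eq_zero_or_pos n with h | h
    · subst h; simp
    · have : (0 : ℝ) ≤ Real.logb 2 n :=
        Real.logb_nonneg (by norm_num) (by exact_mod_cast h)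
      linarith
  have hα0 : (0 : ℝ) < α := lt_trans one_pos hα
  by_cases hσnil : σ = []
  · -- no requests
    have hst' : ∀ t, state (fun b E => MV.alg b E) a0 σ t = a0 := by
      intro t
      rw [hstate t, hσnil, List.take_nil, MV.alg_nil]
    have hperf : ∀ u v, (a0 u = a0 v ↔ truth u = truth v) := by
      have htinj : ∀ u v : Fin n, truth u = truth v → u = v := by
        intro u v h
        have h2 := (hrev u v).2 h
        rw [hσnil] at h2
        exact MV.sc_nil.1 h2
      have hhalf : n / 2 ≤ 1 := by
        by_contra hh
        push_neg at hh
        have h2 : 1 < V0.card := by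
          rw [hV0def, hts 0]; omega
        obtain ⟨u, hu, v, hv, huv⟩ := Finset.one_lt_card.1 h2
        rw [hV0def, Finset.mem_filter] at hu hv
        exact huv (htinj u v (hu.2.trans hv.2.symm))
      have hainj : ∀ u v : Fin n, a0 u = a0 v → u = v := by
        intro u v h
        by_contra huv
        have h2 : 1 < (Finset.univ.filter fun w => a0 w = a0 u).card := by
          apply Finset.one_lt_card.2
          exact ⟨u, by simp, v, by simp [h.symm], fun hh => huv hh⟩
        rw [his (a0 u)] at h2
        omega
      intro u v
      constructor
      · intro h; rw [hainj u v h]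
      · intro h; rw [htinj u v h]
    refine ⟨?_, ?_, ?_⟩
    · have hM : algMoves (fun b E => MV.alg b E) a0 σ = 0 := by
        unfold algMoves
        rw [hσnil]
        simp
      have hC : algComm (fun b E => MV.alg b E) a0 σ = 0 := by
        unfold algComm
        rw [hσnil]
        simp
      unfold algCost
      rw [hM, hC]
      push_cast
      have : (0:ℝ) ≤ 200 * (α * Δ * (1 + Real.logb 2 n)) := by
        apply mul_nonneg (by norm_num)
        apply mul_nonneg (mul_nonneg (le_of_lt hα0) (by positivity)) hlog0
      linarith
    · intro t j
      rw [hst' t, his j]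
      omega
    · rw [hst' _]
      exact hperf
  · -- main case
    have hn1 : 0 < n := (σ.head hσnil).1.pos
    have hL1 : 1 ≤ σ.length := List.length_pos_iff.2 hσnil
    have htake_ne : ∀ t : ℕ, 1 ≤ t → σ.take t ≠ [] := by
      intro t ht hh
      have h2 := congrArg List.length hh
      rw [List.length_take] at h2
      simp only [List.length_nil] at h2
      omega
    have hlog1 : (1 : ℝ) ≤ 1 + Real.logb 2 n := by
      have : (0 : ℝ) ≤ Real.logb 2 n :=
        Real.logb_nonneg (by norm_num) (by exact_mod_cast hn1)
      linarith
    -- completeness thresholds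
    have hcs : ∀ t, MV.complete (σ.take t) → MV.complete (σ.take (t + 1)) := by
      intro t hc
      by_cases ht : t < σ.length
      · rw [MV.take_succ_concat ht]
        exact MV.complete_concat (href _ MV.take_mem) hts hc
          (hew _ (σ.get_mem ⟨t, ht⟩))
      · rw [List.take_of_length_le (by omega)] at hc ⊢
        exact hc
    have hcge : ∀ s t, s ≤ t → MV.complete (σ.take s) → MV.complete (σ.take t) := by
      intro s t hst hc
      induction t with
      | zero => rw [Nat.le_zero.1 hst] at hc; exact hc
      | succ t ih =>
        rcases Nat.lt_or_ge s (t + 1) with h | h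
        · exact hcs t (ih (by omega))
        · rw [show s = t + 1 by omega] at hc; exact hc
    have hcσ : MV.complete (σ.take σ.length) := by
      rw [List.take_length]
      exact MV.complete_of_reveals hrev hts
    have hex : ∃ t, MV.complete (σ.take t) := ⟨σ.length, hcσ⟩
    set t0 := Nat.find hex with ht0def
    have ht0c : MV.complete (σ.take t0) := Nat.find_spec hex
    have ht0min : ∀ t, t < t0 → ¬ MV.complete (σ.take t) := fun t ht => Nat.find_min hex ht
    have ht0L : t0 ≤ σ.length := Nat.find_le hcσ
    have hcomp_iff : ∀ t, MV.complete (σ.take t) ↔ t0 ≤ t := by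
      intro t
      constructor
      · intro h
        by_contra hh
        exact ht0min t (by omega) h
      · intro h
        exact hcge t0 t h ht0c
    set tj := max t0 1 - 1 with htjdef
    have htjL : tj < σ.length := by omega
    have htjt0 : ∀ t, t ≤ tj → ¬ MV.complete (σ.take t) ∨ t = 0 := by
      intro t ht
      by_cases h0 : t = 0
      · exact Or.inr h0
      · left
        apply ht0min
        omega
    -- Good invariant with partial potential sums
    have hGood : ∀ t, t ≤ tj →
        (∀ u v, sameComp (σ.take t) u v → MV.alg a0 (σ.take t) u = MV.alg a0 (σ.take t) v) ∧
        (∀ v, 3 * MV.dispS a0 (MV.alg a0 (σ.take t)) (MV.cls (σ.take t) v)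
            ≤ 2 * (MV.cls (σ.take t) v).card) ∧
        (∑ u ∈ Finset.range t,
            (movesBetween (MV.alg a0 (σ.take u)) (MV.alg a0 (σ.take (u+1))) : ℝ))
          ≤ MV.Phi a0 (MV.alg a0 (σ.take t)) (σ.take t) := by
      intro t
      induction t with
      | zero =>
        intro _
        rw [List.take_zero, MV.alg_nil]
        refine ⟨MV.Good0_G1, MV.Good0_G2, ?_⟩
        rw [Finset.sum_range_zero, MV.Phi_nil]
      | succ t ih =>
        intro hlt
        have hlt' : t ≤ tj := by omega
        obtain ⟨hG1, hG2, hsum⟩ := ih hlt'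
        have ht1t0 : t + 1 < t0 := by omega
        have htL : t < σ.length := by omega
        have htake := MV.take_succ_concat (σ := σ) (t := t) htL
        have hnc : ¬ MV.complete (σ.take (t + 1)) := ht0min _ ht1t0
        have hstep : MV.alg a0 (σ.take (t + 1))
            = MV.mergeStep a0 (MV.alg a0 (σ.take t)) (σ.get ⟨t, htL⟩)
              (σ.take t ++ [σ.get ⟨t, htL⟩]) := by
          rw [htake, MV.alg_concat, MV.step_concat, if_neg (by rw [← htake]; exact hnc)]
        obtain ⟨g1, g2, gphi, _⟩ := MV.step_main a0 (MV.alg a0 (σ.take t)) (σ.take t)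
          (σ.get ⟨t, htL⟩) hG1 hG2
        refine ⟨?_, ?_, ?_⟩
        · intro u v h
          rw [hstep]
          exact g1 u v (by rw [← htake]; exact h)
        · intro v
          rw [hstep, htake]
          exact g2 v
        · rw [Finset.sum_range_succ]
          have h2 : (movesBetween (MV.alg a0 (σ.take t)) (MV.alg a0 (σ.take (t+1))) : ℝ)
              ≤ MV.Phi a0 (MV.alg a0 (σ.take (t+1))) (σ.take (t+1))
                - MV.Phi a0 (MV.alg a0 (σ.take t)) (σ.take t) := by
            rw [hstep, htake]
            exact gphi
          linarith
    -- the jump step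
    have hcomp_tj1 : MV.complete (σ.take (tj + 1)) := (hcomp_iff (tj+1)).2 (by omega)
    have htake_j := MV.take_succ_concat (σ := σ) (t := tj) htjL
    have hfix : MV.alg a0 (σ.take (tj + 1)) = MV.Fst a0 (σ.take (tj + 1)) := by
      rw [htake_j, MV.alg_concat, MV.step_concat, if_pos (by rw [← htake_j]; exact hcomp_tj1)]
    obtain ⟨hG1j, hG2j, hsumj⟩ := hGood tj le_rfl
    have hFstG1 : ∀ u v, sameComp (σ.take (tj+1)) u v
        → MV.Fst a0 (σ.take (tj+1)) u = MV.Fst a0 (σ.take (tj+1)) v :=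
      MV.Fst_G1 (href _ MV.take_mem) hts hcomp_tj1 (htake_ne _ (by omega))
    have hjump : (movesBetween (MV.alg a0 (σ.take tj)) (MV.alg a0 (σ.take (tj+1))) : ℝ)
        ≤ 6 * Δ := by
      rw [hfix]
      have h1 := MV.jump_le (E0 := σ.take tj) hG1j hG2j
        (F := MV.Fst a0 (σ.take (tj+1)))
        (fun u v h => hFstG1 u v (MV.sc_mono MV.take_sub h))
      have h2 := MV.Fst_disp (a0 := a0) (href _ MV.take_mem) hts his hcomp_tj1
        (htake_ne _ (by omega))
      set th := truth (((σ.take (tj+1)).head (htake_ne _ (by omega))).1) with hth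
      have h3 : MV.mS a0 (Finset.univ.filter fun w => truth w = th)
          + MV.mS a0 (Finset.univ.filter fun w => truth w = th + 1) ≤ 2 * Δ := by
        rcases MV.fin2_cases 0 th with h | h
        · rw [h, show ((0:Fin 2)+1) = 1 from rfl, ← hV0def, ← hV1def]
          exact hsum2Δ
        · rw [h, show ((0:Fin 2)+1) = 1 from rfl, show ((1:Fin 2)+1) = 0 from rfl,
            ← hV0def, ← hV1def]
          omega
      have h4 : ((Finset.univ.filter fun v => a0 v ≠ MV.Fst a0 (σ.take (tj+1)) v).card : ℝ)
          ≤ 2 * Δ := by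
        rw [h2]
        exact_mod_cast h3
      calc (movesBetween (MV.alg a0 (σ.take tj)) (MV.Fst a0 (σ.take (tj+1))) : ℝ)
          ≤ 3 * ((Finset.univ.filter fun v => a0 v ≠ MV.Fst a0 (σ.take (tj+1)) v).card : ℝ) := h1
        _ ≤ 3 * (2 * Δ) := by linarith
        _ = 6 * Δ := by ring
    -- the tail
    have htail : ∀ t, tj + 1 ≤ t → MV.alg a0 (σ.take t) = MV.Fst a0 (σ.take t) := by
      intro t ht
      induction t with
      | zero => omega
      | succ t ih =>
        by_cases h : tj + 1 ≤ t
        · by_cases htL2 : t < σ.length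
          · have htake2 := MV.take_succ_concat (σ := σ) (t := t) htL2
            have hcompt1 : MV.complete (σ.take (t+1)) := (hcomp_iff (t+1)).2 (by omega)
            rw [htake2, MV.alg_concat, MV.step_concat,
              if_pos (by rw [← htake2]; exact hcompt1)]
          · have he1 : σ.take (t+1) = σ.take t := by
              rw [List.take_of_length_le (by omega), List.take_of_length_le (by omega)]
            rw [he1]
            exact ih h
        · have ht' : t = tj := by omega
          rw [ht']
          exact hfix
    have hMzero : ∀ t, tj + 1 ≤ t → MV.alg a0 (σ.take (t+1)) = MV.alg a0 (σ.take t) := by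
      intro t ht
      by_cases htL2 : t < σ.length
      · have htake2 := MV.take_succ_concat (σ := σ) (t := t) htL2
        rw [htail (t+1) (by omega), htail t ht, htake2]
        apply MV.Fst_concat_eq
        · have hcompt : MV.complete (σ.take t) := (hcomp_iff t).2 (by omega)
          exact (MV.sc_iff_truth (href _ MV.take_mem) hts hcompt _ _).2
            (hew _ (σ.get_mem ⟨t, htL2⟩))
        · exact htake_ne t (by omega)
      · rw [List.take_of_length_le (by omega), List.take_of_length_le (by omega)]
    -- total moves
    have hMovesR : (algMoves (fun b E => MV.alg b E) a0 σ : ℝ)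
        ≤ 78 * Δ * (1 + Real.logb 2 n) := by
      have hMdef : (algMoves (fun b E => MV.alg b E) a0 σ : ℝ)
          = ∑ t ∈ Finset.range σ.length,
            (movesBetween (MV.alg a0 (σ.take t)) (MV.alg a0 (σ.take (t+1))) : ℝ) := by
        unfold algMoves
        push_cast
        apply Finset.sum_congr rfl
        intro t _
        rw [hstate t, hstate (t+1)]
      rw [hMdef]
      have hsplit : ∑ t ∈ Finset.range σ.length,
            (movesBetween (MV.alg a0 (σ.take t)) (MV.alg a0 (σ.take (t+1))) : ℝ)
          = (∑ t ∈ Finset.range tj,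
              (movesBetween (MV.alg a0 (σ.take t)) (MV.alg a0 (σ.take (t+1))) : ℝ))
            + (movesBetween (MV.alg a0 (σ.take tj)) (MV.alg a0 (σ.take (tj+1))) : ℝ)
            + ∑ t ∈ Finset.Ico (tj+1) σ.length,
              (movesBetween (MV.alg a0 (σ.take t)) (MV.alg a0 (σ.take (t+1))) : ℝ) := by
        rw [Finset.range_eq_Ico,
          ← Finset.sum_Ico_consecutive _ (by omega : 0 ≤ tj+1) (by omega : tj+1 ≤ σ.length),
          ← Finset.range_eq_Ico, Finset.sum_range_succ]
      rw [hsplit]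
      have htail0 : ∑ t ∈ Finset.Ico (tj+1) σ.length,
          (movesBetween (MV.alg a0 (σ.take t)) (MV.alg a0 (σ.take (t+1))) : ℝ) = 0 := by
        apply Finset.sum_eq_zero
        intro t ht
        rw [hMzero t (Finset.mem_Ico.1 ht).1]
        unfold movesBetween
        simp
      have hPhiB : MV.Phi a0 (MV.alg a0 (σ.take tj)) (σ.take tj)
          ≤ 72 * Δ * (1 + Real.logb 2 n) :=
        MV.Phi_le (href _ MV.take_mem) hsum2Δ
      have hΔ0 : (0:ℝ) ≤ (Δ:ℝ) := by positivity
      have h6 : (6:ℝ) * Δ ≤ 6 * Δ * (1 + Real.logb 2 n) := by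
        nlinarith [hΔ0, hlog1]
      linarith [hsumj, hjump, htail0, hPhiB, h6]
    -- communication at most moves
    have hCommLe : algComm (fun b E => MV.alg b E) a0 σ
        ≤ algMoves (fun b E => MV.alg b E) a0 σ := by
      unfold algComm algMoves
      rw [← Fin.sum_univ_eq_sum_range
        (fun t => movesBetween (state (fun b E => MV.alg b E) a0 σ t)
          (state (fun b E => MV.alg b E) a0 σ (t+1))) σ.length]
      apply Finset.sum_le_sum
      intro t _
      split_ifs with hpay
      · -- a paying request forces at least one move
        rw [hstate t.val, hstate (t.val+1)]
        rw [hstate t.val] at hpay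
        set e := σ.get t with hedef
        have htL2 : t.val < σ.length := t.isLt
        have htake2 := MV.take_succ_concat (σ := σ) (t := t.val) htL2
        by_cases hc : MV.complete (σ.take (t.val + 1))
        · have hfst2 : MV.alg a0 (σ.take (t.val+1)) = MV.Fst a0 (σ.take (t.val+1)) := by
            rw [htake2, MV.alg_concat, MV.step_concat, if_pos (by rw [← htake2]; exact hc)]
          have hFeq : MV.Fst a0 (σ.take (t.val+1)) e.1 = MV.Fst a0 (σ.take (t.val+1)) e.2 :=
            (MV.Fst_perfect (href _ MV.take_mem) hts hc (htake_ne _ (by omega)) e.1 e.2).2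
              (hew e (σ.get_mem t))
          rw [hfst2]
          apply Finset.card_pos.2
          by_cases hw : MV.alg a0 (σ.take t.val) e.1 = MV.Fst a0 (σ.take (t.val+1)) e.1
          · refine ⟨e.2, ?_⟩
            simp only [Finset.mem_filter, Finset.mem_univ, true_and]
            intro hh
            apply hpay
            rw [hw, hFeq, ← hh]
          · refine ⟨e.1, ?_⟩
            simp only [Finset.mem_filter, Finset.mem_univ, true_and]
            exact hw
        · have ht1t0 : t.val + 1 < t0 := by
            by_contra hh
            exact hc ((hcomp_iff _).2 (by omega))
          obtain ⟨hG1, hG2, _⟩ := hGood t.val (by omega)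
          obtain ⟨_, _, _, h4⟩ := MV.step_main a0 (MV.alg a0 (σ.take t.val)) (σ.take t.val)
            e hG1 hG2
          have hstep2 : MV.alg a0 (σ.take (t.val + 1))
              = MV.mergeStep a0 (MV.alg a0 (σ.take t.val)) e (σ.take t.val ++ [e]) := by
            rw [htake2, MV.alg_concat, MV.step_concat, if_neg (by rw [← htake2]; exact hc)]
          rw [hstep2]
          exact h4 hpay
      · exact Nat.zero_le _
    refine ⟨?_, ?_, ?_⟩
    · -- cost bound
      unfold algCost
      have hM0 : (0:ℝ) ≤ (algMoves (fun b E => MV.alg b E) a0 σ : ℝ) := by positivity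
      have hCM : (algComm (fun b E => MV.alg b E) a0 σ : ℝ)
          ≤ (algMoves (fun b E => MV.alg b E) a0 σ : ℝ) := by exact_mod_cast hCommLe
      have hstep1 : α * (algMoves (fun b E => MV.alg b E) a0 σ : ℝ)
            + (algComm (fun b E => MV.alg b E) a0 σ : ℝ)
          ≤ 2 * α * (algMoves (fun b E => MV.alg b E) a0 σ : ℝ) := by
        nlinarith [hM0, hCM, hα]
      have hstep2 : 2 * α * (algMoves (fun b E => MV.alg b E) a0 σ : ℝ)
          ≤ 2 * α * (78 * Δ * (1 + Real.logb 2 n)) := by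
        apply mul_le_mul_of_nonneg_left hMovesR (by linarith)
      have hstep3 : 2 * α * (78 * Δ * (1 + Real.logb 2 n))
          ≤ 200 * (α * Δ * (1 + Real.logb 2 n)) := by
        have hΔ0 : (0:ℝ) ≤ (Δ:ℝ) := by positivity
        nlinarith [mul_nonneg (mul_nonneg (le_of_lt hα0) hΔ0) hlog0]
      linarith
    · -- load bound
      intro t j
      rw [hstate t]
      by_cases ht : t ≤ tj
      · obtain ⟨g1, g2, _⟩ := hGood t ht
        have hld := MV.load_le (href _ MV.take_mem) g1 g2 hsum2Δ j
        rw [his j] at hld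
        exact hld
      · have hmin : tj + 1 ≤ min t σ.length := by omega
        have htt : σ.take t = σ.take (min t σ.length) := by
          rcases le_total t σ.length with h | h
          · rw [min_eq_left h]
          · rw [min_eq_right h, List.take_of_length_le h, List.take_length]
        rw [htt, htail _ hmin,
          MV.Fst_load (href _ MV.take_mem) hts ((hcomp_iff _).2 (by omega))
            (htake_ne _ (by omega)) j]
        omega
    · -- perfect at the end
      rw [hstate σ.length, htail σ.length (by omega)]
      intro u v
      exact MV.Fst_perfect (href _ MV.take_mem) hts ((hcomp_iff _).2 (by omega))
        (htake_ne _ (by omega)) u v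
end

section
/- Let T be a finite binary tree in which every leaf z carries a nonnegative integer weight c(z), and let W be the total weight of all leaves. Define the greedy descent: starting at the root, at each internal node descend into the child whose subtree has total leaf weight at least that of the other child (ties broken arbitrarily), until a leaf is reached; let g be the weight of the leaf reached by the greedy descent. Then for every leaf z of T, W − g ≤ 2·(W − c(z)). In particular, the number of vertices moved by the greedy top–down bipartitioning procedure (which at each bipartition marks the minority side as moved) is at most twice the number moved by any procedure that collects all weight at a single leaf, i.e., the greedy offline approximation algorithm has cost at most 2 times the optimal offline cost. -/
/-- A binary tree whose leaves carry nonnegative integer weights. -/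
inductive BTree where
  | leaf : ℕ → BTree
  | node : BTree → BTree → BTree

/-- The total weight of the leaves of a binary tree. -/
def BTree.weight : BTree → ℕ
  | .leaf c => c
  | .node l r => l.weight + r.weight

/-- The multiset of leaf weights of a binary tree. -/
def BTree.leaves : BTree → Multiset ℕ
  | .leaf c => {c}
  | .node l r => l.leaves + r.leaves

/-- `T.IsGreedyLeaf g` holds iff `g` is the weight of a leaf reachable by a greedy
descent: starting at the root, always descend into the child whose subtree has total
leaf weight at least that of the other child (ties broken arbitrarily). -/
inductive BTree.IsGreedyLeaf : BTree → ℕ → Prop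
  | leaf (c : ℕ) : BTree.IsGreedyLeaf (.leaf c) c
  | left {l r : BTree} {g : ℕ} :
      r.weight ≤ l.weight → l.IsGreedyLeaf g → BTree.IsGreedyLeaf (.node l r) g
  | right {l r : BTree} {g : ℕ} :
      l.weight ≤ r.weight → r.IsGreedyLeaf g → BTree.IsGreedyLeaf (.node l r) g

lemma BTree.greedy_le {T : BTree} {g : ℕ} (hg : T.IsGreedyLeaf g) : g ≤ T.weight := by
  induction hg with
  | leaf c => simp [BTree.weight]
  | left h _ ih => simp only [BTree.weight]; omega
  | right h _ ih => simp only [BTree.weight]; omega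

lemma BTree.leaf_le {T : BTree} {c : ℕ} (hc : c ∈ T.leaves) : c ≤ T.weight := by
  induction T with
  | leaf w => simp [BTree.leaves] at hc; simp [BTree.weight, hc]
  | node l r ihl ihr =>
    simp only [BTree.leaves, Multiset.mem_add] at hc
    simp only [BTree.weight]
    rcases hc with h | h
    · exact le_trans (ihl h) (Nat.le_add_right _ _)
    · exact le_trans (ihr h) (Nat.le_add_left _ _)

/-- Let `T` be a finite binary tree with nonnegative integer leaf
weights, total weight `W`, and let `g` be the weight of the leaf reached by a greedy
descent. Then for every leaf weight `c` of `T`, `W − g ≤ 2·(W − c)`: the greedy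
top-down bipartitioning procedure moves at most twice as much weight as any procedure
collecting all weight at a single leaf. -/
theorem stmt7 (T : BTree) (g : ℕ) (hg : T.IsGreedyLeaf g) :
    ∀ c ∈ T.leaves, T.weight - g ≤ 2 * (T.weight - c) := by
  induction hg with
  | leaf w =>
    intro c hc
    simp [BTree.leaves] at hc
    simp [BTree.weight, hc]
  | @left l r g' h hgl ih =>
    intro c hc
    simp only [BTree.leaves, Multiset.mem_add] at hc
    simp only [BTree.weight]
    have hgle : g' ≤ l.weight := BTree.greedy_le hgl
    rcases hc with h1 | h1
    · have := ih c h1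
      have hcle : c ≤ l.weight := BTree.leaf_le h1
      omega
    · have hcle : c ≤ r.weight := BTree.leaf_le h1
      omega
  | @right l r g' h hgr ih =>
    intro c hc
    simp only [BTree.leaves, Multiset.mem_add] at hc
    simp only [BTree.weight]
    have hgle : g' ≤ r.weight := BTree.greedy_le hgr
    rcases hc with h1 | h1
    · have hcle : c ≤ l.weight := BTree.leaf_le h1
      omega
    · have := ih c h1
      have hcle : c ≤ r.weight := BTree.leaf_le h1
      omega
end
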